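/- arXiv:2311.03910 — 10 statements merged into one kernel-verified Lean document; each statement's English description precedes it below -/
import Mathlib

section
/- If x₁, …, x_N ∈ [0,1] are linearly independent over ℚ, then the set of vectors {(sin(ω·x₁), …, sin(ω·x_N)) : ω ∈ ℝ} is dense in the open cube (-1,1)^N. -/
open Real

noncomputable section
namespace SineDense
open Complex Finset

def E (r : ℝ) : ℂ := Complex.exp (r * Complex.I)

lemma E_mul (r s : ℝ) : E r * E s = E (r + s) := by
  simp only [E, ← Complex.exp_add]; congr 1; push_cast; ring

lemma E_conj (r : ℝ) : (starRingEnd ℂ) (E r) = E (-r) := by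
  simp only [E, ← Complex.exp_conj]; congr 1; simp

lemma E_zero : E 0 = 1 := by simp [E]

lemma E_norm (r : ℝ) : ‖E r‖ = 1 := by
  simp [E, Complex.norm_exp]

lemma E_im (r : ℝ) : (E r).im = Real.sin r := Complex.exp_ofReal_mul_I_im r

lemma E_sum {α : Type*} (s : Finset α) (f : α → ℝ) :
    E (∑ i ∈ s, f i) = ∏ i ∈ s, E (f i) := by
  simp only [E]
  rw [← Complex.exp_sum]
  congr 1
  push_cast
  rw [Finset.sum_mul]

lemma E_cont (lam c : ℝ) : Continuous (fun t : ℝ => E (lam * t - c)) := by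
  unfold E
  fun_prop

lemma integral_E_bound (lam c T : ℝ) (h : lam ≠ 0) :
    ‖∫ t in (0:ℝ)..T, E (lam * t - c)‖ ≤ 2 / |lam| := by
  have hc : (↑lam * Complex.I : ℂ) ≠ 0 := by
    simp [Complex.ext_iff, h]
  have key : (∫ t in (0:ℝ)..T, E (lam * t - c))
      = E (-c) * ∫ t in (0:ℝ)..T, Complex.exp ((↑lam * Complex.I) * t) := by
    rw [← intervalIntegral.integral_const_mul]
    apply intervalIntegral.integral_congr
    intro t _
    simp only [E, ← Complex.exp_add]
    congr 1
    push_cast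
    ring
  rw [key, integral_exp_mul_complex hc, norm_mul, E_norm, one_mul, norm_div]
  have h1 : ‖(↑lam * Complex.I : ℂ)‖ = |lam| := by
    rw [norm_mul, Complex.norm_I, mul_one, Complex.norm_real, Real.norm_eq_abs]
  have h2 : ∀ s : ℝ, ‖Complex.exp ((↑lam * Complex.I) * s)‖ = 1 := by
    intro s
    rw [Complex.norm_exp]
    simp
  rw [h1]
  gcongr
  calc ‖Complex.exp ((↑lam * Complex.I) * T) - Complex.exp ((↑lam * Complex.I) * 0)‖
      ≤ ‖Complex.exp ((↑lam * Complex.I) * T)‖ + ‖Complex.exp ((↑lam * Complex.I) * 0)‖ :=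
        norm_sub_le _ _
    _ = 2 := by
        rw [h2]
        have := h2 0
        push_cast at this ⊢
        rw [mul_zero] at this ⊢
        rw [this]
        norm_num

lemma exists_good_p (q : ℝ) (hq : 1 < q) (n : ℕ) :
    ∃ p : ℕ, 0 < p ∧ ((p : ℝ) + 1) ^ n < q ^ (2 * p) := by
  have hq2 : 1 < q ^ 2 := by nlinarith
  have h0 : (0:ℝ) < 1 / q ^ 2 := by positivity
  have hev : ∀ᶠ k : ℕ in Filter.atTop, (k:ℝ) ^ n / (q^2) ^ k < 1 / q^2 :=
    (tendsto_pow_const_div_const_pow_of_one_lt n hq2).eventually_lt_const h0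
  obtain ⟨K, hK⟩ := Filter.eventually_atTop.mp hev
  set k := K + 2 with hk
  have hKk : K ≤ k := by omega
  have h3 := hK k hKk
  refine ⟨k - 1, by omega, ?_⟩
  have hk1 : (k - 1) + 1 = k := by omega
  have hcast : ((k - 1 : ℕ) : ℝ) + 1 = (k : ℝ) := by
    rw [← hk1]
    push_cast
    ring
  rw [hcast]
  have hpos : (0:ℝ) < (q^2)^k := by positivity
  have h4 : (k:ℝ)^n * q^2 < (q^2)^k := by
    rw [div_lt_div_iff₀ hpos (by positivity : (0:ℝ) < q^2)] at h3
    linarith [h3]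
  have h5 : ((q:ℝ)^2)^k = (q^2)^(k-1) * q^2 := by
    conv_lhs => rw [← hk1]
    rw [pow_succ]
  have h6 : (k:ℝ)^n < (q^2)^(k-1) := by
    rw [h5] at h4
    have hq2pos : (0:ℝ) < q^2 := by positivity
    exact lt_of_mul_lt_mul_right h4 hq2pos.le
  rwa [pow_mul]

lemma near_one (e : ℝ) (z : ℂ) (hz : ‖z‖ = 1) (hre : 1 - e ≤ z.re) :
    ‖z - 1‖ ≤ Real.sqrt (2*e) := by
  have hsq : ‖z - 1‖^2 = 2 - 2*z.re := by
    have h1 : Complex.normSq z = 1 := by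
      rw [Complex.normSq_eq_norm_sq, hz, one_pow]
    have h2 : ‖z - 1‖^2 = Complex.normSq (z - 1) := by
      rw [Complex.normSq_eq_norm_sq]
    rw [h2]
    simp only [Complex.normSq_apply, Complex.sub_re, Complex.sub_im,
      Complex.one_re, Complex.one_im] at h1 ⊢
    nlinarith [h1]
  have h3 : ‖z-1‖^2 ≤ 2*e := by rw [hsq]; linarith
  have h4 := Real.sqrt_le_sqrt h3
  rwa [Real.sqrt_sq (norm_nonneg _)] at h4

end SineDense
end

open Finset

theorem sine_dense_in_cube
    (N : ℕ) (x : Fin N → ℝ)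
    (hx : ∀ k, x k ∈ Set.Icc (0 : ℝ) 1)
    (hind : LinearIndependent ℚ x) :
    ∀ y : Fin N → ℝ, (∀ k, y k ∈ Set.Ioo (-1 : ℝ) 1) →
      ∀ ε > 0, ∃ ω : ℝ, ∀ k, |Real.sin (ω * x k) - y k| < ε := by
  classical
  intro y hy ε hε
  set θ : Fin N → ℝ := fun k => Real.arcsin (y k) with hθdef
  have hsinθ : ∀ k, Real.sin (θ k) = y k := fun k =>
    Real.sin_arcsin (le_of_lt (hy k).1) (le_of_lt (hy k).2)
  suffices h : ∃ ω : ℝ, ∀ k, ‖SineDense.E (x k * ω - θ k) - 1‖ < ε by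
    obtain ⟨ω, hω⟩ := h
    refine ⟨ω, fun k => ?_⟩
    have e1 : SineDense.E (ω * x k) - SineDense.E (θ k)
        = SineDense.E (θ k) * (SineDense.E (x k * ω - θ k) - 1) := by
      rw [mul_sub, mul_one, SineDense.E_mul]; congr 1; ring
    have e2 : Real.sin (ω * x k) - y k
        = (SineDense.E (ω * x k) - SineDense.E (θ k)).im := by
      rw [Complex.sub_im, SineDense.E_im, SineDense.E_im, hsinθ]
    rw [e2]
    have e3 := Complex.abs_im_le_norm (SineDense.E (ω * x k) - SineDense.E (θ k))
    calc |(SineDense.E (ω * x k) - SineDense.E (θ k)).im|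
        ≤ ‖SineDense.E (ω * x k) - SineDense.E (θ k)‖ := e3
      _ = ‖SineDense.E (x k * ω - θ k) - 1‖ := by
          rw [e1, norm_mul, SineDense.E_norm, one_mul]
      _ < ε := hω k
  -- core: Bohr's proof of Kronecker's theorem
  set ε' : ℝ := min (1/2) (ε^2/9) with hε'def
  have hε'pos : 0 < ε' := lt_min (by norm_num) (by positivity)
  have hε'le : ε' ≤ 1/2 := min_le_left _ _
  have hNε : (0:ℝ) < (N:ℝ) + 1 - ε' := by
    have : (0:ℝ) ≤ (N:ℝ) := Nat.cast_nonneg N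
    linarith
  set q : ℝ := ((N:ℝ)+1)/((N:ℝ)+1-ε') with hqdef
  have hq : 1 < q := by
    rw [hqdef, lt_div_iff₀ hNε]; linarith
  obtain ⟨p, hp, hpow⟩ := SineDense.exists_good_p q hq (N+1)
  set a : Option (Fin N) → ℝ := fun v => v.elim 0 x with hadef
  set b : Option (Fin N) → ℝ := fun v => v.elim 0 θ with hbdef
  set c : (Fin p → Option (Fin N)) → Option (Fin N) → ℕ :=
    fun w v => (univ.filter (fun j => w j = v)).card with hcdef
  have hclt : ∀ w v, c w v < p + 1 := by
    intro w v
    simp only [hcdef]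
    calc (univ.filter (fun j => w j = v)).card
        ≤ (univ : Finset (Fin p)).card := Finset.card_filter_le _ _
      _ = p := by simp
      _ < p + 1 := Nat.lt_succ_self p
  set Φ : (Fin p → Option (Fin N)) → (Option (Fin N) → Fin (p+1)) :=
    fun w v => ⟨c w v, hclt w v⟩ with hΦdef
  set A : (Fin p → Option (Fin N)) → ℝ := fun w => ∑ j, a (w j) with hAdef
  set B : (Fin p → Option (Fin N)) → ℝ := fun w => ∑ j, b (w j) with hBdef
  have hsumc : ∀ (f : Option (Fin N) → ℝ) (w : Fin p → Option (Fin N)),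
      ∑ j, f (w j) = ∑ v, (c w v : ℝ) * f v := by
    intro f w
    rw [← Finset.sum_fiberwise univ w (fun j => f (w j))]
    refine Finset.sum_congr rfl fun v _ => ?_
    have h1 : ∀ j ∈ univ.filter (fun j => w j = v), f (w j) = f v := fun j hj => by
      rw [(Finset.mem_filter.mp hj).2]
    rw [Finset.sum_congr rfl h1, Finset.sum_const, nsmul_eq_mul, hcdef]
  have hA : ∀ w, A w = ∑ v, (c w v : ℝ) * a v := fun w => hsumc a w
  have hB : ∀ w, B w = ∑ v, (c w v : ℝ) * b v := fun w => hsumc b w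
  have hcsum : ∀ w, ∑ v, c w v = p := by
    intro w
    have h1 := Finset.card_eq_sum_card_fiberwise
      (f := w) (s := univ) (t := univ) (fun j _ => Finset.mem_univ _)
    simp only [Finset.card_univ, Fintype.card_fin] at h1
    rw [hcdef]
    exact h1.symm
  have hΦeq : ∀ {w w' : Fin p → Option (Fin N)}, Φ w = Φ w' → (∀ v, c w v = c w' v) := by
    intro w w' h v
    have h2 := congrFun h v
    simpa [hΦdef, Fin.ext_iff] using congrArg Fin.val h2
  have hABeq : ∀ {w w' : Fin p → Option (Fin N)}, Φ w = Φ w' → A w = A w' ∧ B w = B w' := by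
    intro w w' h
    have hc := hΦeq h
    constructor
    · rw [hA, hA]; exact Finset.sum_congr rfl fun v _ => by rw [hc v]
    · rw [hB, hB]; exact Finset.sum_congr rfl fun v _ => by rw [hc v]
  have hAinj : ∀ {w w' : Fin p → Option (Fin N)}, A w = A w' → Φ w = Φ w' := by
    intro w w' hAe
    have hsum0 : ∑ v, ((c w v : ℝ) - c w' v) * a v = 0 := by
      have h5 : ∑ v, ((c w v : ℝ) - c w' v) * a v = A w - A w' := by
        rw [hA, hA, ← Finset.sum_sub_distrib]
        exact Finset.sum_congr rfl fun v _ => by ring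
      rw [h5, hAe, sub_self]
    have hsome : ∀ k : Fin N, c w (some k) = c w' (some k) := by
      have h2 : ∑ k : Fin N, (((c w (some k) : ℚ) - c w' (some k))) • x k = 0 := by
        have h3 : ∑ v, ((c w v : ℝ) - c w' v) * a v
            = ∑ k : Fin N, ((c w (some k) : ℝ) - c w' (some k)) * x k := by
          rw [Fintype.sum_option]
          simp [hadef]
        rw [h3] at hsum0
        rw [← hsum0]
        refine Finset.sum_congr rfl fun k _ => ?_
        rw [Rat.smul_def]
        push_cast
        ring
      intro k
      have h4 := Fintype.linearIndependent_iff.mp hind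
        (fun k => ((c w (some k) : ℚ) - c w' (some k))) h2 k
      have h6 := sub_eq_zero.mp h4
      exact_mod_cast h6
    have hnone : c w none = c w' none := by
      have h1 := hcsum w
      have h2 := hcsum w'
      rw [Fintype.sum_option] at h1 h2
      have h3 : ∑ k, c w (some k) = ∑ k, c w' (some k) :=
        Finset.sum_congr rfl fun k _ => hsome k
      omega
    funext v
    rw [hΦdef]
    simp only [Fin.mk.injEq]
    cases v with
    | none => exact hnone
    | some k => exact hsome k
  set g : ℝ → ℂ := fun t => ∑ v, SineDense.E (a v * t - b v) with hgdef
  have hgcont : Continuous g := by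
    rw [hgdef]
    exact continuous_finset_sum _ fun v _ => SineDense.E_cont (a v) (b v)
  have hgp : ∀ t : ℝ, g t ^ p = ∑ w : Fin p → Option (Fin N), SineDense.E (A w * t - B w) := by
    intro t
    rw [hgdef]
    rw [Fintype.sum_pow (fun v => SineDense.E (a v * t - b v)) p]
    refine Finset.sum_congr rfl fun w _ => ?_
    rw [show A w * t - B w = ∑ j, (a (w j) * t - b (w j)) by
      rw [Finset.sum_sub_distrib, ← Finset.sum_mul, hAdef, hBdef]]
    exact (SineDense.E_sum univ (fun j => a (w j) * t - b (w j))).symm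
  have hprod : ∀ t : ℝ, (g t ^ p) * (starRingEnd ℂ) (g t ^ p)
      = ∑ z : (Fin p → Option (Fin N)) × (Fin p → Option (Fin N)),
          SineDense.E ((A z.1 - A z.2) * t - (B z.1 - B z.2)) := by
    intro t
    rw [hgp, map_sum]
    simp only [SineDense.E_conj]
    rw [Finset.sum_mul_sum, Fintype.sum_prod_type]
    refine Finset.sum_congr rfl fun w _ => Finset.sum_congr rfl fun w' _ => ?_
    rw [SineDense.E_mul]
    congr 1
    ring
  have hnormsq : ∀ t : ℝ, (g t ^ p) * (starRingEnd ℂ) (g t ^ p)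
      = ((‖g t‖ ^ (2 * p) : ℝ) : ℂ) := by
    intro t
    rw [Complex.mul_conj, Complex.normSq_eq_norm_sq, norm_pow]
    push_cast
    rw [← pow_mul, mul_comm p 2]
  set lam : ((Fin p → Option (Fin N)) × (Fin p → Option (Fin N))) → ℝ :=
    fun z => A z.1 - A z.2 with hlamdef
  set Bd : ((Fin p → Option (Fin N)) × (Fin p → Option (Fin N))) → ℝ :=
    fun z => B z.1 - B z.2 with hBddef
  set Sd : Finset ((Fin p → Option (Fin N)) × (Fin p → Option (Fin N))) :=
    univ.filter (fun z => Φ z.1 = Φ z.2) with hSddef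
  set E0 : ℝ := ∑ z ∈ univ.filter
      (fun z : (Fin p → Option (Fin N)) × (Fin p → Option (Fin N)) => ¬ Φ z.1 = Φ z.2),
      2 / |lam z| with hE0def
  have hE0 : 0 ≤ E0 := Finset.sum_nonneg fun z _ => by positivity
  have hmain : ∀ T : ℝ,
      ‖(∫ t in (0:ℝ)..T, (g t ^ p * (starRingEnd ℂ) (g t ^ p))) - (Sd.card : ℂ) * (T:ℂ)‖
        ≤ E0 := by
    intro T
    have hint : ∀ z ∈ (univ : Finset ((Fin p → Option (Fin N)) × (Fin p → Option (Fin N)))),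
        IntervalIntegrable (fun t : ℝ => SineDense.E (lam z * t - Bd z))
          MeasureTheory.volume 0 T :=
      fun z _ => (SineDense.E_cont (lam z) (Bd z)).intervalIntegrable 0 T
    have h1 : (∫ t in (0:ℝ)..T, (g t ^ p * (starRingEnd ℂ) (g t ^ p)))
        = ∑ z : (Fin p → Option (Fin N)) × (Fin p → Option (Fin N)),
            ∫ t in (0:ℝ)..T, SineDense.E (lam z * t - Bd z) := by
      simp only [hprod]
      exact intervalIntegral.integral_finset_sum hint
    rw [h1]
    rw [← Finset.sum_filter_add_sum_filter_not univ (fun z => Φ z.1 = Φ z.2)]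
    have hdiag : ∀ z ∈ univ.filter
        (fun z : (Fin p → Option (Fin N)) × (Fin p → Option (Fin N)) => Φ z.1 = Φ z.2),
        (∫ t in (0:ℝ)..T, SineDense.E (lam z * t - Bd z)) = (T:ℂ) := by
      intro z hz
      obtain ⟨hA', hB'⟩ := hABeq (Finset.mem_filter.mp hz).2
      have hl0 : lam z = 0 := by rw [hlamdef]; simp [sub_eq_zero.mpr hA']
      have hb0 : Bd z = 0 := by rw [hBddef]; simp [sub_eq_zero.mpr hB']
      rw [show (fun t : ℝ => SineDense.E (lam z * t - Bd z)) = fun _ : ℝ => (1:ℂ) by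
        funext t; rw [hl0, hb0]; simpa using SineDense.E_zero]
      rw [intervalIntegral.integral_const]
      simp
    rw [Finset.sum_congr rfl hdiag, Finset.sum_const, nsmul_eq_mul, ← hSddef,
      add_comm, add_sub_assoc, sub_self, add_zero]
    rw [hE0def]
    refine le_trans (norm_sum_le _ _) (Finset.sum_le_sum fun z hz => ?_)
    have hlam : lam z ≠ 0 := by
      intro h0
      exact (Finset.mem_filter.mp hz).2 (hAinj (sub_eq_zero.mp (by rw [hlamdef] at h0; exact h0)))
    exact SineDense.integral_E_bound _ _ _ hlam
  -- counting: Cauchy-Schwarz over fibers of Φ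
  have hcount : (((N:ℝ)+1)) ^ (2*p) ≤ ((p:ℝ)+1)^(N+1) * Sd.card := by
    set n : (Option (Fin N) → Fin (p+1)) → ℕ :=
      fun φ => (univ.filter fun w => Φ w = φ).card with hndef
    have h1 : ∑ φ, n φ = (N+1)^p := by
      have h2 := Finset.card_eq_sum_card_fiberwise
        (f := Φ) (s := univ) (t := univ) (fun w _ => Finset.mem_univ _)
      simp only [Finset.card_univ] at h2
      rw [Fintype.card_fun, Fintype.card_option, Fintype.card_fin] at h2
      simp only [Fintype.card_fin] at h2
      rw [hndef]
      exact h2.symm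
    have h2 : Sd.card = ∑ φ, (n φ)^2 := by
      rw [hSddef]
      rw [Finset.card_eq_sum_card_fiberwise
        (f := fun z : (Fin p → Option (Fin N)) × (Fin p → Option (Fin N)) => Φ z.1)
        (t := univ) (fun z _ => Finset.mem_univ _)]
      refine Finset.sum_congr rfl fun φ _ => ?_
      have h3 : ((univ.filter (fun z : (Fin p → Option (Fin N)) × (Fin p → Option (Fin N)) =>
            Φ z.1 = Φ z.2)).filter (fun z => Φ z.1 = φ))
          = (univ.filter fun w => Φ w = φ) ×ˢ (univ.filter fun w => Φ w = φ) := by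
        ext z
        simp only [Finset.mem_filter, Finset.mem_univ, true_and, Finset.mem_product]
        constructor
        · rintro ⟨h4, h5⟩
          exact ⟨h5, h5 ▸ h4.symm ▸ rfl⟩
        · rintro ⟨h4, h5⟩
          exact ⟨h4.trans h5.symm, h4⟩
      rw [h3, Finset.card_product, sq, hndef]
    have h4 := sq_sum_le_card_mul_sum_sq
      (s := (univ : Finset (Option (Fin N) → Fin (p+1)))) (f := fun φ => (n φ : ℝ))
    have h5 : ((univ : Finset (Option (Fin N) → Fin (p+1))).card : ℝ) = ((p:ℝ)+1)^(N+1) := by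
      rw [Finset.card_univ, Fintype.card_fun, Fintype.card_option, Fintype.card_fin,
        Fintype.card_fin]
      push_cast
      ring
    calc (((N:ℝ)+1)) ^ (2*p) = ((((N+1)^p : ℕ) : ℝ))^2 := by push_cast; rw [← pow_mul, mul_comm]
      _ = (∑ φ, (n φ : ℝ))^2 := by rw [← h1]; push_cast; ring
      _ ≤ ((univ : Finset (Option (Fin N) → Fin (p+1))).card : ℝ) * ∑ φ, (n φ : ℝ)^2 := h4
      _ = ((p:ℝ)+1)^(N+1) * Sd.card := by
          rw [h5, h2]
          push_cast
          ring
  set r : ℝ := ((N:ℝ)+1-ε')^(2*p) with hrdef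
  have hrpos : 0 < r := pow_pos hNε _
  have hrlt : r < (Sd.card : ℝ) := by
    have hq2p : q^(2*p) = ((N:ℝ)+1)^(2*p) / ((N:ℝ)+1-ε')^(2*p) := by
      rw [hqdef, div_pow]
    have h5 : r * ((p:ℝ)+1)^(N+1) < ((N:ℝ)+1)^(2*p) := by
      have h6 : ((p:ℝ)+1)^(N+1) < ((N:ℝ)+1)^(2*p) / r := by
        rw [hrdef, ← hq2p]; exact hpow
      rw [lt_div_iff₀ hrpos] at h6
      linarith [h6]
    have hppos : (0:ℝ) < ((p:ℝ)+1)^(N+1) := by positivity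
    nlinarith [hcount]
  set T : ℝ := (E0 + 1)/((Sd.card : ℝ) - r) with hTdef
  have hTpos : 0 < T := div_pos (by linarith) (by linarith)
  have hGcont : Continuous (fun t => ‖g t‖^(2*p)) := (hgcont.norm).pow _
  have hexists : ∃ t ∈ Set.Icc (0:ℝ) T, r ≤ ‖g t‖^(2*p) := by
    by_contra hcon
    push_neg at hcon
    have hle : (∫ t in (0:ℝ)..T, ‖g t‖^(2*p)) ≤ (T - 0) • r := by
      rw [← intervalIntegral.integral_const]
      apply intervalIntegral.integral_mono_on hTpos.le
        (hGcont.intervalIntegrable _ _) (intervalIntegrable_const)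
      intro t ht
      exact (hcon t ht).le
    have h6 := hmain T
    have h7 : (∫ t in (0:ℝ)..T, (g t ^ p * (starRingEnd ℂ) (g t ^ p)))
        = (((∫ t in (0:ℝ)..T, ‖g t‖^(2*p)) : ℝ) : ℂ) := by
      simp only [hnormsq]
      exact intervalIntegral.integral_ofReal
    rw [h7] at h6
    set R : ℝ := ∫ t in (0:ℝ)..T, ‖g t‖^(2*p) with hRdef
    have h8 : (Sd.card : ℝ) * T - R ≤ E0 := by
      have h9 : ((R : ℂ) - (Sd.card:ℂ)*T) = (((R - Sd.card * T : ℝ)) : ℂ) := by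
        push_cast; ring
      rw [h9, Complex.norm_real, Real.norm_eq_abs] at h6
      calc (Sd.card : ℝ) * T - R ≤ |R - Sd.card * T| := by
            rw [abs_sub_comm]; exact le_abs_self _
        _ ≤ E0 := h6
    have h10 : ((Sd.card:ℝ) - r) * T = E0 + 1 := by
      rw [hTdef, mul_comm, div_mul_cancel₀ _ (ne_of_gt (by linarith : (0:ℝ) < (Sd.card:ℝ) - r))]
    simp only [smul_eq_mul, sub_zero] at hle
    nlinarith
  obtain ⟨t, ht, hgt⟩ := hexists
  refine ⟨t, fun k => ?_⟩
  have h2p : 2*p ≠ 0 := by omega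
  have hgnorm : (N:ℝ)+1-ε' ≤ ‖g t‖ :=
    le_of_pow_le_pow_left₀ h2p (norm_nonneg _) (by rw [← hrdef]; exact hgt)
  have hgpos : 0 < ‖g t‖ := lt_of_lt_of_le hNε hgnorm
  set u : ℂ := (starRingEnd ℂ) (g t) / (‖g t‖ : ℂ) with hudef
  have hunorm : ‖u‖ = 1 := by
    rw [hudef, norm_div, RCLike.norm_conj, Complex.norm_real, Real.norm_eq_abs,
      abs_of_pos hgpos, div_self hgpos.ne']
  have hmulre : (u * g t).re = ‖g t‖ := by
    have h1 : u * g t = ((‖g t‖^2 / ‖g t‖ : ℝ) : ℂ) := by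
      rw [hudef, div_mul_eq_mul_div, mul_comm ((starRingEnd ℂ) (g t)) (g t),
        Complex.mul_conj, Complex.normSq_eq_norm_sq]
      push_cast
      ring
    rw [h1, Complex.ofReal_re, sq, mul_div_assoc, div_self hgpos.ne', mul_one]
  have hsumre : ∑ v, (u * SineDense.E (a v * t - b v)).re = ‖g t‖ := by
    have hgt' : (∑ v, SineDense.E (a v * t - b v)) = g t := by rw [hgdef]
    rw [← Complex.re_sum, ← Finset.mul_sum, hgt', hmulre]
  have hterm_le : ∀ v, (u * SineDense.E (a v * t - b v)).re ≤ 1 := by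
    intro v
    calc (u * SineDense.E (a v * t - b v)).re
        ≤ ‖u * SineDense.E (a v * t - b v)‖ := by
          exact Complex.re_le_norm _
      _ = 1 := by rw [norm_mul, hunorm, SineDense.E_norm, one_mul]
  have hlower : ∀ v, 1 - ε' ≤ (u * SineDense.E (a v * t - b v)).re := by
    intro v
    have hsplit := Finset.add_sum_erase univ
      (fun v => (u * SineDense.E (a v * t - b v)).re) (Finset.mem_univ v)
    have hrest : ∑ w ∈ univ.erase v, (u * SineDense.E (a w * t - b w)).re ≤ N := by
      calc ∑ w ∈ univ.erase v, (u * SineDense.E (a w * t - b w)).re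
          ≤ ∑ _w ∈ univ.erase v, (1:ℝ) := Finset.sum_le_sum fun w _ => hterm_le w
        _ = ((univ.erase v).card : ℝ) := by rw [Finset.sum_const, nsmul_eq_mul, mul_one]
        _ = N := by
            rw [Finset.card_erase_of_mem (Finset.mem_univ v), Finset.card_univ,
              Fintype.card_option, Fintype.card_fin]
            simp
    have h7 := hsumre
    rw [← hsplit] at h7
    linarith [hgnorm]
  have key : ∀ z : ℂ, ‖z‖ = 1 → 1 - ε' ≤ z.re → ‖z - 1‖ ≤ Real.sqrt (2*ε') :=
    fun z hz hre => SineDense.near_one ε' z hz hre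
  have hsqrt : Real.sqrt (2*ε') < ε/2 := by
    rw [show ε/2 = Real.sqrt ((ε/2)^2) from (Real.sqrt_sq (by positivity)).symm]
    apply Real.sqrt_lt_sqrt (by positivity)
    have h5 : ε' ≤ ε^2/9 := min_le_right _ _
    nlinarith
  have hk1 := key (u * SineDense.E (a (some k) * t - b (some k)))
      (by rw [norm_mul, hunorm, SineDense.E_norm, one_mul]) (hlower (some k))
  have hk0 : ‖u - 1‖ ≤ Real.sqrt (2*ε') := by
    have h0 : u * SineDense.E (a none * t - b none) = u := by
      have h1 : a none * t - b none = 0 := by simp [hadef, hbdef]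
      rw [h1, SineDense.E_zero, mul_one]
    have h2 := key _ (by rw [norm_mul, hunorm, SineDense.E_norm, one_mul]) (hlower none)
    rwa [h0] at h2
  have habk : a (some k) * t - b (some k) = x k * t - θ k := by simp [hadef, hbdef]
  rw [habk] at hk1
  calc ‖SineDense.E (x k * t - θ k) - 1‖
      = ‖u * (SineDense.E (x k * t - θ k) - 1)‖ := by rw [norm_mul, hunorm, one_mul]
    _ = ‖(u * SineDense.E (x k * t - θ k) - 1) + (1 - u)‖ := by congr 1; ring
    _ ≤ ‖u * SineDense.E (x k * t - θ k) - 1‖ + ‖1 - u‖ := norm_add_le _ _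
    _ ≤ Real.sqrt (2*ε') + Real.sqrt (2*ε') := add_le_add hk1 (by rw [norm_sub_rev]; exact hk0)
    _ < ε := by linarith [hsqrt]
end

section
/- If x₁, …, x_N ∈ [0,1] are linearly independent over ℚ, then for any y₁,…,y_N ∈ ℝ and any ε > 0 there exist c, ω ∈ ℝ such that |c·sin(ω·xₖ) − yₖ| < ε for all k = 1,…,N. -/
open Real
open Finset
set_option maxHeartbeats 1000000
noncomputable section
namespace SSW

def e (r : ℝ) : ℂ := Complex.exp (r * Complex.I)

lemma e_add (a b : ℝ) : e (a + b) = e a * e b := by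
  rw [e, e, e, ← Complex.exp_add]; push_cast; ring_nf

lemma conj_e (a : ℝ) : (starRingEnd ℂ) (e a) = e (-a) := by
  simp [e, ← Complex.exp_conj]

lemma norm_e (a : ℝ) : ‖e a‖ = 1 := by
  simpa [e] using Complex.abs_exp_ofReal_mul_I a

lemma e_mul_conj (a : ℝ) : e a * (starRingEnd ℂ) (e a) = 1 := by
  rw [Complex.mul_conj]
  simp [Complex.normSq_eq_norm_sq, Complex.norm_exp_ofReal_mul_I a, e]

lemma e_add_e_neg (a : ℝ) : e a + e (-a) = (2 * Real.cos a : ℝ) := by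
  rw [e, e, Complex.exp_mul_I, show ((-a : ℝ) : ℂ) = -(a:ℂ) by push_cast; ring,
    Complex.exp_mul_I, Complex.cos_neg, Complex.sin_neg]
  push_cast
  ring

lemma e_pow (a : ℝ) (j : ℕ) : e a ^ j = e (j * a) := by
  induction j with
  | zero => simp [e]
  | succ j ih => rw [pow_succ, ih, ← e_add]; push_cast; ring_nf

lemma one_add_pow (z : ℂ) (n : ℕ) :
    (1 + z) ^ n = ∑ j ∈ range (n + 1), (n.choose j : ℂ) * z ^ j := by
  rw [add_comm, add_pow]
  refine Finset.sum_congr rfl fun j hj => by ring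

end SSW
namespace SSW
lemma e_sum {ι : Type*} (s : Finset ι) (f : ι → ℝ) :
    e (∑ i ∈ s, f i) = ∏ i ∈ s, e (f i) := by
  rw [e]; push_cast
  rw [Finset.sum_mul, Complex.exp_sum]
  rfl

lemma integral_e_zero (T : ℝ) : (∫ ω in (0:ℝ)..T, e 0) = (T : ℂ) := by
  simp [e]

lemma integral_e (lam T : ℝ) (h : lam ≠ 0) :
    ‖∫ ω in (0:ℝ)..T, e (lam * ω)‖ ≤ 2 / |lam| := by
  have hc : (lam : ℂ) * Complex.I ≠ 0 := by
    simp [Complex.ofReal_ne_zero, h, Complex.I_ne_zero]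
  have key := integral_exp_mul_complex (a := (0:ℝ)) (b := T) hc
  have h1 : (∫ ω in (0:ℝ)..T, e (lam * ω))
      = (Complex.exp ((lam : ℂ) * Complex.I * (T:ℝ)) - Complex.exp ((lam:ℂ) * Complex.I * ((0:ℝ):ℂ)))
        / ((lam:ℂ) * Complex.I) := by
    rw [← key]
    congr 1 with ω
    rw [e]; push_cast; ring_nf
  rw [h1, norm_div]
  have h2 : ‖(lam : ℂ) * Complex.I‖ = |lam| := by
    simp [Complex.norm_real]
  rw [h2]
  have h3 : ‖Complex.exp ((lam:ℂ) * Complex.I * (T:ℝ)) - Complex.exp ((lam:ℂ) * Complex.I * ((0:ℝ):ℂ))‖ ≤ 2 := by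
    calc ‖Complex.exp ((lam:ℂ) * Complex.I * (T:ℝ)) - Complex.exp ((lam:ℂ) * Complex.I * ((0:ℝ):ℂ))‖
        ≤ ‖Complex.exp ((lam:ℂ) * Complex.I * (T:ℝ))‖ + ‖Complex.exp ((lam:ℂ) * Complex.I * ((0:ℝ):ℂ))‖ :=
          norm_sub_le _ _
    _ ≤ 2 := by
        have e0 : ((lam:ℂ) * Complex.I * ((0:ℝ):ℂ)) = 0 := by push_cast; ring
        have eT : ((lam:ℂ) * Complex.I * (T:ℝ)) = ((lam * T : ℝ) : ℂ) * Complex.I := by push_cast; ring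
        rw [e0, eT, Complex.exp_zero]
        simp only [Complex.norm_exp_ofReal_mul_I, norm_one]
        norm_num
  have h4 : 0 < |lam| := abs_pos.mpr h
  exact div_le_div_of_nonneg_right h3 h4.le
end SSW
namespace SSW
variable {N : ℕ}

def S (x : Fin N → ℝ) (m : Fin N → ℕ) : ℝ := ∑ k, (m k : ℝ) * x k

def w (n : ℕ) (m : Fin N → ℕ) : ℝ := ∏ k, (n.choose (m k) : ℝ)

def cc (n : ℕ) (θ : Fin N → ℝ) (m : Fin N → ℕ) : ℂ :=
  (w n m : ℝ) * e (-(∑ k, (m k : ℝ) * θ k))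

def P (N n : ℕ) : Finset (Fin N → ℕ) := Fintype.piFinset fun _ => Finset.range (n + 1)

lemma expansion (n : ℕ) (x θ : Fin N → ℝ) (ω : ℝ) :
    ∏ k, (1 + e (ω * x k - θ k)) ^ n = ∑ m ∈ P N n, cc n θ m * e (S x m * ω) := by
  have h1 : ∀ k : Fin N, (1 + e (ω * x k - θ k)) ^ n
      = ∑ j ∈ Finset.range (n + 1), (n.choose j : ℂ) * e (j * (ω * x k - θ k)) := by
    intro k
    rw [one_add_pow]
    exact Finset.sum_congr rfl fun j _ => by rw [e_pow]
  calc ∏ k, (1 + e (ω * x k - θ k)) ^ n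
      = ∏ k, ∑ j ∈ Finset.range (n + 1), (n.choose j : ℂ) * e (j * (ω * x k - θ k)) := by
        exact Finset.prod_congr rfl fun k _ => h1 k
    _ = ∑ m ∈ P N n, ∏ k, (n.choose (m k) : ℂ) * e ((m k : ℝ) * (ω * x k - θ k)) :=
        Finset.prod_univ_sum _ _
    _ = ∑ m ∈ P N n, cc n θ m * e (S x m * ω) := by
        refine Finset.sum_congr rfl fun m _ => ?_
        rw [Finset.prod_mul_distrib, ← e_sum]
        have h2 : (∑ k, (m k : ℝ) * (ω * x k - θ k))
            = -(∑ k, (m k : ℝ) * θ k) + S x m * ω := by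
          rw [S, Finset.sum_mul, neg_add_eq_sub, ← Finset.sum_sub_distrib]
          exact Finset.sum_congr rfl fun k _ => by ring
        rw [h2, e_add, cc, w]
        push_cast
        ring
end SSW
namespace SSW
variable {N : ℕ}

def Q (n : ℕ) (x θ : Fin N → ℝ) (ω : ℝ) : ℝ :=
  ∏ k, (2 + 2 * Real.cos (ω * x k - θ k)) ^ n

lemma Q_eq (n : ℕ) (x θ : Fin N → ℝ) (ω : ℝ) :
    ((Q n x θ ω : ℝ) : ℂ) = (∏ k, (1 + e (ω * x k - θ k)) ^ n)
      * (starRingEnd ℂ) (∏ k, (1 + e (ω * x k - θ k)) ^ n) := by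
  rw [map_prod, ← Finset.prod_mul_distrib, Q]
  push_cast
  refine Finset.prod_congr rfl fun k _ => ?_
  rw [map_pow, ← mul_pow]
  congr 1
  have h0 : e (ω * x k - θ k) * e (-(ω * x k - θ k)) = 1 := by
    rw [← e_add]; simp [e]
  have hsum := e_add_e_neg (ω * x k - θ k)
  rw [map_add, map_one, conj_e]
  push_cast at hsum ⊢
  linear_combination -hsum - h0

lemma S_inj (x : Fin N → ℝ) (hind : LinearIndependent ℚ x) {m m' : Fin N → ℕ}
    (h : S x m = S x m') : m = m' := by
  rw [Fintype.linearIndependent_iff] at hind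
  have key : ∀ k, ((m k : ℚ) - (m' k : ℚ)) = 0 := by
    apply hind
    have : ∑ k, (((m k : ℚ) - (m' k : ℚ)) • x k) = S x m - S x m' := by
      rw [S, S, ← Finset.sum_sub_distrib]
      refine Finset.sum_congr rfl fun k _ => ?_
      rw [Rat.smul_def]
      push_cast
      ring
    rw [this, h, sub_self]
  funext k
  have := key k
  have : (m k : ℚ) = (m' k : ℚ) := by linarith
  exact_mod_cast this

lemma D_lower (n : ℕ) :
    ((4:ℝ) ^ n / (n + 1)) ^ N ≤ ∑ m ∈ P N n, (w n m) ^ 2 := by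
  have h1 : ∑ m ∈ P N n, (w n m) ^ 2
      = ∏ _k : Fin N, ∑ j ∈ Finset.range (n + 1), ((n.choose j : ℝ)) ^ 2 := by
    rw [Finset.prod_univ_sum]
    exact Finset.sum_congr rfl fun m _ => by
      rw [w, ← Finset.prod_pow]
  have h2 : (4:ℝ) ^ n / (n + 1) ≤ ∑ j ∈ Finset.range (n + 1), ((n.choose j : ℝ)) ^ 2 := by
    have hcs := sq_sum_le_card_mul_sum_sq (s := Finset.range (n + 1))
      (f := fun j => (n.choose j : ℝ))
    have hsum : ∑ j ∈ Finset.range (n + 1), (n.choose j : ℝ) = 2 ^ n := by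
      rw [← Nat.cast_sum]
      rw [Nat.sum_range_choose]
      push_cast; ring
    rw [hsum, Finset.card_range] at hcs
    have h4 : ((2:ℝ) ^ n) ^ 2 = 4 ^ n := by
      rw [← pow_mul, pow_mul']
      norm_num
    rw [h4] at hcs
    rw [div_le_iff₀ (by positivity)]
    calc (4:ℝ)^n ≤ (n+1) * ∑ j ∈ Finset.range (n+1), ((n.choose j : ℝ))^2 := by
          exact_mod_cast hcs
      _ = (∑ j ∈ Finset.range (n+1), ((n.choose j : ℝ))^2) * (n+1) := by ring
  rw [h1, Finset.prod_const, Finset.card_univ, Fintype.card_fin]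
  exact pow_le_pow_left₀ (by positivity) h2 N
end SSW
namespace SSW
variable {N : ℕ}

lemma continuous_e (lam : ℝ) : Continuous fun ω : ℝ => e (lam * ω) :=
  Complex.continuous_exp.comp
    ((Complex.continuous_ofReal.comp (continuous_const.mul continuous_id)).mul continuous_const)

lemma norm_cc (n : ℕ) (θ : Fin N → ℝ) (m : Fin N → ℕ) : ‖cc n θ m‖ = w n m := by
  rw [cc, norm_mul, norm_e, mul_one, Complex.norm_real, Real.norm_eq_abs,
    abs_of_nonneg (Finset.prod_nonneg fun k _ => by positivity)]

lemma integral_double_sum {ι : Type*} [DecidableEq ι] (s : Finset ι) (c : ι → ι → ℂ)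
    (lam : ι → ι → ℝ) (T : ℝ) :
    (∫ ω in (0:ℝ)..T, ∑ m ∈ s, ∑ m' ∈ s, c m m' * e (lam m m' * ω))
      = ∑ m ∈ s, ∑ m' ∈ s, c m m' * ∫ ω in (0:ℝ)..T, e (lam m m' * ω) := by
  have hint : ∀ (z : ℂ) (l : ℝ),
      IntervalIntegrable (fun ω : ℝ => z * e (l * ω)) MeasureTheory.volume 0 T :=
    fun z l => (Continuous.mul continuous_const (continuous_e l)).intervalIntegrable 0 T
  have h1 : ∀ m ∈ s, IntervalIntegrable
      (fun ω : ℝ => ∑ m' ∈ s, c m m' * e (lam m m' * ω)) MeasureTheory.volume 0 T := by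
    intro m _
    exact (continuous_finset_sum s fun m' _ =>
      continuous_const.mul (continuous_e (lam m m'))).intervalIntegrable 0 T
  rw [intervalIntegral.integral_finset_sum h1]
  refine Finset.sum_congr rfl fun m _ => ?_
  rw [intervalIntegral.integral_finset_sum (fun m' _ => hint (c m m') (lam m m'))]
  exact Finset.sum_congr rfl fun m' _ => intervalIntegral.integral_const_mul _ _

lemma integral_estimate (x : Fin N → ℝ) (hind : LinearIndependent ℚ x)
    (θ : Fin N → ℝ) (n : ℕ) (T : ℝ) :
    |(∫ ω in (0:ℝ)..T, Q n x θ ω) - T * (∑ m ∈ P N n, (w n m) ^ 2)| ≤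
      ∑ m ∈ P N n, ∑ m' ∈ P N n,
        if m = m' then 0 else (w n m) * (w n m') * (2 / |S x m - S x m'|) := by
  -- step 1: pointwise expansion of (Q : ℂ)
  have step1 : ∀ ω : ℝ, ((Q n x θ ω : ℝ) : ℂ)
      = ∑ m ∈ P N n, ∑ m' ∈ P N n,
          cc n θ m * (starRingEnd ℂ) (cc n θ m') * e ((S x m - S x m') * ω) := by
    intro ω
    rw [Q_eq, expansion, map_sum, Finset.sum_mul_sum]
    refine Finset.sum_congr rfl fun m _ => Finset.sum_congr rfl fun m' _ => ?_
    rw [map_mul, conj_e, show cc n θ m * e (S x m * ω) *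
        ((starRingEnd ℂ) (cc n θ m') * e (-(S x m' * ω)))
      = cc n θ m * (starRingEnd ℂ) (cc n θ m') * (e (S x m * ω) * e (-(S x m' * ω))) by ring,
      ← e_add]
    congr 2
    ring
  -- step 3: integral of (Q : ℂ)
  have step3 : (∫ ω in (0:ℝ)..T, ((Q n x θ ω : ℝ) : ℂ))
      = ∑ m ∈ P N n, ∑ m' ∈ P N n,
          cc n θ m * (starRingEnd ℂ) (cc n θ m')
            * ∫ ω in (0:ℝ)..T, e ((S x m - S x m') * ω) := by
    rw [intervalIntegral.integral_congr (g := fun ω => ∑ m ∈ P N n, ∑ m' ∈ P N n,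
        cc n θ m * (starRingEnd ℂ) (cc n θ m') * e ((S x m - S x m') * ω))
        (fun ω _ => step1 ω)]
    exact integral_double_sum (P N n) (fun m m' => cc n θ m * (starRingEnd ℂ) (cc n θ m'))
      (fun m m' => S x m - S x m') T
  -- step 4: split into diagonal and off-diagonal
  have step4 : (∫ ω in (0:ℝ)..T, ((Q n x θ ω : ℝ) : ℂ))
      = ((T * ∑ m ∈ P N n, (w n m) ^ 2 : ℝ) : ℂ)
        + ∑ m ∈ P N n, ∑ m' ∈ P N n,
            (if m = m' then 0 else cc n θ m * (starRingEnd ℂ) (cc n θ m')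
              * ∫ ω in (0:ℝ)..T, e ((S x m - S x m') * ω)) := by
    rw [step3]
    have hsplit : ∀ m ∈ P N n, ∀ m' ∈ P N n,
        cc n θ m * (starRingEnd ℂ) (cc n θ m')
            * ∫ ω in (0:ℝ)..T, e ((S x m - S x m') * ω)
          = (if m = m' then ((T * (w n m) ^ 2 : ℝ) : ℂ) else 0)
            + (if m = m' then 0 else cc n θ m * (starRingEnd ℂ) (cc n θ m')
              * ∫ ω in (0:ℝ)..T, e ((S x m - S x m') * ω)) := by
      intro m _ m' _
      by_cases h : m = m'
      · subst h
        rw [if_pos rfl, if_pos rfl, add_zero]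
        have h0 : ∀ ω : ℝ, e ((S x m - S x m) * ω) = e 0 := by
          intro ω; rw [sub_self, zero_mul]
        rw [intervalIntegral.integral_congr (fun ω _ => h0 ω), integral_e_zero,
          Complex.mul_conj]
        have : Complex.normSq (cc n θ m) = (w n m) ^ 2 := by
          rw [Complex.normSq_eq_norm_sq, norm_cc]
        rw [this]
        push_cast
        ring
      · rw [if_neg h, if_neg h, zero_add]
    calc (∑ m ∈ P N n, ∑ m' ∈ P N n, cc n θ m * (starRingEnd ℂ) (cc n θ m')
            * ∫ ω in (0:ℝ)..T, e ((S x m - S x m') * ω))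
        = ∑ m ∈ P N n, ∑ m' ∈ P N n,
            ((if m = m' then ((T * (w n m) ^ 2 : ℝ) : ℂ) else 0)
            + (if m = m' then 0 else cc n θ m * (starRingEnd ℂ) (cc n θ m')
              * ∫ ω in (0:ℝ)..T, e ((S x m - S x m') * ω))) := by
          exact Finset.sum_congr rfl fun m hm => Finset.sum_congr rfl fun m' hm' =>
            hsplit m hm m' hm'
      _ = (∑ m ∈ P N n, ∑ m' ∈ P N n, (if m = m' then ((T * (w n m) ^ 2 : ℝ) : ℂ) else 0))
          + ∑ m ∈ P N n, ∑ m' ∈ P N n,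
            (if m = m' then 0 else cc n θ m * (starRingEnd ℂ) (cc n θ m')
              * ∫ ω in (0:ℝ)..T, e ((S x m - S x m') * ω)) := by
          rw [← Finset.sum_add_distrib]
          exact Finset.sum_congr rfl fun m _ => Finset.sum_add_distrib
      _ = ((T * ∑ m ∈ P N n, (w n m) ^ 2 : ℝ) : ℂ)
          + ∑ m ∈ P N n, ∑ m' ∈ P N n,
            (if m = m' then 0 else cc n θ m * (starRingEnd ℂ) (cc n θ m')
              * ∫ ω in (0:ℝ)..T, e ((S x m - S x m') * ω)) := by
          congr 1
          have : ∀ m ∈ P N n, (∑ m' ∈ P N n, (if m = m' then ((T * (w n m) ^ 2 : ℝ) : ℂ) else 0))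
              = ((T * (w n m) ^ 2 : ℝ) : ℂ) := by
            intro m hm
            rw [Finset.sum_ite_eq (P N n) m (fun _ => ((T * (w n m) ^ 2 : ℝ) : ℂ)), if_pos hm]
          rw [Finset.sum_congr rfl this]
          push_cast
          rw [Finset.mul_sum]
  -- conclude
  have hreal : (∫ ω in (0:ℝ)..T, ((Q n x θ ω : ℝ) : ℂ))
      = ((∫ ω in (0:ℝ)..T, Q n x θ ω : ℝ) : ℂ) := intervalIntegral.integral_ofReal
  have hdiff : (((∫ ω in (0:ℝ)..T, Q n x θ ω) - T * (∑ m ∈ P N n, (w n m) ^ 2) : ℝ) : ℂ)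
      = ∑ m ∈ P N n, ∑ m' ∈ P N n,
            (if m = m' then 0 else cc n θ m * (starRingEnd ℂ) (cc n θ m')
              * ∫ ω in (0:ℝ)..T, e ((S x m - S x m') * ω)) := by
    push_cast
    rw [← hreal, step4]
    push_cast
    ring
  calc |(∫ ω in (0:ℝ)..T, Q n x θ ω) - T * (∑ m ∈ P N n, (w n m) ^ 2)|
      = ‖(((∫ ω in (0:ℝ)..T, Q n x θ ω) - T * (∑ m ∈ P N n, (w n m) ^ 2) : ℝ) : ℂ)‖ := by
        rw [Complex.norm_real, Real.norm_eq_abs]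
    _ = ‖∑ m ∈ P N n, ∑ m' ∈ P N n,
            (if m = m' then 0 else cc n θ m * (starRingEnd ℂ) (cc n θ m')
              * ∫ ω in (0:ℝ)..T, e ((S x m - S x m') * ω))‖ := by rw [hdiff]
    _ ≤ ∑ m ∈ P N n, ∑ m' ∈ P N n,
        (if m = m' then 0 else (w n m) * (w n m') * (2 / |S x m - S x m'|)) := by
        refine (norm_sum_le _ _).trans (Finset.sum_le_sum fun m _ => ?_)
        refine (norm_sum_le _ _).trans (Finset.sum_le_sum fun m' _ => ?_)
        by_cases h : m = m'
        · simp [h]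
        · rw [if_neg h, if_neg h, norm_mul, norm_mul, RCLike.norm_conj, norm_cc, norm_cc]
          have hw0 : 0 ≤ w n m := by rw [← norm_cc n θ m]; positivity
          have hw0' : 0 ≤ w n m' := by rw [← norm_cc n θ m']; positivity
          have hlam : S x m - S x m' ≠ 0 := by
            intro hc
            exact h (S_inj x hind (by linarith [sub_eq_zero.mp hc] : S x m = S x m'))
          exact mul_le_mul_of_nonneg_left (integral_e _ T hlam) (by positivity)
end SSW
namespace SSW

lemma kronecker {N : ℕ} (x : Fin N → ℝ) (hind : LinearIndependent ℚ x)
    (θ : Fin N → ℝ) {δ : ℝ} (hδ : 0 < δ) (hδ1 : δ < 1) :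
    ∃ ω : ℝ, ∀ k, 1 - δ < Real.cos (ω * x k - θ k) := by
  by_contra hcon
  push_neg at hcon
  set r : ℝ := 1 - δ / 2 with hrdef
  have hr0 : (0:ℝ) < r := by rw [hrdef]; linarith
  have hr1 : r < 1 := by rw [hrdef]; linarith
  -- choose n with ((n:ℝ)+1)^N * r^n < 1/2
  have hb : Filter.Tendsto (fun n : ℕ => ((n:ℝ)) ^ N * r ^ n) Filter.atTop (nhds 0) :=
    (summable_pow_mul_geometric_of_norm_lt_one (R := ℝ) N
      (by rw [Real.norm_eq_abs, abs_of_pos hr0]; exact hr1)).tendsto_atTop_zero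
  have hb2 : Filter.Tendsto (fun n : ℕ => (((n + 1 : ℕ)):ℝ) ^ N * r ^ (n + 1))
      Filter.atTop (nhds 0) := hb.comp (Filter.tendsto_add_atTop_nat 1)
  obtain ⟨n, hn'⟩ := (hb2.eventually (gt_mem_nhds (show (0:ℝ) < r / 2 by positivity))).exists
  have hn : ((n:ℝ) + 1) ^ N * r ^ n < 1 / 2 := by
    have h' : (((n + 1 : ℕ)):ℝ) ^ N * r ^ (n + 1) < r / 2 := hn'
    push_cast at h'
    rw [pow_succ] at h'
    have h'' : (((n:ℝ) + 1) ^ N * r ^ n) * r < (1 / 2) * r := by linarith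
    exact lt_of_mul_lt_mul_right h'' hr0.le
  -- quantities
  set D : ℝ := ∑ m ∈ P N n, (w n m) ^ 2 with hDdef
  have hD : ((4:ℝ) ^ n / ((n:ℝ) + 1)) ^ N ≤ D := D_lower n
  have hDpos : (0:ℝ) < D := lt_of_lt_of_le (by positivity) hD
  set B : ℝ := 4 ^ (n * N) * r ^ n with hBdef
  have hBpos : (0:ℝ) < B := by positivity
  have hBD : B < D / 2 := by
    have h1 : ((4:ℝ) ^ n / ((n:ℝ) + 1)) ^ N = 4 ^ (n * N) / ((n:ℝ) + 1) ^ N := by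
      rw [div_pow, ← pow_mul]
    have h2 : r ^ n < 1 / (2 * ((n:ℝ) + 1) ^ N) := by
      rw [lt_div_iff₀ (by positivity)]
      nlinarith [pow_pos hr0 n, pow_pos (show (0:ℝ) < (n:ℝ) + 1 by positivity) N]
    have h3 : B < 4 ^ (n * N) * (1 / (2 * ((n:ℝ) + 1) ^ N)) := by
      rw [hBdef]
      exact mul_lt_mul_of_pos_left h2 (by positivity)
    have h4 : (4:ℝ) ^ (n * N) * (1 / (2 * ((n:ℝ) + 1) ^ N))
        = (4 ^ (n * N) / ((n:ℝ) + 1) ^ N) / 2 := by ring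
    rw [h4, ← h1] at h3
    linarith
  -- pointwise bound
  have hQB : ∀ ω : ℝ, Q n x θ ω ≤ B := by
    intro ω
    obtain ⟨k, hk⟩ := hcon ω
    have hf0 : ∀ j : Fin N, (0:ℝ) ≤ 2 + 2 * Real.cos (ω * x j - θ j) := by
      intro j; nlinarith [Real.neg_one_le_cos (ω * x j - θ j)]
    have hf4 : ∀ j : Fin N, 2 + 2 * Real.cos (ω * x j - θ j) ≤ 4 := by
      intro j; nlinarith [Real.cos_le_one (ω * x j - θ j)]
    have hkb : 2 + 2 * Real.cos (ω * x k - θ k) ≤ 4 * r := by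
      rw [hrdef]; nlinarith
    have hQsplit : Q n x θ ω = (2 + 2 * Real.cos (ω * x k - θ k)) ^ n
        * ∏ j ∈ Finset.univ.erase k, (2 + 2 * Real.cos (ω * x j - θ j)) ^ n := by
      rw [Q, ← Finset.mul_prod_erase Finset.univ _ (Finset.mem_univ k)]
    have h1 : (2 + 2 * Real.cos (ω * x k - θ k)) ^ n ≤ (4 * r) ^ n :=
      pow_le_pow_left₀ (hf0 k) hkb n
    have h2 : ∏ j ∈ Finset.univ.erase k, (2 + 2 * Real.cos (ω * x j - θ j)) ^ n
        ≤ ((4:ℝ) ^ n) ^ (N - 1) := by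
      calc ∏ j ∈ Finset.univ.erase k, (2 + 2 * Real.cos (ω * x j - θ j)) ^ n
          ≤ ∏ _j ∈ Finset.univ.erase k, (4:ℝ) ^ n := by
            refine Finset.prod_le_prod (fun j _ => pow_nonneg (hf0 j) n)
              (fun j _ => pow_le_pow_left₀ (hf0 j) (hf4 j) n)
        _ = ((4:ℝ) ^ n) ^ (N - 1) := by
            rw [Finset.prod_const, Finset.card_erase_of_mem (Finset.mem_univ k),
              Finset.card_univ, Fintype.card_fin]
    have hNpos : 1 ≤ N := k.pos
    have hexp : (4:ℝ) ^ n * ((4:ℝ) ^ n) ^ (N - 1) = 4 ^ (n * N) := by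
      rw [← pow_mul, ← pow_add]
      congr 1
      have : N - 1 + 1 = N := Nat.succ_pred_eq_of_pos hNpos
      calc n + n * (N - 1) = n * (N - 1 + 1) := by ring
        _ = n * N := by rw [this]
    calc Q n x θ ω ≤ (4 * r) ^ n * ((4:ℝ) ^ n) ^ (N - 1) := by
          rw [hQsplit]
          exact mul_le_mul h1 h2 (Finset.prod_nonneg fun j _ => pow_nonneg (hf0 j) n)
            (pow_nonneg (by linarith : (0:ℝ) ≤ 4 * r) n)
      _ = B := by rw [hBdef, mul_pow, ← hexp]; ring
  -- off-diagonal constant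
  set K : ℝ := ∑ m ∈ P N n, ∑ m' ∈ P N n,
      if m = m' then 0 else (w n m) * (w n m') * (2 / |S x m - S x m'|) with hKdef
  have hw0 : ∀ m : Fin N → ℕ, 0 ≤ w n m :=
    fun m => Finset.prod_nonneg fun k _ => by positivity
  have hK0 : 0 ≤ K := by
    refine Finset.sum_nonneg fun m _ => Finset.sum_nonneg fun m' _ => ?_
    by_cases h : m = m'
    · simp [h]
    · rw [if_neg h]
      have := hw0 m; have := hw0 m'
      positivity
  have hDB : 0 < D - B := by linarith
  set T : ℝ := K / (D - B) + 1 with hTdef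
  have hT0 : 0 < T := by positivity
  have hKT : K < (D - B) * T := by
    rw [hTdef, mul_add, mul_one, mul_div_cancel₀ _ (ne_of_gt hDB)]
    linarith
  -- the estimate
  have key := integral_estimate x hind θ n T
  rw [← hDdef, ← hKdef] at key
  have hkey := (abs_le.mp key).1
  -- upper bound on the integral
  have hIle : (∫ ω in (0:ℝ)..T, Q n x θ ω) ≤ T * B := by
    have hcont : Continuous (Q n x θ) := by
      apply continuous_finset_prod
      intro k _
      exact (Continuous.pow (by fun_prop) n)
    calc (∫ ω in (0:ℝ)..T, Q n x θ ω) ≤ ∫ _ω in (0:ℝ)..T, B := by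
          refine intervalIntegral.integral_mono_on hT0.le
            (hcont.intervalIntegrable 0 T) intervalIntegrable_const ?_
          exact fun ω _ => hQB ω
      _ = T * B := by rw [intervalIntegral.integral_const, smul_eq_mul, sub_zero]
  linarith [hKT, hkey, hIle]
end SSW
end

theorem single_sine_wave_finite_approx
    (N : ℕ) (x : Fin N → ℝ)
    (hx : ∀ k, x k ∈ Set.Icc (0 : ℝ) 1)
    (hind : LinearIndependent ℚ x)
    (y : Fin N → ℝ) (ε : ℝ) (hε : 0 < ε) :
    ∃ c ω : ℝ, ∀ k, |c * Real.sin (ω * x k) - y k| < ε := by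
  set c : ℝ := 1 + ∑ k, |y k| with hc
  have hsum0 : (0:ℝ) ≤ ∑ k, |y k| := Finset.sum_nonneg fun k _ => abs_nonneg _
  have hc1 : (1:ℝ) ≤ c := by rw [hc]; linarith
  have hc0 : (0:ℝ) < c := by linarith
  have hyc : ∀ k, |y k / c| ≤ 1 := by
    intro k
    rw [abs_div, abs_of_pos hc0, div_le_one hc0]
    have : |y k| ≤ ∑ j, |y j| :=
      Finset.single_le_sum (fun j _ => abs_nonneg (y j)) (Finset.mem_univ k)
    linarith
  set θ : Fin N → ℝ := fun k => Real.arcsin (y k / c) with hθ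
  have hsin : ∀ k, Real.sin (θ k) = y k / c := by
    intro k
    exact Real.sin_arcsin (neg_le_of_abs_le (hyc k)) (le_of_abs_le (hyc k))
  set δ : ℝ := min (1 / 2) (ε ^ 2 / (2 * c ^ 2)) with hδdef
  have hδ0 : 0 < δ := lt_min (by norm_num) (by positivity)
  have hδ1 : δ < 1 := lt_of_le_of_lt (min_le_left _ _) (by norm_num)
  obtain ⟨ω, hω⟩ := SSW.kronecker x hind θ hδ0 hδ1
  refine ⟨c, ω, fun k => ?_⟩
  have h1 : 1 - δ < Real.cos (ω * x k - θ k) := hω k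
  have h2 : (Real.sin (ω * x k) - Real.sin (θ k)) ^ 2 ≤ 2 - 2 * Real.cos (ω * x k - θ k) := by
    have hcs := Real.cos_sub (ω * x k) (θ k)
    nlinarith [Real.sin_sq_add_cos_sq (ω * x k), Real.sin_sq_add_cos_sq (θ k),
      sq_nonneg (Real.cos (ω * x k) - Real.cos (θ k))]
  have h3 : (Real.sin (ω * x k) - Real.sin (θ k)) ^ 2 < 2 * δ := by linarith
  have hyk : c * Real.sin (θ k) = y k := by
    rw [hsin k, mul_div_cancel₀ _ (ne_of_gt hc0)]
  have h4 : (c * Real.sin (ω * x k) - y k) ^ 2 < ε ^ 2 := by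
    have hδε : 2 * δ ≤ ε ^ 2 / c ^ 2 := by
      have h := min_le_right (1 / 2 : ℝ) (ε ^ 2 / (2 * c ^ 2))
      rw [← hδdef] at h
      have h2' : 2 * (ε ^ 2 / (2 * c ^ 2)) = ε ^ 2 / c ^ 2 := by
        field_simp
      linarith
    have hrw : c * Real.sin (ω * x k) - y k
        = c * (Real.sin (ω * x k) - Real.sin (θ k)) := by
      rw [mul_sub, hyk]
    rw [hrw, mul_pow]
    have : c ^ 2 * (Real.sin (ω * x k) - Real.sin (θ k)) ^ 2 < c ^ 2 * (2 * δ) :=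
      mul_lt_mul_of_pos_left h3 (by positivity)
    have hfin : c ^ 2 * (2 * δ) ≤ ε ^ 2 := by
      have := (le_div_iff₀ (by positivity : (0:ℝ) < c ^ 2)).mp hδε
      linarith
    linarith
  nlinarith [sq_abs (c * Real.sin (ω * x k) - y k),
    abs_nonneg (c * Real.sin (ω * x k) - y k), hε]
end

section
/- For every g of the form g(x) = Σₙ₌₁^N cₙ·sin(ωₙ·x + hₙ) (with real parameters cₙ, ωₙ, hₙ), every x₀ ∈ ℝ, and every choice of reals α₀,…,α_{2N} and β₀,…,β_{2N}, the (2N+1)×(2N+1) matrix A with entries A_{k,m} = g(x₀ + αₖ + βₘ) is singular, i.e. det A = 0. -/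
open Real

theorem det_vanishes_for_sine_sums
    (N : ℕ) (c ω h : Fin N → ℝ) (x₀ : ℝ)
    (α β : Fin (2 * N + 1) → ℝ)
    (g : ℝ → ℝ)
    (hg : ∀ x, g x = ∑ n, c n * Real.sin (ω n * x + h n)) :
    Matrix.det (fun k m : Fin (2 * N + 1) => g (x₀ + α k + β m)) = 0 := by
  set B : Matrix (Fin (2 * N + 1)) (Fin N ⊕ Fin N) ℝ := fun k s =>
    Sum.elim (fun n => c n * Real.sin (ω n * (x₀ + α k) + h n))
             (fun n => c n * Real.cos (ω n * (x₀ + α k) + h n)) s with hB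
  set C : Matrix (Fin N ⊕ Fin N) (Fin (2 * N + 1)) ℝ := fun s m =>
    Sum.elim (fun n => Real.cos (ω n * β m)) (fun n => Real.sin (ω n * β m)) s with hC
  have hfac : (fun k m : Fin (2 * N + 1) => g (x₀ + α k + β m)) = B * C := by
    ext k m
    rw [hg]
    rw [Matrix.mul_apply]
    simp only [Matrix.mul_apply, hB, hC, Fintype.sum_sum_type, Sum.elim_inl, Sum.elim_inr]
    rw [← Finset.sum_add_distrib]
    apply Finset.sum_congr rfl
    intro n _
    have : ω n * (x₀ + α k + β m) + h n = (ω n * (x₀ + α k) + h n) + ω n * β m := by ring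
    rw [this, Real.sin_add]
    ring
  by_contra hdet
  have hu : IsUnit (Matrix.det (fun k m : Fin (2 * N + 1) => g (x₀ + α k + β m))) :=
    isUnit_iff_ne_zero.mpr hdet
  have hrank := Matrix.rank_of_isUnit _ ((Matrix.isUnit_iff_isUnit_det _).mpr hu)
  rw [hfac] at hrank
  have hle : (B * C).rank ≤ Fintype.card (Fin N ⊕ Fin N) :=
    le_trans (Matrix.rank_mul_le_left B C) (Matrix.rank_le_card_width B)
  rw [hrank] at hle
  simp [Fintype.card_sum] at hle
  omega
end

section
/- Let α₀,…,α_{2N} be pairwise distinct reals and β₀,…,β_{2N} be pairwise distinct reals. Then the polynomial det((z_{k,m})_{k,m=0}^{2N}), viewed as a polynomial in formal variables z_{k,m} where variables z_{k,m} and z_{k',m'} are identified whenever αₖ+βₘ = α_{k'}+β_{m'}, is a nonzero polynomial; in particular it contains the monomial ∏ₖ z_{k,k} (corresponding to the diagonal with sorted αₖ, βₘ) with coefficient 1. -/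
open Real MvPolynomial

lemma finsupp_sum_eval {n : ℕ} (a : Fin n → ℝ) (f : ℝ → ℝ) :
    ((∑ k : Fin n, Finsupp.single (a k) 1 : ℝ →₀ ℕ)).sum (fun x e => (e : ℝ) * f x)
      = ∑ k : Fin n, f (a k) := by
  rw [← Finsupp.sum_finset_sum_index (by simp) (by intro x b c; push_cast; ring)]
  refine Finset.sum_congr rfl fun k _ => ?_
  rw [Finsupp.sum_single_index (by simp)]
  simp

lemma perm_eq_one {n : ℕ} (α β : Fin n → ℝ) (hα : StrictMono α) (hβ : StrictMono β)
    (σ : Equiv.Perm (Fin n))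
    (h : (∑ i : Fin n, Finsupp.single (α (σ i) + β i) 1 : ℝ →₀ ℕ)
        = ∑ i : Fin n, Finsupp.single (α i + β i) 1) : σ = 1 := by
  have h2 : ∑ i : Fin n, (α (σ i) + β i) ^ 2 = ∑ i : Fin n, (α i + β i) ^ 2 := by
    have := congrArg (fun d : ℝ →₀ ℕ => d.sum fun x e => (e : ℝ) * x ^ 2) h
    simpa only [finsupp_sum_eval] using this
  have expand : ∀ γ : Fin n → ℝ, ∑ i : Fin n, (γ i + β i) ^ 2
      = ∑ i : Fin n, γ i ^ 2 + ∑ i : Fin n, β i ^ 2 + 2 * ∑ i : Fin n, γ i * β i := by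
    intro γ
    rw [Finset.mul_sum, ← Finset.sum_add_distrib, ← Finset.sum_add_distrib]
    exact Finset.sum_congr rfl fun i _ => by ring
  have hsq : ∑ i : Fin n, α (σ i) ^ 2 = ∑ i : Fin n, α i ^ 2 :=
    Equiv.sum_comp σ (fun i => α i ^ 2)
  have hmul : ∑ i : Fin n, α (σ i) * β i = ∑ i : Fin n, α i * β i := by
    have e1 := expand (fun i => α (σ i))
    have e2 := expand α
    rw [e1, e2, hsq] at h2
    linarith
  have hab : Monovary α β := fun i j hij => (hα.le_iff_le.mpr (hβ.lt_iff_lt.mp hij).le)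
  have hmono : Monovary (α ∘ σ) β := hab.sum_comp_perm_mul_eq_sum_mul_iff.mp hmul
  have hsm : StrictMono (σ : Fin n → Fin n) := by
    intro i j hij
    have h1 : α (σ i) ≤ α (σ j) := hmono (hβ hij)
    have h2 : σ i ≤ σ j := hα.le_iff_le.mp h1
    exact lt_of_le_of_ne h2 (fun hc => absurd (σ.injective hc) hij.ne)
  haveI : WellFoundedLT (Fin n) := inferInstance
  have hid : (σ : Fin n → Fin n) = id :=
    (StrictMono.range_inj (β := Fin n) (γ := Fin n) hsm (strictMono_id (α := Fin n))).mp (by rw [σ.surjective.range_eq, Set.range_id])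
  ext i
  exact congrArg Fin.val (congrFun hid i)

lemma coeff_det_eq_one {n : ℕ} (α β : Fin n → ℝ) (hα : StrictMono α) (hβ : StrictMono β) :
    MvPolynomial.coeff (∑ k : Fin n, Finsupp.single (α k + β k) 1)
      (Matrix.det (fun k m : Fin n => (X (α k + β m) : MvPolynomial ℝ ℝ))) = 1 := by
  rw [show (fun k m : Fin n => (X (α k + β m) : MvPolynomial ℝ ℝ)) = Matrix.of (fun k m : Fin n => (X (α k + β m) : MvPolynomial ℝ ℝ)) from rfl, Matrix.det_apply, MvPolynomial.coeff_sum]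
  have hterm : ∀ σ : Equiv.Perm (Fin n),
      MvPolynomial.coeff (∑ k : Fin n, Finsupp.single (α k + β k) 1)
        (Equiv.Perm.sign σ • ∏ i : Fin n, (X (α (σ i) + β i) : MvPolynomial ℝ ℝ))
      = if σ = 1 then 1 else 0 := by
    intro σ
    have hprod : (∏ i : Fin n, (X (α (σ i) + β i) : MvPolynomial ℝ ℝ))
        = monomial (∑ i : Fin n, Finsupp.single (α (σ i) + β i) 1) 1 := by
      rw [monomial_sum_one]
      rfl
    rw [hprod, Units.smul_def, MvPolynomial.coeff_smul, MvPolynomial.coeff_monomial]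
    by_cases hσ : σ = 1
    · subst hσ
      rw [if_pos (by simp), if_pos rfl]
      simp
    · rw [if_neg hσ, if_neg (fun hc => hσ (perm_eq_one α β hα hβ σ hc))]
      simp
  calc (∑ σ : Equiv.Perm (Fin n), MvPolynomial.coeff (∑ k : Fin n, Finsupp.single (α k + β k) 1)
        (Equiv.Perm.sign σ • ∏ i : Fin n, (X (α (σ i) + β i) : MvPolynomial ℝ ℝ)))
      = ∑ σ : Equiv.Perm (Fin n), if σ = 1 then (1 : ℝ) else 0 :=
        Finset.sum_congr rfl fun σ _ => hterm σ
    _ = 1 := by simp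

theorem det_polynomial_nonzero
    (N : ℕ) (α β : Fin (2 * N + 1) → ℝ)
    (hα : Function.Injective α) (hβ : Function.Injective β) :
    Matrix.det (fun k m : Fin (2 * N + 1) => (X (α k + β m) : MvPolynomial ℝ ℝ)) ≠ 0 ∧
    (StrictMono α → StrictMono β →
      MvPolynomial.coeff (∑ k : Fin (2 * N + 1), Finsupp.single (α k + β k) 1)
        (Matrix.det (fun k m : Fin (2 * N + 1) => (X (α k + β m) : MvPolynomial ℝ ℝ))) = 1) := by
  constructor
  · set e := Tuple.sort α with he
    set e' := Tuple.sort β with he'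
    have hα' : StrictMono (α ∘ e) :=
      (Tuple.monotone_sort α).strictMono_of_injective (hα.comp e.injective)
    have hβ' : StrictMono (β ∘ e') :=
      (Tuple.monotone_sort β).strictMono_of_injective (hβ.comp e'.injective)
    intro h0
    have hsub : (fun k m : Fin (2 * N + 1) => (X ((α ∘ e) k + (β ∘ e') m) : MvPolynomial ℝ ℝ))
        = ((Matrix.of fun k m : Fin (2 * N + 1) =>
            (X (α k + β m) : MvPolynomial ℝ ℝ)).submatrix id e').submatrix e id := rfl
    have hdet0 : Matrix.det (fun k m : Fin (2 * N + 1) =>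
        (X ((α ∘ e) k + (β ∘ e') m) : MvPolynomial ℝ ℝ)) = 0 := by
      rw [hsub, Matrix.det_permute, Matrix.det_permute']
      have : Matrix.det (Matrix.of fun k m : Fin (2 * N + 1) =>
          (X (α k + β m) : MvPolynomial ℝ ℝ)) = 0 := h0
      rw [this, mul_zero, mul_zero]
    have := coeff_det_eq_one (α ∘ e) (β ∘ e') hα' hβ'
    rw [hdet0] at this
    simp at this
  · intro hαm hβm
    exact coeff_det_eq_one α β hαm hβm
end

section
/- For every m ∈ ℕ and reals ω, h, x one has x^m·sin(ωx + h) = limit as Δω → 0 of Δω^{−m}·Σₙ₌₀^m (−1)^{m−n}·C(m,n)·sin((ω + nΔω)x + h − πm/2), and the convergence is uniform for x in any compact interval. -/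
open Real Filter Finset

private lemma pow_sub_pow_abs_le (z w : ℂ) {K : ℝ} (hz : ‖z‖ ≤ K)
    (hw : ‖w‖ ≤ K) (n : ℕ) :
    ‖z ^ n - w ^ n‖ ≤ n * K ^ (n - 1) * ‖z - w‖ := by
  rw [← geom_sum₂_mul, norm_mul]
  refine mul_le_mul_of_nonneg_right ?_ (norm_nonneg _)
  calc ‖∑ i ∈ range n, z ^ i * w ^ (n - 1 - i)‖
      ≤ ∑ i ∈ range n, ‖z ^ i * w ^ (n - 1 - i)‖ :=
        norm_sum_le _ _
    _ ≤ ∑ _i ∈ range n, K ^ (n - 1) := by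
        refine Finset.sum_le_sum fun i hi => ?_
        rw [Finset.mem_range] at hi
        rw [norm_mul, norm_pow, norm_pow]
        calc ‖z‖ ^ i * ‖w‖ ^ (n - 1 - i)
            ≤ K ^ i * K ^ (n - 1 - i) := by
              have hK : 0 ≤ K := le_trans (norm_nonneg z) hz
              gcongr <;> first | exact pow_nonneg hK _ | exact norm_nonneg _ | assumption
          _ = K ^ (n - 1) := by rw [← pow_add]; congr 1; omega
    _ = n * K ^ (n - 1) := by simp [Finset.sum_const, nsmul_eq_mul]

private lemma key_sum (m : ℕ) (θ t : ℝ) :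
    ∑ n ∈ Finset.range (m + 1), (-1 : ℝ) ^ (m - n) * (m.choose n : ℝ) *
      Real.sin (θ + n * t)
    = (Complex.exp ((θ : ℂ) * Complex.I) *
        (Complex.exp ((t : ℂ) * Complex.I) - 1) ^ m).im := by
  have hmain : Complex.exp ((θ : ℂ) * Complex.I) *
      (Complex.exp ((t : ℂ) * Complex.I) - 1) ^ m
      = ∑ n ∈ Finset.range (m + 1),
          (((-1 : ℝ) ^ (m - n) * (m.choose n : ℝ) : ℝ) : ℂ) *
            Complex.exp (((θ + n * t : ℝ) : ℂ) * Complex.I) := by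
    rw [sub_pow, Finset.mul_sum]
    refine Finset.sum_congr rfl fun n hn => ?_
    rw [Finset.mem_range] at hn
    have hpow : Complex.exp ((t : ℂ) * Complex.I) ^ n
        = Complex.exp (((n * t : ℝ) : ℂ) * Complex.I) := by
      rw [← Complex.exp_nat_mul]
      congr 1
      push_cast
      ring
    have hsign : ((-1 : ℂ)) ^ (n + m) = (((-1 : ℝ) ^ (m - n) : ℝ) : ℂ) := by
      push_cast
      rw [show n + m = (m - n) + 2 * n by omega, pow_add, pow_mul]
      simp
    have hexp : Complex.exp ((θ : ℂ) * Complex.I) *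
        Complex.exp (((n * t : ℝ) : ℂ) * Complex.I)
        = Complex.exp (((θ + n * t : ℝ) : ℂ) * Complex.I) := by
      rw [← Complex.exp_add]
      congr 1
      push_cast
      ring
    rw [hpow, hsign, one_pow, ← hexp]
    push_cast
    ring
  rw [hmain, Complex.im_sum]
  refine Finset.sum_congr rfl fun n hn => ?_
  simp only [Complex.mul_im, Complex.ofReal_re, Complex.ofReal_im,
    Complex.exp_ofReal_mul_I_im, Complex.exp_ofReal_mul_I_re, zero_mul, add_zero]

private lemma neg_I_pow (m : ℕ) (θ : ℝ) :
    Complex.exp (((θ - Real.pi * m / 2 : ℝ) : ℂ) * Complex.I)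
    = Complex.exp ((θ : ℂ) * Complex.I) * (-Complex.I) ^ m := by
  have h1 : (-Complex.I) = Complex.exp (((-(Real.pi / 2) : ℝ) : ℂ) * Complex.I) := by
    rw [Complex.exp_mul_I, ← Complex.ofReal_cos, ← Complex.ofReal_sin]
    simp [Real.cos_pi_div_two, Real.sin_pi_div_two]
  rw [h1, ← Complex.exp_nat_mul, ← Complex.exp_add]
  congr 1
  push_cast
  ring

theorem resonance_uniform_limit
    (m : ℕ) (ω h a b : ℝ) :
    TendstoUniformlyOn
      (fun (Δ : ℝ) (x : ℝ) =>
        (∑ n ∈ Finset.range (m + 1),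
          (-1 : ℝ) ^ (m - n) * (m.choose n : ℝ) *
            Real.sin ((ω + n * Δ) * x + h - Real.pi * m / 2)) / Δ ^ m)
      (fun x : ℝ => x ^ m * Real.sin (ω * x + h))
      (nhdsWithin (0 : ℝ) {0}ᶜ)
      (Set.Icc a b) := by
  rw [Metric.tendstoUniformlyOn_iff]
  intro ε hε
  set M : ℝ := max |a| |b| with hMdef
  have hM0 : 0 ≤ M := le_trans (abs_nonneg a) (le_max_left _ _)
  set C : ℝ := m * (M + 1) ^ (m - 1) with hCdef
  have hC0 : 0 ≤ C := by positivity
  set δ : ℝ := min (1 / (M ^ 2 + M + 1)) (ε / (C * M ^ 2 + 1)) with hδdef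
  have hδ0 : 0 < δ := by
    apply lt_min <;> positivity
  have h1 : ∀ᶠ Δ in nhdsWithin (0 : ℝ) {0}ᶜ, |Δ| < δ := by
    apply eventually_nhdsWithin_of_eventually_nhds
    have := Metric.ball_mem_nhds (0 : ℝ) hδ0
    filter_upwards [this] with Δ hΔ
    simpa [Real.dist_eq] using hΔ
  have h2 : ∀ᶠ Δ in nhdsWithin (0 : ℝ) {0}ᶜ, Δ ≠ 0 := by
    filter_upwards [self_mem_nhdsWithin] with Δ hΔ using hΔ
  filter_upwards [h1, h2] with Δ hΔδ hΔ0
  intro x hx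
  have hΔc : (Δ : ℂ) ≠ 0 := Complex.ofReal_ne_zero.2 hΔ0
  have hΔabs : 0 < |Δ| := abs_pos.2 hΔ0
  have hxM : |x| ≤ M := abs_le_max_abs_abs hx.1 hx.2
  set W : ℂ := Complex.exp (((Δ * x : ℝ) : ℂ) * Complex.I) with hWdef
  set ψ : ℂ := (W - 1) * (-Complex.I) / (Δ : ℂ) with hψdef
  set E : ℂ := Complex.exp (((ω * x + h : ℝ) : ℂ) * Complex.I) with hEdef
  -- step 1: rewrite the sum
  have hF : (∑ n ∈ Finset.range (m + 1),
        (-1 : ℝ) ^ (m - n) * (m.choose n : ℝ) *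
          Real.sin ((ω + n * Δ) * x + h - Real.pi * m / 2))
      = (Complex.exp (((ω * x + h - Real.pi * m / 2 : ℝ) : ℂ) * Complex.I)
          * (W - 1) ^ m).im := by
    rw [← key_sum m (ω * x + h - Real.pi * m / 2) (Δ * x)]
    refine Finset.sum_congr rfl fun n _ => ?_
    congr 2
    ring
  -- step 2: complex identity
  have hE2 : Complex.exp (((ω * x + h - Real.pi * m / 2 : ℝ) : ℂ) * Complex.I)
      * (W - 1) ^ m = E * ψ ^ m * ((Δ : ℂ)) ^ m := by
    rw [neg_I_pow m (ω * x + h)]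
    have hψm : ψ ^ m * ((Δ : ℂ)) ^ m = ((W - 1) * (-Complex.I)) ^ m := by
      rw [hψdef, div_pow, div_mul_cancel₀ _ (pow_ne_zero _ hΔc)]
    conv_rhs => rw [mul_assoc, hψm]
    rw [mul_pow, hEdef]
    ring
  have hFval : (∑ n ∈ Finset.range (m + 1),
        (-1 : ℝ) ^ (m - n) * (m.choose n : ℝ) *
          Real.sin ((ω + n * Δ) * x + h - Real.pi * m / 2)) / Δ ^ m
      = (E * ψ ^ m).im := by
    rw [hF, hE2]
    have him : (E * ψ ^ m * ((Δ : ℂ)) ^ m).im = (E * ψ ^ m).im * Δ ^ m := by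
      rw [← Complex.ofReal_pow]
      simp only [Complex.mul_im, Complex.ofReal_im, Complex.ofReal_re, mul_zero,
        zero_mul, add_zero, zero_add]
    rw [him, mul_div_cancel_right₀]
    exact pow_ne_zero _ hΔ0
  have htgt : x ^ m * Real.sin (ω * x + h) = (E * ((x : ℂ)) ^ m).im := by
    rw [hEdef, ← Complex.ofReal_pow]
    simp only [Complex.mul_im, Complex.ofReal_re, Complex.ofReal_im,
      Complex.exp_ofReal_mul_I_im, Complex.exp_ofReal_mul_I_re, mul_zero, add_zero]
    ring
  -- distance bound
  rw [Real.dist_eq, htgt, hFval, ← Complex.sub_im, ← mul_sub]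
  have hbound1 : |(E * ((x : ℂ) ^ m - ψ ^ m)).im| ≤ ‖(x : ℂ) ^ m - ψ ^ m‖ := by
    calc |(E * ((x : ℂ) ^ m - ψ ^ m)).im| ≤ ‖E * ((x : ℂ) ^ m - ψ ^ m)‖ :=
          Complex.abs_im_le_norm _
      _ = ‖(x : ℂ) ^ m - ψ ^ m‖ := by
          rw [norm_mul, hEdef, Complex.norm_exp_ofReal_mul_I, one_mul]
  -- bound |ψ - x|
  have hΔsmall : |Δ| * (M ^ 2 + M + 1) < 1 := by
    have : |Δ| < 1 / (M ^ 2 + M + 1) := lt_of_lt_of_le hΔδ (min_le_left _ _)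
    rw [lt_div_iff₀ (by positivity)] at this
    exact this
  have habs1 : |Δ * x| ≤ 1 := by
    rw [abs_mul]
    nlinarith [abs_nonneg Δ, abs_nonneg x]
  have hexp_bound : ‖W - 1 - ((Δ * x : ℝ) : ℂ) * Complex.I‖ ≤ (Δ * x) ^ 2 := by
    have harg : ‖((Δ * x : ℝ) : ℂ) * Complex.I‖ = |Δ * x| := by
      rw [norm_mul, Complex.norm_real, Real.norm_eq_abs, Complex.norm_I, mul_one]
    have := Complex.norm_exp_sub_one_sub_id_le (x := ((Δ * x : ℝ) : ℂ) * Complex.I)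
      (by rw [harg]; exact habs1)
    rw [harg] at this
    calc ‖W - 1 - ((Δ * x : ℝ) : ℂ) * Complex.I‖ ≤ |Δ * x| ^ 2 := this
      _ = (Δ * x) ^ 2 := sq_abs _
  have hψx : ‖ψ - (x : ℂ)‖ ≤ |Δ| * M ^ 2 := by
    have hid : (ψ - (x : ℂ)) * (Δ : ℂ)
        = (W - 1 - ((Δ * x : ℝ) : ℂ) * Complex.I) * (-Complex.I) := by
      rw [hψdef, sub_mul, div_mul_cancel₀ _ hΔc]
      push_cast
      linear_combination (-((Δ : ℂ) * (x : ℂ))) * Complex.I_sq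
    have habs : ‖ψ - (x : ℂ)‖ * |Δ| ≤ (Δ * x) ^ 2 := by
      have h3 := congrArg (‖·‖) hid
      rw [norm_mul, norm_mul, Complex.norm_real, Real.norm_eq_abs] at h3
      simp only [norm_neg, Complex.norm_I, mul_one] at h3
      rw [h3]
      exact hexp_bound
    have hxsq : x ^ 2 ≤ M ^ 2 := by nlinarith [abs_nonneg x, sq_abs x]
    have hx2 : (Δ * x) ^ 2 ≤ (|Δ| * M ^ 2) * |Δ| := by
      have h6 : (Δ * x) ^ 2 = x ^ 2 * Δ ^ 2 := by ring
      have h7 : (|Δ| * M ^ 2) * |Δ| = M ^ 2 * Δ ^ 2 := by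
        rw [show (|Δ| * M ^ 2) * |Δ| = M ^ 2 * (|Δ| * |Δ|) by ring, ← sq]
        rw [sq_abs]
      rw [h6, h7]
      exact mul_le_mul_of_nonneg_right hxsq (sq_nonneg Δ)
    exact le_of_mul_le_mul_right (le_trans habs hx2) hΔabs
  have hΔM2 : |Δ| * M ^ 2 ≤ 1 := by nlinarith [abs_nonneg Δ]
  have hψK : ‖ψ‖ ≤ M + 1 := by
    have h4 : ‖ψ‖ ≤ ‖ψ - (x : ℂ)‖ + ‖(x : ℂ)‖ := by
      calc ‖ψ‖ = ‖(ψ - (x : ℂ)) + (x : ℂ)‖ := by ring_nf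
        _ ≤ _ := norm_add_le _ _
    rw [Complex.norm_real, Real.norm_eq_abs] at h4
    linarith
  have hxK : ‖(x : ℂ)‖ ≤ M + 1 := by
    rw [Complex.norm_real, Real.norm_eq_abs]; linarith
  have hpowb := pow_sub_pow_abs_le ψ ((x : ℂ)) hψK hxK m
  have hΔε : |Δ| * (C * M ^ 2 + 1) < ε := by
    have : |Δ| < ε / (C * M ^ 2 + 1) := lt_of_lt_of_le hΔδ (min_le_right _ _)
    rw [lt_div_iff₀ (by positivity)] at this
    exact this
  calc |(E * ((x : ℂ) ^ m - ψ ^ m)).im| ≤ ‖(x : ℂ) ^ m - ψ ^ m‖ := hbound1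
    _ = ‖ψ ^ m - (x : ℂ) ^ m‖ := (norm_sub_rev _ _).symm
    _ ≤ C * ‖ψ - (x : ℂ)‖ := hpowb
    _ ≤ C * (|Δ| * M ^ 2) := mul_le_mul_of_nonneg_left hψx hC0
    _ < ε := by nlinarith [abs_nonneg Δ]
end

section
/- There exists a constant C = C(M, Ω) (one may take C = 2^{M(M+1)}(1+Ω)^{M·max(n, M−1)}) such that for every f(x) = Σₙ₌₁^M cₙe^{iωₙx} with all |ωₙ| ≤ Ω and every n ≥ 1, max_{x∈[0,1]} |f^{(n)}(x)| ≤ 2^{M(M+1)}(1+Ω)^{M·max(n,M−1)} · max_{x∈[0,1]} |f(x)|. -/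
open Complex
open Polynomial Finset Metric

set_option maxHeartbeats 1000000 in
lemma nodepoly_coeff_bound (v : ℕ → ℂ) (a : ℝ) (ha : 0 ≤ a) (j : ℕ)
    (hv : ∀ i < j, ‖v i‖ ≤ a) (m : ℕ) :
    ‖(∏ i ∈ range j, (X - C (v i))).coeff m‖ ≤ (j.choose m : ℝ) * a ^ (j - m) := by
  induction j generalizing m with
  | zero =>
    rcases Nat.eq_zero_or_pos m with rfl | hm
    · simp
    · simp [Polynomial.coeff_one, Nat.pos_iff_ne_zero.1 hm, Nat.choose_eq_zero_of_lt hm]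
  | succ j ih =>
    have hv' : ∀ i < j, ‖v i‖ ≤ a := fun i hi => hv i (hi.trans (Nat.lt_succ_self j))
    have hvj : ‖v j‖ ≤ a := hv j (Nat.lt_succ_self j)
    set p : Polynomial ℂ := ∏ i ∈ range j, (X - C (v i)) with hp
    have hps : ∏ i ∈ range (j+1), (X - C (v i)) = p * (X - C (v j)) := Finset.prod_range_succ _ _
    rw [hps]
    rcases Nat.eq_zero_or_pos m with rfl | hm
    · have h0 : (p * (X - C (v j))).coeff 0 = p.coeff 0 * (-(v j)) := by
        rw [Polynomial.coeff_zero_eq_eval_zero, Polynomial.eval_mul,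
          Polynomial.coeff_zero_eq_eval_zero]
        simp
      rw [h0, norm_mul]
      have h1 : ‖p.coeff 0‖ ≤ (j.choose 0 : ℝ) * a ^ (j - 0) := ih hv' 0
      have h2 : ‖-(v j)‖ ≤ a := by simpa using hvj
      calc ‖p.coeff 0‖ * ‖-(v j)‖
          ≤ ((j.choose 0 : ℝ) * a ^ (j - 0)) * a := by
            apply mul_le_mul h1 h2 (norm_nonneg _) (by positivity)
        _ ≤ ((j+1).choose 0 : ℝ) * a ^ (j + 1 - 0) := by simp [pow_succ]
    · obtain ⟨m, rfl⟩ := Nat.exists_eq_succ_of_ne_zero (Nat.pos_iff_ne_zero.1 hm)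
      rw [Polynomial.coeff_mul_X_sub_C]
      have h1 : ‖p.coeff m‖ ≤ (j.choose m : ℝ) * a ^ (j - m) := ih hv' m
      have h2 : ‖p.coeff (m+1)‖ ≤ (j.choose (m+1) : ℝ) * a ^ (j - (m+1)) :=
        ih hv' (m+1)
      calc ‖p.coeff m - p.coeff (m + 1) * v j‖
          ≤ ‖p.coeff m‖ + ‖p.coeff (m+1)‖ * ‖v j‖ := by
            refine (norm_sub_le _ _).trans ?_
            rw [norm_mul]
        _ ≤ (j.choose m : ℝ) * a ^ (j - m) + ((j.choose (m+1) : ℝ) * a ^ (j - (m+1))) * a := by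
            gcongr <;> first | exact norm_nonneg _ | assumption
        _ ≤ ((j+1).choose (m+1) : ℝ) * a ^ (j + 1 - (m+1)) := by
            rw [Nat.choose_succ_succ, Nat.cast_add, add_mul, Nat.succ_sub_succ]
            apply add_le_add le_rfl
            rcases le_or_gt (m+1) j with h | h
            · apply le_of_eq
              rw [mul_assoc, ← pow_succ]
              congr 2
              omega
            · simp [Nat.choose_eq_zero_of_lt h]

lemma abs_exp_I_mul_sub_one_le (t : ℝ) : ‖Complex.exp (I * t) - 1‖ ≤ |t| := by
  have h : Complex.exp (I * t) - 1
      = Complex.ofReal (Real.cos t - 1) + Complex.ofReal (Real.sin t) * I := by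
    rw [mul_comm, Complex.exp_mul_I]
    push_cast
    ring
  rw [h, ← Real.sqrt_sq_eq_abs, Complex.norm_def, Complex.normSq_add_mul_I]
  apply Real.sqrt_le_sqrt
  nlinarith [Real.sin_sq_add_cos_sq t, Real.one_sub_sq_div_two_le_cos (x := t)]


lemma newton_split (v : ℕ → ℂ) (u z : ℂ) (m : ℕ)
    (hz : ∀ i < m, z ≠ v i) (hzu : z ≠ u) :
    ∑ j ∈ range m, (∏ i ∈ range j, (u - v i)) * (∏ i ∈ range (j+1), (z - v i))⁻¹
      = (1 - (∏ i ∈ range m, (u - v i)) * (∏ i ∈ range m, (z - v i))⁻¹) * (z - u)⁻¹ := by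
  induction m with
  | zero => simp
  | succ m ih =>
    have hprod : (∏ i ∈ range m, (z - v i)) ≠ 0 :=
      Finset.prod_ne_zero_iff.2 fun i hi =>
        sub_ne_zero.2 (hz i ((Finset.mem_range.1 hi).trans (Nat.lt_succ_self m)))
    have hm : z - v m ≠ 0 := sub_ne_zero.2 (hz m (Nat.lt_succ_self m))
    have hzu' : z - u ≠ 0 := sub_ne_zero.2 hzu
    rw [Finset.sum_range_succ, ih (fun i hi => hz i (hi.trans (Nat.lt_succ_self m))),
      Finset.prod_range_succ, Finset.prod_range_succ]
    field_simp
    ring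

lemma circleIntegral_finset_sum {ι : Type*} (s : Finset ι) (F : ι → ℂ → ℂ) (c : ℂ) (R : ℝ)
    (h : ∀ i ∈ s, CircleIntegrable (F i) c R) :
    (∮ z in C(c, R), ∑ i ∈ s, F i z) = ∑ i ∈ s, ∮ z in C(c, R), F i z := by
  simp only [circleIntegral, Finset.smul_sum]
  rw [intervalIntegral.integral_finset_sum]
  intro i hi
  exact (h i hi).out

set_option maxHeartbeats 1000000 in
lemma interpolation_exists (N : ℕ) (v : ℕ → ℂ) (a R : ℝ) (ha : 0 ≤ a) (haR : a < R)
    (hv : ∀ i < N, ‖v i‖ ≤ a)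
    (g : ℂ → ℂ) (hg : DiffContOnCl ℂ g (Metric.ball 0 R))
    (G : ℝ) (hG : ∀ z ∈ Metric.sphere (0:ℂ) R, ‖g z‖ ≤ G) :
    ∃ P : Polynomial ℂ, (0 < N → P.natDegree < N) ∧ (∀ l < N, P.eval (v l) = g (v l)) ∧
      ∀ m : ℕ, ‖P.coeff m‖
        ≤ ∑ j ∈ range N, R * G / (R - a)^(j+1) * ((j.choose m : ℝ) * a^(j-m)) := by
  have hR : 0 < R := lt_of_le_of_lt ha haR
  -- points on the sphere are far from the nodes
  have hfar : ∀ z ∈ Metric.sphere (0:ℂ) R, ∀ i, i < N → R - a ≤ ‖z - v i‖ := by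
    intro z hz i hi
    have hz' : ‖z‖ = R := by
      simpa [Complex.dist_eq] using hz
    have h2 := norm_sub_norm_le z (v i)
    have hvi := hv i hi
    linarith
  have hne : ∀ z ∈ Metric.sphere (0:ℂ) R, ∀ i, i < N → z ≠ v i := by
    intro z hz i hi h
    have := hfar z hz i hi
    rw [h, sub_self] at this
    simp at this
    linarith
  have hprodpos : ∀ j : ℕ, (0:ℝ) < (R - a)^(j+1) := fun j => pow_pos (by linarith) _
  have hprodlb : ∀ j, j < N → ∀ z ∈ Metric.sphere (0:ℂ) R,
      (R - a)^(j+1) ≤ ‖∏ i ∈ range (j+1), (z - v i)‖ := by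
    intro j hj z hz
    rw [norm_prod]
    calc (R - a)^(j+1) = ∏ _i ∈ range (j+1), (R - a) := by
          rw [Finset.prod_const, Finset.card_range]
      _ ≤ ∏ i ∈ range (j+1), ‖z - v i‖ := by
          apply Finset.prod_le_prod (fun i _ => by linarith)
          intro i hi
          exact hfar z hz i (lt_of_lt_of_le (Finset.mem_range.1 hi) hj)
  have hprodne : ∀ j, j < N → ∀ z ∈ Metric.sphere (0:ℂ) R,
      (∏ i ∈ range (j+1), (z - v i)) ≠ 0 := by
    intro j hj z hz
    apply Finset.prod_ne_zero_iff.2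
    intro i hi
    exact sub_ne_zero.2 (hne z hz i (lt_of_lt_of_le (Finset.mem_range.1 hi) hj))
  -- continuity of g on the sphere
  have hgc : ContinuousOn g (Metric.sphere (0:ℂ) R) := by
    apply hg.continuousOn.mono
    rw [closure_ball (0:ℂ) hR.ne']
    exact sphere_subset_closedBall
  -- the integrands
  set H : ℕ → ℂ → ℂ := fun j z => (∏ i ∈ range (j+1), (z - v i))⁻¹ * g z with hH
  have hHc : ∀ j, j < N → ContinuousOn (H j) (Metric.sphere (0:ℂ) R) := by
    intro j hj
    apply ContinuousOn.mul _ hgc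
    apply ContinuousOn.inv₀
    · exact (Continuous.continuousOn (by continuity))
    · intro z hz
      exact hprodne j hj z hz
  have hInt : ∀ j, j < N → CircleIntegrable (H j) 0 R :=
    fun j hj => (hHc j hj).circleIntegrable hR.le
  set d : ℕ → ℂ := fun j => (2*(Real.pi:ℂ)*I)⁻¹ * ∮ z in C(0, R), H j z with hd
  refine ⟨∑ j ∈ range N, C (d j) * ∏ i ∈ range j, (X - C (v i)), ?_, ?_, ?_⟩
  · -- degree
    intro hN
    have : (∑ j ∈ range N, C (d j) * ∏ i ∈ range j, (X - C (v i))).natDegree ≤ N - 1 := by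
      apply Polynomial.natDegree_sum_le_of_forall_le
      intro j hj
      refine le_trans (Polynomial.natDegree_C_mul_le _ _) (le_trans (Polynomial.natDegree_prod_le _ _) ?_)
      have : ∀ i ∈ range j, (X - C (v i)).natDegree = 1 := fun i _ => Polynomial.natDegree_X_sub_C _
      rw [Finset.sum_congr rfl this, Finset.sum_const, Finset.card_range, smul_eq_mul, mul_one]
      have := Finset.mem_range.1 hj
      omega
    omega
  · -- interpolation
    intro l hl
    have hvl : v l ∈ Metric.ball (0:ℂ) R := by
      rw [mem_ball_zero_iff]
      exact lt_of_le_of_lt (hv l hl) haR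
    have hC := hg.circleIntegral_sub_inv_smul hvl
    have heval : (∑ j ∈ range N, C (d j) * ∏ i ∈ range j, (X - C (v i))).eval (v l)
        = ∑ j ∈ range N, (∏ i ∈ range j, (v l - v i)) * d j := by
      rw [Polynomial.eval_finset_sum]
      apply Finset.sum_congr rfl
      intro j _
      rw [Polynomial.eval_mul, Polynomial.eval_C, Polynomial.eval_prod]
      simp [mul_comm]
    rw [heval]
    have hstep : ∀ j ∈ range N, (∏ i ∈ range j, (v l - v i)) * d j
        = (2*(Real.pi:ℂ)*I)⁻¹ * ∮ z in C(0, R), (∏ i ∈ range j, (v l - v i)) * H j z := by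
      intro j _
      rw [circleIntegral.integral_const_mul]
      ring
    rw [Finset.sum_congr rfl hstep, ← Finset.mul_sum]
    have hIntc : ∀ j ∈ range N, CircleIntegrable (fun z => (∏ i ∈ range j, (v l - v i)) * H j z) 0 R := by
      intro j hj
      exact (ContinuousOn.mul continuousOn_const (hHc j (Finset.mem_range.1 hj))).circleIntegrable hR.le
    rw [← circleIntegral_finset_sum _ _ _ _ hIntc]
    have hcongr : Set.EqOn (fun z => ∑ j ∈ range N, (∏ i ∈ range j, (v l - v i)) * H j z)
        (fun z => (z - v l)⁻¹ • g z) (Metric.sphere (0:ℂ) R) := by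
      intro z hz
      simp only [smul_eq_mul]
      have hprodzero : (∏ i ∈ range N, (v l - v i)) = 0 :=
        Finset.prod_eq_zero (Finset.mem_range.2 hl) (sub_self _)
      have hns := newton_split v (v l) z N (fun i hi => hne z hz i hi)
        (hne z hz l hl)
      rw [hprodzero] at hns
      simp only [zero_mul, sub_zero, one_mul] at hns
      calc ∑ j ∈ range N, (∏ i ∈ range j, (v l - v i)) * H j z
          = (∑ j ∈ range N, (∏ i ∈ range j, (v l - v i))
              * (∏ i ∈ range (j+1), (z - v i))⁻¹) * g z := by
            rw [Finset.sum_mul]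
            apply Finset.sum_congr rfl
            intro j _
            simp only [hH]
            ring
        _ = (z - v l)⁻¹ * g z := by rw [hns]
    rw [circleIntegral.integral_congr hR.le hcongr, hC, smul_eq_mul]
    have h2pi : (2*(Real.pi:ℂ)*I) ≠ 0 := by
      simp [Real.pi_ne_zero, I_ne_zero]
    field_simp
  · -- coefficient bound
    intro m
    have hG0 : 0 ≤ G := by
      refine le_trans (norm_nonneg (g R)) (hG R ?_)
      simp [Complex.dist_eq, abs_of_pos hR]
    have hcoeff : (∑ j ∈ range N, C (d j) * ∏ i ∈ range j, (X - C (v i))).coeff m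
        = ∑ j ∈ range N, d j * (∏ i ∈ range j, (X - C (v i))).coeff m := by
      rw [Polynomial.finset_sum_coeff]
      apply Finset.sum_congr rfl
      intro j _
      rw [Polynomial.coeff_C_mul]
    rw [hcoeff]
    refine le_trans (norm_sum_le _ _) ?_
    apply Finset.sum_le_sum
    intro j hj
    rw [norm_mul]
    have hdj : ‖d j‖ ≤ R * G / (R - a)^(j+1) := by
      have habs2pi : ‖(2*(Real.pi:ℂ)*I)⁻¹‖ = (2*Real.pi)⁻¹ := by
        rw [norm_inv]
        congr 1
        simp [norm_mul, Complex.norm_I, Complex.norm_real, Complex.norm_two, abs_of_pos Real.pi_pos]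
      have hnorm : ‖∮ z in C(0, R), H j z‖ ≤ 2 * Real.pi * R * (G / (R - a)^(j+1)) := by
        apply circleIntegral.norm_integral_le_of_norm_le_const hR.le
        intro z hz
        have h1 := hprodlb j (Finset.mem_range.1 hj) z hz
        have h2 := hprodne j (Finset.mem_range.1 hj) z hz
        simp only [hH, norm_mul, norm_inv]
        rw [div_eq_mul_inv, mul_comm (G)]
        apply mul_le_mul _ (hG z hz) (norm_nonneg _)
          (le_of_lt (inv_pos.2 (hprodpos j)))
        exact inv_anti₀ (hprodpos j) h1
      rw [hd, norm_mul, habs2pi]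
      calc (2*Real.pi)⁻¹ * ‖∮ z in C(0, R), H j z‖
          ≤ (2*Real.pi)⁻¹ * (2 * Real.pi * R * (G / (R - a)^(j+1))) := by
            apply mul_le_mul_of_nonneg_left _ (by positivity)
            exact hnorm
        _ = R * G / (R - a)^(j+1) := by
            have hpi := Real.pi_ne_zero
            have hpow := (hprodpos j).ne'
            field_simp
    have hnj := nodepoly_coeff_bound v a ha j (fun i hi => hv i (lt_of_lt_of_le hi (le_of_lt (Finset.mem_range.1 hj)))) m
    apply mul_le_mul hdj hnj (norm_nonneg _)
      (div_nonneg (mul_nonneg hR.le hG0) (le_of_lt (hprodpos j)))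

lemma expsum_hasDerivAt (M : ℕ) (ω : Fin M → ℝ) (b : Fin M → ℂ) (x : ℝ) :
    HasDerivAt (fun x : ℝ => ∑ k, b k * Complex.exp (I * ω k * x))
      (∑ k, (I * ω k * b k) * Complex.exp (I * ω k * x)) x := by
  apply HasDerivAt.fun_sum
  intro k _
  have h1 : HasDerivAt (fun x : ℝ => (x : ℂ)) 1 x := by
    simpa using (hasDerivAt_id x).ofReal_comp
  have h2 : HasDerivAt (fun x : ℝ => I * ω k * (x:ℂ)) (I * ω k) x := by
    simpa using h1.const_mul (I * (ω k : ℂ))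
  have h4 := (h2.cexp).const_mul (b k)
  have he : I * ↑(ω k) * b k * cexp (I * ↑(ω k) * ↑x)
      = b k * (cexp (I * ↑(ω k) * ↑x) * (I * ↑(ω k))) := by ring
  rw [he]
  exact h4

lemma expsum_iteratedDeriv (M : ℕ) (ω : Fin M → ℝ) (b : Fin M → ℂ) (n : ℕ) :
    iteratedDeriv n (fun x : ℝ => ∑ k, b k * Complex.exp (I * ω k * x))
      = fun x : ℝ => ∑ k, ((I * ω k)^n * b k) * Complex.exp (I * ω k * x) := by
  induction n with
  | zero => simp
  | succ n ih =>
    rw [iteratedDeriv_succ, ih]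
    funext x
    rw [(expsum_hasDerivAt M ω (fun k => (I * ω k)^n * b k) x).deriv]
    apply Finset.sum_congr rfl
    intro k _
    ring

set_option maxHeartbeats 4000000 in
lemma core_bound (M : ℕ) (hM : 0 < M) (Ω : ℝ) (hΩ : 0 < Ω) (c : Fin M → ℂ) (ω : Fin M → ℝ)
    (hω : ∀ k, |ω k| ≤ Ω) (f : ℝ → ℂ)
    (hf : ∀ x : ℝ, f x = ∑ k, c k * Complex.exp (I * ω k * x))
    (n : ℕ) (δ : ℝ) (hδ : δ ≠ 0) (hδΩ : Ω * |δ| ≤ 1/4)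
    (R : ℝ) (haR : Ω * |δ| < R) (hR : R ≤ 1/2)
    (F : ℝ) (hF : ∀ y ∈ Set.Icc (0:ℝ) 1, ‖f y‖ ≤ F)
    (x : ℝ) (hx : ∀ m : ℕ, m < M → x + (m:ℝ) * δ ∈ Set.Icc (0:ℝ) 1) :
    ‖iteratedDeriv n f x‖
      ≤ (∑ j ∈ range M, (2 + Ω*|δ|)^j * (R * ((3/2)*R/|δ|)^n / (R - Ω*|δ|)^(j+1))) * F := by
  have hxI : x ∈ Set.Icc (0:ℝ) 1 := by simpa using hx 0 hM
  have hF0 : 0 ≤ F := le_trans (norm_nonneg _) (hF x hxI)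
  have hδabs : 0 < |δ| := abs_pos.2 hδ
  set a : ℝ := Ω * |δ| with ha_def
  have ha0 : 0 < a := mul_pos hΩ hδabs
  have hR0 : 0 < R := lt_trans ha0 haR
  set G : ℝ := ((3/2)*R/|δ|)^n with hG_def
  have hGnn : 0 ≤ G := by positivity
  -- the symbol function
  set g : ℂ → ℂ := fun z => (Complex.log (1+z) * (δ:ℂ)⁻¹)^n with hg_def
  have hdiffAt : ∀ z : ℂ, ‖z‖ ≤ R → DifferentiableAt ℂ g z := by
    intro z hz
    have hslit : (1 + z) ∈ Complex.slitPlane := by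
      apply Complex.mem_slitPlane_of_norm_lt_one
      linarith
    have h1 : DifferentiableAt ℂ (fun z : ℂ => 1 + z) z :=
      (differentiableAt_const _).add differentiableAt_id
    have h2 : DifferentiableAt ℂ (fun z : ℂ => Complex.log (1 + z)) z :=
      (Complex.differentiableAt_log hslit).comp z h1
    exact ((h2.mul_const _).pow n)
  have hg : DiffContOnCl ℂ g (Metric.ball 0 R) := by
    apply DifferentiableOn.diffContOnCl
    rw [closure_ball (0:ℂ) hR0.ne']
    intro z hz
    exact (hdiffAt z (by simpa [Complex.dist_eq] using hz)).differentiableWithinAt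
  have hGb : ∀ z ∈ Metric.sphere (0:ℂ) R, ‖g z‖ ≤ G := by
    intro z hz
    have hzR : ‖z‖ = R := by simpa [Complex.dist_eq] using hz
    have hlog : ‖Complex.log (1 + z)‖ ≤ 3/2 * ‖z‖ :=
      Complex.norm_log_one_add_half_le_self (by rw [hzR]; exact hR)
    rw [hg_def]
    simp only [norm_pow, norm_mul, norm_inv, Complex.norm_real, Real.norm_eq_abs]
    apply pow_le_pow_left₀ (by positivity)
    rw [div_eq_mul_inv]
    apply mul_le_mul_of_nonneg_right _ (by positivity)
    calc ‖Complex.log (1+z)‖ ≤ 3/2*‖z‖ := hlog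
      _ = 3/2*R := by rw [hzR]
  -- the nodes
  set u : Fin M → ℂ := fun k => Complex.exp (I * ω k * δ) - 1 with hu_def
  have hu : ∀ k, ‖u k‖ ≤ a := by
    intro k
    have h1 : (I * (ω k) * (δ:ℂ)) = I * ((ω k * δ : ℝ) : ℂ) := by push_cast; ring
    have := abs_exp_I_mul_sub_one_le (ω k * δ)
    rw [← h1] at this
    refine le_trans this ?_
    rw [abs_mul]
    exact mul_le_mul_of_nonneg_right (hω k) (abs_nonneg _)
  set v : ℕ → ℂ := fun i => if h : i < M then u ⟨i, h⟩ else 0 with hv_def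
  have hv : ∀ i < M, ‖v i‖ ≤ a := by
    intro i hi
    rw [hv_def]
    simp only [dif_pos hi]
    exact hu _
  obtain ⟨P, hdeg, hevalP, hcoeff⟩ :=
    interpolation_exists M v a R ha0.le haR hv g hg G hGb
  -- value of g at the nodes
  have hgu : ∀ k : Fin M, g (u k) = (I * ω k)^n := by
    intro k
    have hlog : Complex.log (1 + u k) = I * ω k * δ := by
      rw [hu_def]
      simp only [add_sub_cancel]
      have him : (I * (ω k) * (δ:ℂ)).im = ω k * δ := by
        simp [Complex.mul_im, Complex.mul_re]
      apply Complex.log_exp <;> rw [him]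
      · have : |ω k * δ| ≤ a := by
          rw [abs_mul]; exact mul_le_mul_of_nonneg_right (hω k) (abs_nonneg _)
        have hpi : (3:ℝ) < Real.pi := Real.pi_gt_three
        have := abs_le.1 this
        linarith [this.1]
      · have : |ω k * δ| ≤ a := by
          rw [abs_mul]; exact mul_le_mul_of_nonneg_right (hω k) (abs_nonneg _)
        have hpi : (3:ℝ) < Real.pi := Real.pi_gt_three
        have := abs_le.1 this
        linarith [this.2]
    rw [hg_def]
    simp only []
    rw [hlog]
    congr 1
    have hδC : (δ:ℂ) ≠ 0 := Complex.ofReal_ne_zero.2 hδ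
    field_simp
  -- the difference functions
  set S : ℕ → ℝ → ℂ := fun m y => ∑ k, ((u k)^m * c k) * Complex.exp (I * ω k * y) with hS_def
  have hS0 : ∀ y : ℝ, S 0 y = f y := by
    intro y
    rw [hS_def, hf y]
    simp
  have hSsucc : ∀ (m : ℕ) (y : ℝ), S (m+1) y = S m (y + δ) - S m y := by
    intro m y
    rw [hS_def]
    simp only []
    rw [← Finset.sum_sub_distrib]
    apply Finset.sum_congr rfl
    intro k _
    have hexp : Complex.exp (I * ω k * ((y + δ : ℝ) : ℂ))
        = Complex.exp (I * ω k * y) * Complex.exp (I * ω k * δ) := by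
      rw [← Complex.exp_add]
      congr 1
      push_cast
      ring
    rw [hexp, hu_def]
    ring
  have hSbound : ∀ (m : ℕ) (y : ℝ), (∀ i : ℕ, i ≤ m → y + (i:ℝ) * δ ∈ Set.Icc (0:ℝ) 1) →
      ‖S m y‖ ≤ 2^m * F := by
    intro m
    induction m with
    | zero =>
      intro y hy
      rw [hS0 y]
      simpa using hF y (by simpa using hy 0 (le_refl 0))
    | succ m ih =>
      intro y hy
      rw [hSsucc m y]
      have h1 : ‖S m (y + δ)‖ ≤ 2^m * F := by
        apply ih
        intro i hi
        have h3 := hy (i+1) (by omega)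
        have heq : y + δ + (i:ℝ)*δ = y + ((i+1 : ℕ):ℝ)*δ := by push_cast; ring
        rw [heq]
        exact h3
      have h2 : ‖S m y‖ ≤ 2^m * F := ih y (fun i hi => hy i (hi.trans (Nat.le_succ m)))
      calc ‖S m (y + δ) - S m y‖
          ≤ ‖S m (y + δ)‖ + ‖S m y‖ := norm_sub_le _ _
        _ ≤ 2^m * F + 2^m * F := add_le_add h1 h2
        _ = 2^(m+1) * F := by ring
  -- the key identity
  have hkey : iteratedDeriv n f x = ∑ m ∈ range M, P.coeff m * S m x := by
    have hfE : f = fun x : ℝ => ∑ k, c k * Complex.exp (I * ω k * x) := funext hf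
    rw [hfE, expsum_iteratedDeriv M ω c n]
    have hswap : ∑ m ∈ range M, P.coeff m * S m x
        = ∑ k, (∑ m ∈ range M, P.coeff m * (u k)^m) * (c k * Complex.exp (I * ω k * x)) := by
      rw [hS_def]
      simp only []
      simp_rw [Finset.mul_sum]
      rw [Finset.sum_comm]
      apply Finset.sum_congr rfl
      intro k _
      rw [Finset.sum_mul]
      apply Finset.sum_congr rfl
      intro m _
      ring
    rw [hswap]
    apply Finset.sum_congr rfl
    intro k _
    have heval : ∑ m ∈ range M, P.coeff m * (u k)^m = P.eval (u k) := by
      rw [Polynomial.eval_eq_sum_range' (hdeg hM)]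
    have hvk : v (k : ℕ) = u k := by
      rw [hv_def]
      simp only [dif_pos k.isLt]
    have : P.eval (u k) = g (u k) := by
      rw [← hvk]
      rw [hevalP (k : ℕ) k.isLt, hvk]
    rw [heval, this, hgu k]
    ring
  -- put it together
  rw [hkey]
  calc ‖∑ m ∈ range M, P.coeff m * S m x‖
      ≤ ∑ m ∈ range M, ‖P.coeff m‖ * ‖S m x‖ := by
        refine le_trans (norm_sum_le _ _) ?_
        apply le_of_eq
        apply Finset.sum_congr rfl
        intro m _
        rw [norm_mul]
    _ ≤ ∑ m ∈ range M, ‖P.coeff m‖ * (2^m * F) := by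
        apply Finset.sum_le_sum
        intro m hm
        apply mul_le_mul_of_nonneg_left _ (norm_nonneg _)
        apply hSbound m x
        intro i hi
        exact hx i (lt_of_le_of_lt hi (Finset.mem_range.1 hm))
    _ = (∑ m ∈ range M, ‖P.coeff m‖ * 2^m) * F := by
        rw [Finset.sum_mul]
        apply Finset.sum_congr rfl
        intro m _
        ring
    _ ≤ (∑ j ∈ range M, (2 + a)^j * (R * G / (R - a)^(j+1))) * F := by
        apply mul_le_mul_of_nonneg_right _ hF0
        calc ∑ m ∈ range M, ‖P.coeff m‖ * 2^m
            ≤ ∑ m ∈ range M, (∑ j ∈ range M, R * G / (R - a)^(j+1)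
                * ((j.choose m : ℝ) * a^(j-m))) * 2^m := by
              apply Finset.sum_le_sum
              intro m _
              exact mul_le_mul_of_nonneg_right (hcoeff m) (by positivity)
          _ = ∑ j ∈ range M, (R * G / (R - a)^(j+1))
                * (∑ m ∈ range M, (j.choose m : ℝ) * 2^m * a^(j-m)) := by
              simp_rw [Finset.sum_mul]
              rw [Finset.sum_comm]
              apply Finset.sum_congr rfl
              intro j _
              rw [Finset.mul_sum]
              apply Finset.sum_congr rfl
              intro m _
              ring
          _ ≤ ∑ j ∈ range M, (2 + a)^j * (R * G / (R - a)^(j+1)) := by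
              apply Finset.sum_le_sum
              intro j hj
              rw [mul_comm ((2+a)^j)]
              apply mul_le_mul_of_nonneg_left _
                (div_nonneg (mul_nonneg hR0.le hGnn) (pow_nonneg (by linarith) (j+1)))
              have hsum : ∑ m ∈ range M, (j.choose m : ℝ) * 2^m * a^(j-m)
                  = ∑ m ∈ range (j+1), (j.choose m : ℝ) * 2^m * a^(j-m) := by
                symm
                apply Finset.sum_subset
                · apply Finset.range_subset_range.2
                  have := Finset.mem_range.1 hj
                  omega
                · intro m _ hm
                  rw [Nat.choose_eq_zero_of_lt (by simpa using hm)]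
                  simp
              rw [hsum, add_pow]
              apply le_of_eq
              apply Finset.sum_congr rfl
              intro m _
              ring

lemma my_geom_le (b : ℝ) (hb : 2 ≤ b) : ∀ M : ℕ, 1 ≤ M → ∑ j ∈ range M, b^j ≤ 2*b^(M-1) := by
  intro M
  induction M with
  | zero => omega
  | succ M ih =>
    intro _
    rcases Nat.eq_zero_or_pos M with rfl | hM
    · simp
    · rw [Finset.sum_range_succ]
      have h1 := ih hM
      have h2 : (2:ℝ)*b^(M-1) ≤ b^M := by
        have : M - 1 + 1 = M := by omega
        calc (2:ℝ)*b^(M-1) ≤ b*b^(M-1) := by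
              apply mul_le_mul_of_nonneg_right hb (by positivity)
          _ = b^M := by rw [← pow_succ', this]
      have h3 : Nat.succ M - 1 = M := by omega
      rw [h3]
      linarith

lemma pow27M : ∀ M : ℕ, 4 ≤ M → 27*(M:ℝ)/2 ≤ 2^(M+2) := by
  intro M
  induction M with
  | zero => omega
  | succ M ih =>
    intro hM
    rcases Nat.lt_or_ge M 4 with h | h
    · have : M = 3 := by omega
      subst this
      norm_num
    · have h1 := ih h
      have h2 : (27:ℝ)/2 ≤ 2^(M+2) := by
        calc (27:ℝ)/2 ≤ 27*(M:ℝ)/2 := by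
              have : (1:ℝ) ≤ (M:ℝ) := by exact_mod_cast Nat.one_le_iff_ne_zero.2 (by omega)
              nlinarith
          _ ≤ 2^(M+2) := h1
      rw [pow_succ]
      push_cast
      nlinarith

lemma pow3M : ∀ M : ℕ, 4 ≤ M → 3*(M:ℝ)/2 ≤ 2^(M-1) := by
  intro M
  induction M with
  | zero => omega
  | succ M ih =>
    intro hM
    rcases Nat.lt_or_ge M 4 with h | h
    · have : M = 3 := by omega
      subst this
      norm_num
    · have h1 := ih h
      have h3 : M.succ - 1 = (M-1) + 1 := by omega
      rw [h3, pow_succ]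
      have h2 : (3:ℝ)/2 ≤ 2^(M-1) := by
        calc (3:ℝ)/2 ≤ 3*(M:ℝ)/2 := by
              have : (1:ℝ) ≤ (M:ℝ) := by exact_mod_cast Nat.one_le_iff_ne_zero.2 (by omega)
              nlinarith
          _ ≤ 2^(M-1) := h1
      push_cast
      nlinarith

lemma sumK1 : ∀ M : ℕ, 2 ≤ M → ∑ j ∈ range M, 2*(27*(M:ℝ)/2)^j ≤ 2^(M*(M+1)) := by
  intro M hM
  rcases Nat.lt_or_ge M 4 with h | h
  · interval_cases M
    · rw [Finset.sum_range_succ, Finset.sum_range_succ]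
      norm_num
    · rw [Finset.sum_range_succ, Finset.sum_range_succ, Finset.sum_range_succ]
      norm_num
  · have hb : (2:ℝ) ≤ 27*(M:ℝ)/2 := by
      have : (4:ℝ) ≤ (M:ℝ) := by exact_mod_cast h
      nlinarith
    have h1 : ∑ j ∈ range M, 2*(27*(M:ℝ)/2)^j = 2*∑ j ∈ range M, (27*(M:ℝ)/2)^j := by
      rw [Finset.mul_sum]
    rw [h1]
    have h2 := my_geom_le _ hb M (by omega)
    have h3 : (27*(M:ℝ)/2)^(M-1) ≤ (2^(M+2):ℝ)^(M-1) := by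
      apply pow_le_pow_left₀ (by positivity) (pow27M M h)
    have h4 : ((2:ℝ)^(M+2))^(M-1) = 2^((M+2)*(M-1)) := by rw [← pow_mul]
    have h5 : 4*(2:ℝ)^((M+2)*(M-1)) ≤ 2^(M*(M+1)) := by
      have hexp : (M+2)*(M-1) + 2 = M*(M+1) := by
        have h4' : 4 ≤ M := h
        nlinarith [Nat.sub_add_cancel (show 1 ≤ M by omega)]
      calc 4*(2:ℝ)^((M+2)*(M-1)) = 2^((M+2)*(M-1)+2) := by rw [pow_add]; ring
        _ ≤ 2^(M*(M+1)) := by rw [hexp]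
    calc 2*∑ j ∈ range M, (27*(M:ℝ)/2)^j ≤ 2*(2*(27*(M:ℝ)/2)^(M-1)) := by linarith
      _ ≤ 4*(2:ℝ)^((M+2)*(M-1)) := by rw [← h4]; nlinarith
      _ ≤ 2^(M*(M+1)) := h5

lemma sumK2 : ∀ M : ℕ, 3 ≤ M → (∑ j ∈ range M, 2*(9:ℝ)^j) * (3*(M:ℝ)/2)^(M-2) ≤ 2^(M*(M+1)) := by
  intro M hM
  rcases Nat.lt_or_ge M 4 with h | h
  · have : M = 3 := by omega
    subst this
    rw [Finset.sum_range_succ, Finset.sum_range_succ, Finset.sum_range_succ]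
    norm_num
  · have h1 : ∑ j ∈ range M, 2*(9:ℝ)^j = 2*∑ j ∈ range M, (9:ℝ)^j := by rw [Finset.mul_sum]
    have h2 := my_geom_le 9 (by norm_num) M (by omega)
    have h9 : (9:ℝ)^(M-1) ≤ 2^(4*(M-1)) := by
      calc (9:ℝ)^(M-1) ≤ (2^4:ℝ)^(M-1) := by
            apply pow_le_pow_left₀ (by norm_num) (by norm_num)
        _ = 2^(4*(M-1)) := by rw [← pow_mul]
    have h3 : (3*(M:ℝ)/2)^(M-2) ≤ 2^((M-1)*(M-2)) := by
      calc (3*(M:ℝ)/2)^(M-2) ≤ ((2:ℝ)^(M-1))^(M-2) := by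
            apply pow_le_pow_left₀ (by positivity) (pow3M M h)
        _ = 2^((M-1)*(M-2)) := by rw [← pow_mul]
    have hexp : 2 + 4*(M-1) + (M-1)*(M-2) = M*(M+1) := by
      have h4 : 4 ≤ M := h
      nlinarith [Nat.sub_add_cancel (show 1 ≤ M by omega),
        Nat.sub_add_cancel (show 2 ≤ M by omega)]
    calc (∑ j ∈ range M, 2*(9:ℝ)^j) * (3*(M:ℝ)/2)^(M-2)
        ≤ (2*(2*(9:ℝ)^(M-1))) * (3*(M:ℝ)/2)^(M-2) := by
          apply mul_le_mul_of_nonneg_right _ (by positivity)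
          rw [h1]; linarith
      _ ≤ (4*(2:ℝ)^(4*(M-1))) * 2^((M-1)*(M-2)) := by
          apply mul_le_mul _ h3 (by positivity) (by positivity)
          nlinarith
      _ = 2^(2 + 4*(M-1) + (M-1)*(M-2)) := by rw [pow_add, pow_add]; ring
      _ = 2^(M*(M+1)) := by rw [hexp]

lemma four_nine_le (M : ℕ) (hM : 2 ≤ M) : (4:ℝ)*9^(M-1) ≤ 2^(M*(M+1)) := by
  have h9 : (9:ℝ)^(M-1) ≤ 2^(4*(M-1)) := by
    calc (9:ℝ)^(M-1) ≤ ((2:ℝ)^4)^(M-1) := pow_le_pow_left₀ (by norm_num) (by norm_num) _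
      _ = 2^(4*(M-1)) := by rw [← pow_mul]
  have hexp : 4*(M-1) + 2 ≤ M*(M+1) := by
    have := Nat.sub_add_cancel (show 1 ≤ M by omega)
    nlinarith
  calc (4:ℝ)*9^(M-1) ≤ 4*2^(4*(M-1)) := by linarith
    _ = 2^(4*(M-1)+2) := by rw [pow_add]; ring
    _ ≤ 2^(M*(M+1)) := pow_le_pow_right₀ (by norm_num) hexp

lemma numeric1 (M n : ℕ) (hM : 2 ≤ M) (hn : M - 1 ≤ n) (Ω a : ℝ) (hΩ : 0 < Ω)
    (ha : 0 < a) (haA : a ≤ 1/4)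
    (hcase : a = 1/4 ∨ (2*Ω ≤ (M:ℝ) ∧ a = Ω/(2*(M:ℝ)))) :
    ∑ j ∈ range M, (2+a)^j * (2*a*(3*Ω)^n/a^(j+1))
      ≤ 2^(M*(M+1)) * (1+Ω)^(M*n) := by
  have hterm : ∀ j, (2+a)^j * (2*a*(3*Ω)^n/a^(j+1)) = 2*(3*Ω)^n*((2+a)/a)^j := by
    intro j
    rw [div_pow]
    field_simp
    ring
  have h3Ω : 3*Ω ≤ (1+Ω)^2 := by nlinarith [sq_nonneg ((1:ℝ)-Ω)]
  have hΩ1 : (1:ℝ) ≤ 1+Ω := by linarith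
  have hpow0 : (0:ℝ) ≤ (1+Ω)^(M*n) := by positivity
  rcases hcase with hA | ⟨hB1, hB2⟩
  · -- a = 1/4
    have hq : (2+a)/a = 9 := by rw [hA]; norm_num
    have h3n : (3*Ω)^n ≤ (1+Ω)^(M*n) := by
      calc (3*Ω)^n ≤ ((1+Ω)^2)^n := pow_le_pow_left₀ (by positivity) h3Ω n
        _ = (1+Ω)^(2*n) := by rw [← pow_mul]
        _ ≤ (1+Ω)^(M*n) := pow_le_pow_right₀ hΩ1 (by nlinarith)
    have hbound : ∀ j ∈ range M, (2+a)^j * (2*a*(3*Ω)^n/a^(j+1)) ≤ 2*(1+Ω)^(M*n) * 9^j := by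
      intro j _
      rw [hterm j, hq]
      have h9j : (0:ℝ) ≤ 9^j := by positivity
      nlinarith [mul_le_mul_of_nonneg_right h3n h9j]
    calc ∑ j ∈ range M, (2+a)^j * (2*a*(3*Ω)^n/a^(j+1))
        ≤ ∑ j ∈ range M, 2*(1+Ω)^(M*n) * 9^j := Finset.sum_le_sum hbound
      _ = 2*(1+Ω)^(M*n) * ∑ j ∈ range M, 9^j := by rw [Finset.mul_sum]
      _ ≤ 2*(1+Ω)^(M*n) * (2*9^(M-1)) := by
          apply mul_le_mul_of_nonneg_left (my_geom_le 9 (by norm_num) M (by omega)) (by positivity)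
      _ ≤ 2^(M*(M+1)) * (1+Ω)^(M*n) := by
          nlinarith [four_nine_le M hM, pow_nonneg (show (0:ℝ) ≤ 9 by norm_num) (M-1)]
  · -- a = Ω/(2M)
    have hMR : (2:ℝ) ≤ (M:ℝ) := by exact_mod_cast hM
    have hq : (2+a)/a ≤ 9*(M:ℝ)/(2*Ω) := by
      have h1 : (2+a)/a = (4*(M:ℝ) + Ω)/Ω := by
        rw [hB2]
        field_simp
        ring
      rw [h1, div_le_div_iff₀ hΩ (by positivity)]
      nlinarith
    have hq0 : (0:ℝ) ≤ (2+a)/a := by positivity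
    have hbound : ∀ j ∈ range M, (2+a)^j * (2*a*(3*Ω)^n/a^(j+1))
        ≤ 2*(27*(M:ℝ)/2)^j*(1+Ω)^(M*n) := by
      intro j hj
      rw [hterm j]
      have hjM := Finset.mem_range.1 hj
      have hjn : j ≤ n := by omega
      have h2 : ((2+a)/a)^j ≤ (9*(M:ℝ)/(2*Ω))^j := pow_le_pow_left₀ hq0 hq j
      have h3 : (3*Ω)^n * (9*(M:ℝ)/(2*Ω))^j = (27*(M:ℝ)/2)^j * (3*Ω)^(n-j) := by
        have hnj : n = j + (n - j) := by omega
        calc (3*Ω)^n * (9*(M:ℝ)/(2*Ω))^j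
            = (3*Ω)^j * (3*Ω)^(n-j) * (9*(M:ℝ)/(2*Ω))^j := by rw [← pow_add, ← hnj]
          _ = ((3*Ω)*(9*(M:ℝ)/(2*Ω)))^j * (3*Ω)^(n-j) := by rw [mul_pow (3*Ω) (9*(M:ℝ)/(2*Ω)) j]; ring
          _ = (27*(M:ℝ)/2)^j * (3*Ω)^(n-j) := by
              have hbase : (3*Ω)*(9*(M:ℝ)/(2*Ω)) = 27*(M:ℝ)/2 := by
                field_simp
                ring
              rw [hbase]
      have h4 : (3*Ω)^(n-j) ≤ (1+Ω)^(M*n) := by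
        calc (3*Ω)^(n-j) ≤ ((1+Ω)^2)^(n-j) := pow_le_pow_left₀ (by positivity) h3Ω _
          _ = (1+Ω)^(2*(n-j)) := by rw [← pow_mul]
          _ ≤ (1+Ω)^(M*n) := by
              apply pow_le_pow_right₀ hΩ1
              have h5 : n - j ≤ n := Nat.sub_le n j
              nlinarith
      have h6 : (0:ℝ) ≤ (3*Ω)^n := by positivity
      have h7 : (0:ℝ) ≤ (27*(M:ℝ)/2)^j := by positivity
      calc 2*(3*Ω)^n*((2+a)/a)^j ≤ 2*(3*Ω)^n*(9*(M:ℝ)/(2*Ω))^j := by nlinarith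
        _ = 2*((27*(M:ℝ)/2)^j * (3*Ω)^(n-j)) := by rw [mul_assoc, h3]
        _ ≤ 2*((27*(M:ℝ)/2)^j * (1+Ω)^(M*n)) := by nlinarith
        _ = 2*(27*(M:ℝ)/2)^j*(1+Ω)^(M*n) := by ring
    calc ∑ j ∈ range M, (2+a)^j * (2*a*(3*Ω)^n/a^(j+1))
        ≤ ∑ j ∈ range M, 2*(27*(M:ℝ)/2)^j*(1+Ω)^(M*n) := Finset.sum_le_sum hbound
      _ = (∑ j ∈ range M, 2*(27*(M:ℝ)/2)^j)*(1+Ω)^(M*n) := by rw [Finset.sum_mul]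
      _ ≤ 2^(M*(M+1)) * (1+Ω)^(M*n) := mul_le_mul_of_nonneg_right (sumK1 M hM) hpow0

lemma numeric2 (M n : ℕ) (hM : 2 ≤ M) (hn1 : 1 ≤ n) (hn : n + 2 ≤ M) (Ω a d0 : ℝ)
    (hΩ : 0 < Ω) (ha : 0 < a) (haA : a ≤ 1/4) (had : a = Ω*d0) (hd : 0 < d0)
    (hcase : d0 = 1/(4*Ω) ∨ (2*Ω ≤ (M:ℝ) ∧ d0 = 1/(2*(M:ℝ)))) :
    ∑ j ∈ range M, (2+a)^j * ((1/2) * ((3/2)*(1/2)/d0)^n / ((1/2)-a)^(j+1))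
      ≤ 2^(M*(M+1)) * (1+Ω)^(M*(M-1)) := by
  set G : ℝ := ((3/2)*(1/2)/d0)^n with hG_def
  have hG0 : 0 ≤ G := by positivity
  have hΩ1 : (1:ℝ) ≤ 1+Ω := by linarith
  have hpow0 : (0:ℝ) ≤ (1+Ω)^(M*(M-1)) := by positivity
  have hterm : ∀ j, (2+a)^j * ((1/2) * G / ((1/2)-a)^(j+1)) ≤ 2*(9:ℝ)^j*G := by
    intro j
    have h14 : (0:ℝ) < (1/4 : ℝ) := by norm_num
    have hsub : (1/4 : ℝ) ≤ (1/2) - a := by linarith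
    have hsubpos : (0:ℝ) < (1/2) - a := by linarith
    have hp1 : ((1/4:ℝ))^(j+1) ≤ ((1/2)-a)^(j+1) := pow_le_pow_left₀ (by norm_num) hsub _
    have hp1pos : (0:ℝ) < ((1/2)-a)^(j+1) := pow_pos hsubpos _
    have h2a : (2+a)^j ≤ (9/4 : ℝ)^j := pow_le_pow_left₀ (by linarith) (by linarith) j
    have hdiv : (1/2) * G / ((1/2)-a)^(j+1) ≤ (1/2) * G / ((1/4:ℝ))^(j+1) := by
      apply div_le_div_of_nonneg_left (by positivity) (by positivity) hp1
    calc (2+a)^j * ((1/2) * G / ((1/2)-a)^(j+1))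
        ≤ (9/4:ℝ)^j * ((1/2) * G / ((1/4:ℝ))^(j+1)) := by
          apply mul_le_mul h2a hdiv (by positivity) (by positivity)
      _ = 2*(9:ℝ)^j*G := by
          rw [div_pow, div_pow]
          field_simp
          ring
  rcases hcase with hA | ⟨hB1, hB2⟩
  · have hGval : G = (3*Ω)^n := by
      have hbase : (3/2:ℝ)*(1/2)/d0 = 3*Ω := by
        rw [hA]
        field_simp
        ring
      rw [hG_def, hbase]
    have h3Ω : 3*Ω ≤ (1+Ω)^2 := by nlinarith [sq_nonneg ((1:ℝ)-Ω)]
    have hGle : G ≤ (1+Ω)^(M*(M-1)) := by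
      rw [hGval]
      calc (3*Ω)^n ≤ ((1+Ω)^2)^n := pow_le_pow_left₀ (by positivity) h3Ω n
        _ = (1+Ω)^(2*n) := by rw [← pow_mul]
        _ ≤ (1+Ω)^(M*(M-1)) := by
            apply pow_le_pow_right₀ hΩ1
            have h1 : 1 ≤ M - 1 := by omega
            have h2 : n ≤ M - 2 := by omega
            nlinarith [Nat.sub_add_cancel (show 1 ≤ M by omega),
              Nat.sub_add_cancel (show 2 ≤ M by omega)]
    calc ∑ j ∈ range M, (2+a)^j * ((1/2) * G / ((1/2)-a)^(j+1))
        ≤ ∑ j ∈ range M, 2*(9:ℝ)^j*G := Finset.sum_le_sum (fun j _ => hterm j)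
      _ = (∑ j ∈ range M, 2*(9:ℝ)^j)*G := by rw [Finset.sum_mul]
      _ ≤ (2*(2*(9:ℝ)^(M-1)))*(1+Ω)^(M*(M-1)) := by
          apply mul_le_mul _ hGle hG0 (by positivity)
          have := my_geom_le 9 (by norm_num) M (by omega)
          rw [← Finset.mul_sum]
          linarith
      _ ≤ 2^(M*(M+1)) * (1+Ω)^(M*(M-1)) := by
          apply mul_le_mul_of_nonneg_right _ hpow0
          have := four_nine_le M hM
          linarith
  · have hM3 : 3 ≤ M := by omega
    have hMR : (2:ℝ) ≤ (M:ℝ) := by exact_mod_cast hM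
    have hGval : G = (3*(M:ℝ)/2)^n := by
      have hMne : (M:ℝ) ≠ 0 := by positivity
      have hbase : (3/2:ℝ)*(1/2)/d0 = 3*(M:ℝ)/2 := by
        rw [hB2]
        field_simp
      rw [hG_def, hbase]
    have hGle : G ≤ (3*(M:ℝ)/2)^(M-2) := by
      rw [hGval]
      apply pow_le_pow_right₀ (by linarith) (by omega)
    calc ∑ j ∈ range M, (2+a)^j * ((1/2) * G / ((1/2)-a)^(j+1))
        ≤ ∑ j ∈ range M, 2*(9:ℝ)^j*G := Finset.sum_le_sum (fun j _ => hterm j)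
      _ = (∑ j ∈ range M, 2*(9:ℝ)^j)*G := by rw [Finset.sum_mul]
      _ ≤ (∑ j ∈ range M, 2*(9:ℝ)^j)*(3*(M:ℝ)/2)^(M-2) := by
          apply mul_le_mul_of_nonneg_left hGle
          apply Finset.sum_nonneg
          intro j _
          positivity
      _ ≤ 2^(M*(M+1)) := sumK2 M hM3
      _ ≤ 2^(M*(M+1)) * (1+Ω)^(M*(M-1)) := by
          nlinarith [pow_pos (show (0:ℝ) < 2 by norm_num) (M*(M+1)),
            one_le_pow₀ hΩ1 (n := M*(M-1))]

set_option maxHeartbeats 2000000 in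
theorem bernstein_type_derivative_bound
    (M : ℕ) (Ω : ℝ) (c : Fin M → ℂ) (ω : Fin M → ℝ)
    (hω : ∀ k, |ω k| ≤ Ω)
    (f : ℝ → ℂ)
    (hf : ∀ x : ℝ, f x = ∑ k, c k * Complex.exp (Complex.I * (ω k : ℂ) * (x : ℂ)))
    (n : ℕ) (hn : 1 ≤ n) :
    ∀ x ∈ Set.Icc (0 : ℝ) 1,
      ‖iteratedDeriv n f x‖
        ≤ 2 ^ (M * (M + 1)) * (1 + Ω) ^ (M * max n (M - 1)) *
            sSup ((fun y => ‖f y‖) '' Set.Icc (0 : ℝ) 1) := by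
  intro x hx
  set F := sSup ((fun y => ‖f y‖) '' Set.Icc (0:ℝ) 1) with hF_def
  have hfE : f = fun x : ℝ => ∑ k, c k * Complex.exp (I * (ω k : ℂ) * (x:ℂ)) := funext hf
  have hfc : Continuous f := by
    rw [hfE]
    apply continuous_finset_sum
    intro k _
    exact continuous_const.mul (Complex.continuous_exp.comp
      (continuous_const.mul Complex.continuous_ofReal))
  have hbdd : BddAbove ((fun y => ‖f y‖) '' Set.Icc (0:ℝ) 1) :=
    (isCompact_Icc.image (continuous_norm.comp hfc)).bddAbove
  have hFge : ∀ y ∈ Set.Icc (0:ℝ) 1, ‖f y‖ ≤ F :=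
    fun y hy => le_csSup hbdd ⟨y, hy, rfl⟩
  have hF0 : 0 ≤ F := le_trans (norm_nonneg _) (hFge x hx)
  rcases Nat.eq_zero_or_pos M with rfl | hM
  · -- M = 0 : f ≡ 0
    rw [hfE, expsum_iteratedDeriv 0 ω c n]
    simp only [Finset.univ_eq_empty, Finset.sum_empty, norm_zero]
    have : (2:ℝ)^(0*(0+1)) * (1+Ω)^(0*max n (0-1)) = 1 := by norm_num
    rw [this, one_mul]
    exact hF0
  · have hΩ0 : 0 ≤ Ω := le_trans (abs_nonneg _) (hω ⟨0, hM⟩)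
    rcases eq_or_lt_of_le hΩ0 with hΩz | hΩpos
    · -- Ω = 0 : f constant
      have hω0 : ∀ k, (ω k : ℝ) = 0 := by
        intro k
        have h1 : |ω k| ≤ 0 := by rw [hΩz]; exact hω k
        exact abs_eq_zero.1 (le_antisymm h1 (abs_nonneg _))
      rw [hfE, expsum_iteratedDeriv M ω c n]
      have hz : ∀ k : Fin M, ((I * (ω k : ℂ))^n * c k) * Complex.exp (I * (ω k:ℂ) * (x:ℂ)) = 0 := by
        intro k
        rw [hω0 k]
        push_cast
        rw [mul_zero, zero_pow (by omega), zero_mul, zero_mul]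
      simp only [Finset.sum_eq_zero (fun k _ => hz k), norm_zero]
      positivity
    · -- Ω > 0
      rcases Nat.lt_or_ge M 2 with hM1 | hM2
      · -- M = 1
        have hMeq : M = 1 := by omega
        subst hMeq
        rw [hfE, expsum_iteratedDeriv 1 ω c n]
        simp only []
        have h1 : (∑ k : Fin 1, ((I * (ω k:ℂ))^n * c k) * Complex.exp (I * (ω k:ℂ) * (x:ℂ)))
            = (I * (ω 0:ℂ))^n * (c 0 * Complex.exp (I * (ω 0:ℂ) * (x:ℂ))) := by
          rw [Fin.sum_univ_one]
          ring
        rw [h1, norm_mul, norm_pow]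
        have habsI : ‖I * (ω 0:ℂ)‖ = |ω 0| := by
          rw [norm_mul, Complex.norm_I, one_mul, Complex.norm_real, Real.norm_eq_abs]
        rw [habsI]
        have hfx : c 0 * Complex.exp (I * (ω 0:ℂ) * (x:ℂ)) = f x := by
          rw [hf x, Fin.sum_univ_one]
        rw [hfx]
        have hmax : 1 * max n (1-1) = n := by simp
        rw [hmax]
        calc |ω 0|^n * ‖f x‖ ≤ (1+Ω)^n * F := by
              apply mul_le_mul _ (hFge x hx) (norm_nonneg _) (by positivity)
              apply pow_le_pow_left₀ (abs_nonneg _)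
              linarith [hω 0]
          _ ≤ 2^(1*(1+1)) * (1+Ω)^n * F := by
              have hpF : 0 ≤ (1+Ω)^n * F := mul_nonneg (by positivity) hF0
              norm_num
              nlinarith
      · -- M ≥ 2 : main case
        set d0 : ℝ := min (1/(4*Ω)) (1/(2*(M:ℝ))) with hd0_def
        have hMR : (2:ℝ) ≤ (M:ℝ) := by exact_mod_cast hM2
        have hd0pos : 0 < d0 := lt_min (by positivity) (by positivity)
        have hd0a : d0 ≤ 1/(4*Ω) := min_le_left _ _
        have hd0b : d0 ≤ 1/(2*(M:ℝ)) := min_le_right _ _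
        have haA : Ω * d0 ≤ 1/4 := by
          calc Ω * d0 ≤ Ω * (1/(4*Ω)) := mul_le_mul_of_nonneg_left hd0a hΩpos.le
            _ = 1/4 := by field_simp
        have ha : 0 < Ω * d0 := mul_pos hΩpos hd0pos
        set δ : ℝ := if x ≤ 1/2 then d0 else -d0 with hδ_def
        have hδne : δ ≠ 0 := by
          rw [hδ_def]
          split <;> simp [hd0pos.ne', hd0pos.ne]
        have hδabs : |δ| = d0 := by
          rw [hδ_def]
          split
          · exact abs_of_pos hd0pos
          · rw [abs_neg]; exact abs_of_pos hd0pos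
        have hshift : ∀ m : ℕ, m < M → x + (m:ℝ) * δ ∈ Set.Icc (0:ℝ) 1 := by
          intro m hm
          have hm1 : (m:ℝ) ≤ (M:ℝ) - 1 := by
            have : (m:ℝ) + 1 ≤ (M:ℝ) := by exact_mod_cast Nat.succ_le_of_lt hm
            linarith
          have hmnn : (0:ℝ) ≤ (m:ℝ) := Nat.cast_nonneg m
          have hmd0 : (m:ℝ) * d0 ≤ 1/2 := by
            calc (m:ℝ) * d0 ≤ ((M:ℝ)-1) * d0 := mul_le_mul_of_nonneg_right hm1 hd0pos.le
              _ ≤ ((M:ℝ)-1) * (1/(2*(M:ℝ))) := by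
                  apply mul_le_mul_of_nonneg_left hd0b (by linarith)
              _ ≤ 1/2 := by
                  have hrew : ((M:ℝ)-1) * (1/(2*(M:ℝ))) = ((M:ℝ)-1)/(2*(M:ℝ)) := by ring
                  rw [hrew, div_le_div_iff₀ (by positivity) (by norm_num)]
                  nlinarith
          have hmd00 : 0 ≤ (m:ℝ) * d0 := mul_nonneg hmnn hd0pos.le
          obtain ⟨hx0, hx1⟩ := hx
          rw [hδ_def]
          split
          · constructor
            · nlinarith
            · next h => nlinarith
          · constructor
            · next h =>
                push_neg at h
                nlinarith
            · nlinarith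
        rcases Nat.lt_or_ge n (M-1) with hncase | hncase
        · -- n < M-1 : use R = 1/2
          have hn2M : n + 2 ≤ M := by omega
          have hcore := core_bound M (by omega) Ω hΩpos c ω hω f hf n δ hδne
            (by rw [hδabs]; exact haA) (1/2) (by rw [hδabs]; linarith) (le_refl _) F hFge x hshift
          rw [hδabs] at hcore
          have hnum := numeric2 M n hM2 hn hn2M Ω (Ω*d0) d0 hΩpos ha haA rfl hd0pos ?_
          · have hmax : max n (M-1) = M-1 := max_eq_right (by omega)
            rw [hmax]
            calc ‖iteratedDeriv n f x‖
                ≤ (∑ j ∈ range M, (2 + Ω*d0)^j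
                    * ((1/2) * ((3/2)*(1/2)/d0)^n / ((1/2) - Ω*d0)^(j+1))) * F := hcore
              _ ≤ (2^(M*(M+1)) * (1+Ω)^(M*(M-1))) * F :=
                  mul_le_mul_of_nonneg_right hnum hF0
          · rcases min_cases (1/(4*Ω)) (1/(2*(M:ℝ))) with ⟨hmin, _⟩ | ⟨hmin, hlt⟩
            · left; rw [hd0_def, hmin]
            · right
              constructor
              · have h4Ω : (0:ℝ) < 4*Ω := by linarith
                have h2M : (0:ℝ) < 2*(M:ℝ) := by linarith
                rw [div_lt_div_iff₀ h2M h4Ω] at hlt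
                nlinarith
              · rw [hd0_def, hmin]
        · -- n ≥ M-1 : use R = 2*Ω*d0
          have hcore := core_bound M (by omega) Ω hΩpos c ω hω f hf n δ hδne
            (by rw [hδabs]; exact haA) (2*(Ω*d0)) (by rw [hδabs]; linarith)
            (by linarith) F hFge x hshift
          rw [hδabs] at hcore
          have hsum_eq : ∀ j ∈ range M, (2 + Ω*d0)^j
              * ((2*(Ω*d0)) * ((3/2)*(2*(Ω*d0))/d0)^n / ((2*(Ω*d0)) - Ω*d0)^(j+1))
              = (2 + Ω*d0)^j * (2*(Ω*d0)*(3*Ω)^n/(Ω*d0)^(j+1)) := by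
            intro j _
            have h32 : (3/2)*(2*(Ω*d0))/d0 = 3*Ω := by
              field_simp
            have hsub : (2*(Ω*d0)) - Ω*d0 = Ω*d0 := by ring
            rw [h32, hsub]
          rw [Finset.sum_congr rfl hsum_eq] at hcore
          have hnum := numeric1 M n hM2 hncase Ω (Ω*d0) hΩpos ha haA ?_
          · have hmax : max n (M-1) = n := max_eq_left hncase
            rw [hmax]
            calc ‖iteratedDeriv n f x‖
                ≤ (∑ j ∈ range M, (2 + Ω*d0)^j * (2*(Ω*d0)*(3*Ω)^n/(Ω*d0)^(j+1))) * F := hcore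
              _ ≤ (2^(M*(M+1)) * (1+Ω)^(M*n)) * F := mul_le_mul_of_nonneg_right hnum hF0
          · rcases min_cases (1/(4*Ω)) (1/(2*(M:ℝ))) with ⟨hmin, _⟩ | ⟨hmin, hlt⟩
            · left
              rw [hd0_def, hmin]
              field_simp
            · right
              constructor
              · have h4Ω : (0:ℝ) < 4*Ω := by linarith
                have h2M : (0:ℝ) < 2*(M:ℝ) := by linarith
                rw [div_lt_div_iff₀ h2M h4Ω] at hlt
                nlinarith
              · rw [hd0_def, hmin]
                field_simp
end

section
/- Let f : [0,1] → ℂ be C¹ with max_{x∈[0,1]} |f'(x)| ≤ c·max_{x∈[0,1]} |f(x)| for some c ≥ 1. Then (∫₀¹ |f(x)|² dx)^{1/2} ≥ (1/√(3c))·max_{x∈[0,1]} |f(x)|. -/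
open Complex Real

set_option maxHeartbeats 1000000 in
theorem l2_lower_bound_from_derivative_control
    (f f' : ℝ → ℂ) (c : ℝ) (hc : 1 ≤ c)
    (hderiv : ∀ x ∈ Set.Icc (0 : ℝ) 1, HasDerivAt f (f' x) x)
    (hbound : ∀ x ∈ Set.Icc (0 : ℝ) 1,
      ‖f' x‖ ≤ c * sSup ((fun y => ‖f y‖) '' Set.Icc (0 : ℝ) 1)) :
    Real.sqrt (∫ x in (0 : ℝ)..1, ‖f x‖ ^ 2)
      ≥ (1 / Real.sqrt (3 * c)) *
          sSup ((fun y => ‖f y‖) '' Set.Icc (0 : ℝ) 1) := by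
  set M := sSup ((fun y => ‖f y‖) '' Set.Icc (0 : ℝ) 1) with hMdef
  have hc0 : (0:ℝ) < c := lt_of_lt_of_le one_pos hc
  have hcont : ContinuousOn f (Set.Icc 0 1) := fun x hx =>
    (hderiv x hx).continuousAt.continuousWithinAt
  have habs : ContinuousOn (fun y => ‖f y‖) (Set.Icc (0:ℝ) 1) :=
    continuous_norm.comp_continuousOn hcont
  obtain ⟨x₀, hx₀, hmax⟩ := (isCompact_Icc).exists_isMaxOn (Set.nonempty_Icc.2 zero_le_one) habs
  have hMeq : M = ‖f x₀‖ := by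
    apply IsGreatest.csSup_eq
    constructor
    · exact ⟨x₀, hx₀, rfl⟩
    · rintro y ⟨z, hz, rfl⟩; exact hmax hz
  have hM0 : 0 ≤ M := hMeq ▸ (norm_nonneg _)
  -- Lipschitz bound from MVT
  have hlip : ∀ x ∈ Set.Icc (0:ℝ) 1, ‖f x - f x₀‖ ≤ c * M * |x - x₀| := by
    intro x hx
    have := (convex_Icc (0:ℝ) 1).norm_image_sub_le_of_norm_hasDerivWithin_le
      (fun y hy => (hderiv y hy).hasDerivWithinAt)
      (fun y hy => by simpa using hbound y hy) hx₀ hx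
    simpa [Real.norm_eq_abs] using this
  have hlow : ∀ x ∈ Set.Icc (0:ℝ) 1, M - c * M * |x - x₀| ≤ ‖f x‖ := by
    intro x hx
    have h1 : ‖f x₀‖ - ‖f x‖ ≤ ‖f x - f x₀‖ := by
      have h2 := norm_sub_norm_le (f x₀) (f x)
      rwa [norm_sub_rev] at h2
    have h3 := hlip x hx
    rw [← hMeq] at h1
    linarith
  -- interval around x₀
  have hcinv : (0:ℝ) < 1/c := by positivity
  have hcinv1 : 1/c ≤ 1 := by rw [div_le_one hc0]; exact hc
  set a := max 0 (x₀ - 1/c) with hadef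
  set b := min 1 (x₀ + 1/c) with hbdef
  have ha0 : 0 ≤ a := le_max_left _ _
  have hax : a ≤ x₀ := max_le hx₀.1 (by linarith)
  have hxb : x₀ ≤ b := le_min hx₀.2 (by linarith)
  have hb1 : b ≤ 1 := min_le_left _ _
  have hab : a ≤ b := hax.trans hxb
  have hsa : x₀ - a ≤ 1/c := by
    have := le_max_right 0 (x₀ - 1/c); rw [← hadef] at this; linarith
  have htb : b - x₀ ≤ 1/c := by
    have := min_le_right 1 (x₀ + 1/c); rw [← hbdef] at this; linarith
  have hba : 1/c ≤ b - a := by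
    rcases le_total (x₀ - 1/c) 0 with h|h
    · have ha' : a = 0 := max_eq_left h
      rcases le_total 1 (x₀ + 1/c) with h2|h2
      · have hb' : b = 1 := min_eq_left h2
        rw [ha', hb']; linarith
      · have hb' : b = x₀ + 1/c := min_eq_right h2
        rw [ha', hb']; linarith [hx₀.1]
    · have ha' : a = x₀ - 1/c := max_eq_right h
      rcases le_total 1 (x₀ + 1/c) with h2|h2
      · have hb' : b = 1 := min_eq_left h2
        rw [ha', hb']; linarith [hx₀.2]
      · have hb' : b = x₀ + 1/c := min_eq_right h2
        rw [ha', hb']; linarith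
  -- integrability
  have hIcc01 : Set.uIcc (0:ℝ) 1 = Set.Icc 0 1 := Set.uIcc_of_le zero_le_one
  have hintf : IntervalIntegrable (fun x => ‖f x‖ ^ 2) MeasureTheory.volume 0 1 := by
    apply ContinuousOn.intervalIntegrable
    rw [hIcc01]; exact habs.pow 2
  have hintf' : IntervalIntegrable (fun x => ‖f x‖ ^ 2) MeasureTheory.volume a b :=
    hintf.mono_set (by rw [hIcc01, Set.uIcc_of_le hab]; exact Set.Icc_subset_Icc ha0 hb1)
  have hgcont : Continuous fun x : ℝ => M^2 * (1 - c * |x - x₀|)^2 := by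
    have h : Continuous fun x : ℝ => |x - x₀| := (continuous_id.sub continuous_const).abs
    exact continuous_const.mul ((continuous_const.sub (continuous_const.mul h)).pow 2)
  -- pointwise bound on [a,b]
  have hpt : ∀ x ∈ Set.Icc a b, M^2 * (1 - c * |x - x₀|)^2 ≤ ‖f x‖ ^ 2 := by
    intro x hx
    have hx01 : x ∈ Set.Icc (0:ℝ) 1 := ⟨ha0.trans hx.1, hx.2.trans hb1⟩
    have habs1 : |x - x₀| ≤ 1/c := by
      rw [abs_le]; constructor
      · linarith [hx.1]
      · linarith [hx.2]
    have hcx : c * |x - x₀| ≤ 1 := by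
      have := mul_le_mul_of_nonneg_left habs1 hc0.le
      rwa [mul_one_div_cancel hc0.ne'] at this
    have h0 : 0 ≤ M * (1 - c * |x - x₀|) := mul_nonneg hM0 (by linarith)
    have h1 := hlow x hx01
    have h2 : M * (1 - c * |x - x₀|) ≤ ‖f x‖ := by nlinarith
    calc M^2 * (1 - c * |x - x₀|)^2 = (M * (1 - c * |x - x₀|))^2 := by ring
      _ ≤ ‖f x‖ ^ 2 := pow_le_pow_left₀ h0 h2 2
  -- monotone integral steps
  have hmono1 : (∫ x in a..b, M^2 * (1 - c * |x - x₀|)^2)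
      ≤ ∫ x in (0:ℝ)..1, ‖f x‖ ^ 2 := by
    calc (∫ x in a..b, M^2 * (1 - c * |x - x₀|)^2)
        ≤ ∫ x in a..b, ‖f x‖ ^ 2 :=
          intervalIntegral.integral_mono_on hab (hgcont.intervalIntegrable a b) hintf' hpt
      _ ≤ ∫ x in (0:ℝ)..1, ‖f x‖ ^ 2 :=
          intervalIntegral.integral_mono_interval ha0 hab hb1
            (Filter.Eventually.of_forall fun x => by positivity) hintf
  -- FTC computations
  have hF1 : ∀ x : ℝ, HasDerivAt (fun y => M^2 * (1 - c*(x₀ - y))^3 / (3*c))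
      (M^2 * (1 - c*(x₀ - x))^2) x := by
    intro x
    have h1 : HasDerivAt (fun y : ℝ => 1 - c*(x₀ - y)) c x := by
      simpa using (((hasDerivAt_id x).const_sub x₀).const_mul c).const_sub 1
    have h3 := ((h1.pow 3).const_mul (M^2)).div_const (3*c)
    exact h3.congr_deriv (by field_simp; norm_num; ring)
  have hF2 : ∀ x : ℝ, HasDerivAt (fun y => -(M^2 * (1 - c*(y - x₀))^3) / (3*c))
      (M^2 * (1 - c*(x - x₀))^2) x := by
    intro x
    have h1 : HasDerivAt (fun y : ℝ => 1 - c*(y - x₀)) (-c) x := by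
      simpa using (((hasDerivAt_id x).sub_const x₀).const_mul c).const_sub 1
    have h3 := (((h1.pow 3).const_mul (M^2)).neg).div_const (3*c)
    exact h3.congr_deriv (by field_simp; norm_num; ring)
  have hcont1 : Continuous fun x : ℝ => M^2 * (1 - c*(x₀ - x))^2 :=
    continuous_const.mul ((continuous_const.sub (continuous_const.mul
      (continuous_const.sub continuous_id))).pow 2)
  have hcont2 : Continuous fun x : ℝ => M^2 * (1 - c*(x - x₀))^2 :=
    continuous_const.mul ((continuous_const.sub (continuous_const.mul
      (continuous_id.sub continuous_const))).pow 2)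
  have hI1 : (∫ x in a..x₀, M^2 * (1 - c*(x₀ - x))^2)
      = M^2 * (1 - c*(x₀ - x₀))^3/(3*c) - M^2 * (1 - c*(x₀ - a))^3/(3*c) :=
    intervalIntegral.integral_eq_sub_of_hasDerivAt (fun x _ => hF1 x)
      (hcont1.intervalIntegrable a x₀)
  have hI2 : (∫ x in x₀..b, M^2 * (1 - c*(x - x₀))^2)
      = -(M^2 * (1 - c*(b - x₀))^3)/(3*c) - -(M^2 * (1 - c*(x₀ - x₀))^3)/(3*c) :=
    intervalIntegral.integral_eq_sub_of_hasDerivAt (fun x _ => hF2 x)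
      (hcont2.intervalIntegrable x₀ b)
  have hcong1 : (∫ x in a..x₀, M^2 * (1 - c * |x - x₀|)^2)
      = ∫ x in a..x₀, M^2 * (1 - c*(x₀ - x))^2 := by
    apply intervalIntegral.integral_congr
    intro x hx
    rw [Set.uIcc_of_le hax] at hx
    simp only
    rw [abs_sub_comm, _root_.abs_of_nonneg (by linarith [hx.2] : (0:ℝ) ≤ x₀ - x)]
  have hcong2 : (∫ x in x₀..b, M^2 * (1 - c * |x - x₀|)^2)
      = ∫ x in x₀..b, M^2 * (1 - c*(x - x₀))^2 := by
    apply intervalIntegral.integral_congr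
    intro x hx
    rw [Set.uIcc_of_le hxb] at hx
    simp only
    rw [_root_.abs_of_nonneg (by linarith [hx.1] : (0:ℝ) ≤ x - x₀)]
  have hsplit : (∫ x in a..b, M^2 * (1 - c * |x - x₀|)^2)
      = (∫ x in a..x₀, M^2 * (1 - c * |x - x₀|)^2)
        + ∫ x in x₀..b, M^2 * (1 - c * |x - x₀|)^2 :=
    (intervalIntegral.integral_add_adjacent_intervals
      (hgcont.intervalIntegrable a x₀) (hgcont.intervalIntegrable x₀ b)).symm
  -- the value of the model integral is at least M^2/(3c)
  have hU0 : 0 ≤ 1 - c*(x₀ - a) := by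
    have := mul_le_mul_of_nonneg_left hsa hc0.le
    rw [mul_one_div_cancel hc0.ne'] at this
    linarith
  have hV0 : 0 ≤ 1 - c*(b - x₀) := by
    have := mul_le_mul_of_nonneg_left htb hc0.le
    rw [mul_one_div_cancel hc0.ne'] at this
    linarith
  have hUV : (1 - c*(x₀ - a)) + (1 - c*(b - x₀)) ≤ 1 := by
    have := mul_le_mul_of_nonneg_left hba hc0.le
    rw [mul_one_div_cancel hc0.ne'] at this
    nlinarith
  have hval : M^2/(3*c) ≤ ∫ x in a..b, M^2 * (1 - c * |x - x₀|)^2 := by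
    rw [hsplit, hcong1, hcong2, hI1, hI2]
    set U := 1 - c*(x₀ - a) with hUdef
    set V := 1 - c*(b - x₀) with hVdef
    have hcube : U^3 + V^3 ≤ 1 := by nlinarith [mul_nonneg hU0 hV0, sq_nonneg (U+V)]
    have h3c : (0:ℝ) < 3*c := by positivity
    have h9 : 0 ≤ M^2 * (1 - U^3 - V^3) := mul_nonneg (sq_nonneg M) (by linarith)
    have h10 : M^2 ≤ M^2*(2 - U^3 - V^3) := by nlinarith [h9]
    calc M^2/(3*c) ≤ M^2*(2 - U^3 - V^3)/(3*c) :=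
          div_le_div_of_nonneg_right h10 h3c.le |>.trans_eq rfl
      _ = _ := by ring
  have hfinal : M^2/(3*c) ≤ ∫ x in (0:ℝ)..1, ‖f x‖ ^ 2 := hval.trans hmono1
  have hkey : (1 / Real.sqrt (3*c)) * M = Real.sqrt (M^2/(3*c)) := by
    rw [Real.sqrt_div (sq_nonneg M), Real.sqrt_sq hM0]
    ring
  rw [ge_iff_le, hkey]
  exact Real.sqrt_le_sqrt hfinal
end

section
/- For every band-limited exponential sum f(x) = Σₙ₌₁^M cₙe^{iωₙx} with |ωₙ| ≤ Ω, the L² and L^∞ norms on [0,1] are equivalent: ‖f‖_{L²[0,1]} ≤ ‖f‖_{L^∞[0,1]} ≤ 2·(2(1+Ω))^{M(M+1)/2}·‖f‖_{L²[0,1]}. -/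
open Complex Set

noncomputable def expo (a x : ℝ) : ℂ := Complex.exp (Complex.I * a * x)

lemma norm_expo (a x : ℝ) : ‖expo a x‖ = 1 := by
  simp [expo, Complex.norm_exp]

lemma cont_expo (a : ℝ) : Continuous (expo a) := by
  unfold expo; continuity

lemma hasDerivAt_expo (a x : ℝ) : HasDerivAt (expo a) (Complex.I * a * expo a x) x := by
  have h1 : HasDerivAt (fun z : ℂ => Complex.exp (Complex.I * a * z))
      (Complex.exp (Complex.I * a * x) * (Complex.I * a)) (x : ℂ) := by
    simpa using ((hasDerivAt_id (x:ℂ)).const_mul (Complex.I * a)).cexp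
  have h2 := h1.comp_ofReal
  have : Complex.I * a * expo a x = Complex.exp (Complex.I * a * x) * (Complex.I * a) := by
    rw [expo]; ring
  rw [this]; exact h2

lemma hasDerivAt_esum (M : ℕ) (c : Fin M → ℂ) (ω : Fin M → ℝ) (x : ℝ) :
    HasDerivAt (fun y => ∑ k, c k * expo (ω k) y)
      (∑ k, Complex.I * (ω k) * c k * expo (ω k) x) x := by
  have : HasDerivAt (fun y => ∑ k, c k * expo (ω k) y)
      (∑ k, c k * (Complex.I * (ω k) * expo (ω k) x)) x :=
    HasDerivAt.fun_sum (fun k _ => (hasDerivAt_expo (ω k) x).const_mul (c k))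
  convert this using 1
  refine Finset.sum_congr rfl fun k _ => by ring

lemma cont_esum (M : ℕ) (c : Fin M → ℂ) (ω : Fin M → ℝ) :
    Continuous (fun y => ∑ k, c k * expo (ω k) y) :=
  continuous_finset_sum _ fun k _ => continuous_const.mul (cont_expo (ω k))

lemma cont_esum' (M : ℕ) (c : Fin M → ℂ) (ω : Fin M → ℝ) :
    Continuous (fun y => ∑ k, Complex.I * (ω k) * c k * expo (ω k) y) :=
  continuous_finset_sum _ fun k _ => continuous_const.mul (cont_expo (ω k))

noncomputable def bernC : ℕ → ℝ → ℝ
  | 0, _ => 0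
  | 1, O => O
  | (M+2), O => 27 * max (bernC (M+1) O) (max O 1)

lemma bernC_nonneg (M : ℕ) (O : ℝ) (hO : 0 ≤ O) : 0 ≤ bernC M O := by
  match M with
  | 0 => simp [bernC]
  | 1 => simpa [bernC] using hO
  | (M+2) =>
    have : (0:ℝ) ≤ max (bernC (M+1) O) (max O 1) :=
      le_trans (by norm_num : (0:ℝ) ≤ 1) (le_trans (le_max_right O 1) (le_max_right _ _))
    have h : bernC (M+2) O = 27 * max (bernC (M+1) O) (max O 1) := rfl
    rw [h]; positivity

lemma expo_diff (L t t₀ : ℝ) (h : |L| * |t - t₀| ≤ 1) :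
    ‖expo L t - expo L t₀‖ ≤ 2 * (|L| * |t - t₀|) := by
  have key : expo L t - expo L t₀ = expo L t₀ * (Complex.exp (Complex.I * L * ((t - t₀ : ℝ))) - 1) := by
    simp only [expo, mul_sub, mul_one, ← Complex.exp_add]
    congr 1
    push_cast; ring
  rw [key, norm_mul, norm_expo, one_mul]
  have habs : ‖Complex.I * L * ((t - t₀ : ℝ))‖ = |L| * |t - t₀| := by
    simp only [norm_mul, Complex.norm_I, Complex.norm_real, Real.norm_eq_abs, one_mul]
  calc ‖Complex.exp (Complex.I * L * ((t - t₀ : ℝ))) - 1‖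
      ≤ 2 * ‖Complex.I * L * ((t - t₀ : ℝ))‖ :=
        Complex.norm_exp_sub_one_le (by rw [habs]; exact h)
    _ = 2 * (|L| * |t - t₀|) := by rw [habs]

lemma bern (M : ℕ) : ∀ (Ω : ℝ), 0 ≤ Ω → ∀ (c : Fin M → ℂ) (ω : Fin M → ℝ),
    (∀ k, |ω k| ≤ Ω) → ∀ S : ℝ, (∀ y ∈ Icc (0:ℝ) 1, ‖∑ k, c k * expo (ω k) y‖ ≤ S) →
    ∀ x ∈ Icc (0:ℝ) 1, ‖∑ k, Complex.I * (ω k) * c k * expo (ω k) x‖ ≤ bernC M Ω * S := by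
  induction M with
  | zero =>
    intro Ω hΩ c ω hω S hS x hx
    simp [bernC]
  | succ n ih =>
    intro Ω hΩ c ω hω S hS x hx
    have hS0 : 0 ≤ S := le_trans (norm_nonneg _) (hS 0 (by norm_num))
    by_cases hn : n = 0
    · subst hn
      have hb1 : bernC (0+1) Ω = Ω := rfl
      rw [hb1]
      rw [Fin.sum_univ_one]
      have hsplit : Complex.I * (ω 0) * c 0 * expo (ω 0) x
          = (Complex.I * (ω 0)) * (c 0 * expo (ω 0) x) := by ring
      rw [hsplit, norm_mul]
      have h1 : ‖Complex.I * ((ω 0 : ℝ) : ℂ)‖ = |ω 0| := by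
        simp [map_mul]
      rw [h1]
      have h2 : ‖c 0 * expo (ω 0) x‖ ≤ S := by
        have := hS x hx
        rwa [Fin.sum_univ_one] at this
      exact mul_le_mul (hω 0) h2 (norm_nonneg _) hΩ
    · obtain ⟨m, rfl⟩ : ∃ m, n = m + 1 := ⟨n - 1, by omega⟩
      -- notation
      set F : ℝ → ℂ := fun t => ∑ k : Fin (m+1+1), c k * expo (ω k) t with hF
      set c' : Fin (m+1) → ℂ :=
        fun k => Complex.I * (((ω k.castSucc : ℝ) : ℂ) - ((ω (Fin.last (m+1)) : ℝ) : ℂ)) * c k.castSucc with hc'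
      set ω' : Fin (m+1) → ℝ := fun k => ω k.castSucc with hω'
      set g : ℝ → ℂ := fun t => ∑ k : Fin (m+1), c' k * expo (ω' k) t with hg
      have hωL : |ω (Fin.last (m+1))| ≤ Ω := hω _
      -- key algebraic identity
      have keyA : ∀ t : ℝ, (∑ k : Fin (m+1+1), Complex.I * (ω k) * c k * expo (ω k) t)
          = g t + Complex.I * (ω (Fin.last (m+1))) * F t := by
        intro t
        have hstep : g t + Complex.I * (ω (Fin.last (m+1))) * F t
            = (∑ k : Fin (m+1), (c' k * expo (ω' k) t
                + Complex.I * (ω (Fin.last (m+1))) * (c k.castSucc * expo (ω k.castSucc) t)))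
              + Complex.I * (ω (Fin.last (m+1))) * (c (Fin.last (m+1)) * expo (ω (Fin.last (m+1))) t) := by
          show (∑ k : Fin (m+1), c' k * expo (ω' k) t)
              + Complex.I * (ω (Fin.last (m+1))) * (∑ k : Fin (m+1+1), c k * expo (ω k) t) = _
          rw [Fin.sum_univ_castSucc (f := fun k => c k * expo (ω k) t),
            Finset.sum_add_distrib, mul_add, Finset.mul_sum]
          ring
        rw [hstep, Fin.sum_univ_castSucc (f := fun k => Complex.I * (ω k) * c k * expo (ω k) t)]
        congr 1
        · refine Finset.sum_congr rfl fun k _ => ?_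
          simp only [hc', hω']
          ring
        · ring
      -- derivative facts
      have hFderiv : ∀ t : ℝ, HasDerivAt F (g t + Complex.I * (ω (Fin.last (m+1))) * F t) t := by
        intro t
        have := hasDerivAt_esum _ c ω t
        rwa [keyA t] at this
      set h : ℝ → ℂ := fun t => expo (-(ω (Fin.last (m+1)))) t * F t with hh
      have hhderiv : ∀ t : ℝ, HasDerivAt h (expo (-(ω (Fin.last (m+1)))) t * g t) t := by
        intro t
        have hd := (hasDerivAt_expo (-(ω (Fin.last (m+1)))) t).mul (hFderiv t)
        refine hd.congr_deriv ?_
        push_cast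
        ring
      have hnormh : ∀ t : ℝ, ‖h t‖ = ‖F t‖ := by
        intro t; rw [hh]; simp only []; rw [norm_mul, norm_expo, one_mul]
      -- max of g
      have hcontg : Continuous g := cont_esum _ c' ω'
      obtain ⟨t₀, ht₀, hmaxg⟩ := (isCompact_Icc (a := (0:ℝ)) (b := 1)).exists_isMaxOn
        (⟨0, by norm_num⟩) (hcontg.norm.continuousOn)
      have hmax : ∀ y ∈ Icc (0:ℝ) 1, ‖g y‖ ≤ ‖g t₀‖ := hmaxg
      set Sg : ℝ := ‖g t₀‖ with hSg
      have hSg0 : 0 ≤ Sg := norm_nonneg _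
      -- constants
      set B : ℝ := max (bernC (m+1) Ω) (max Ω 1) with hB
      have hB1 : (1:ℝ) ≤ B := le_trans (le_max_right Ω 1) (le_max_right _ _)
      have hB0 : (0:ℝ) < B := lt_of_lt_of_le one_pos hB1
      have hbB : bernC (m+1) Ω ≤ B := le_max_left _ _
      have hΩB : Ω ≤ B := le_trans (le_max_left Ω 1) (le_max_right _ _)
      set δ : ℝ := 1 / (8 * B) with hδ
      have hδ0 : 0 < δ := by rw [hδ]; positivity
      have hδ8 : δ ≤ 1/8 := by
        rw [hδ]
        rw [div_le_div_iff₀ (by positivity) (by norm_num)]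
        nlinarith
      -- induction hypothesis applied to g
      have hg'bound : ∀ t ∈ Icc (0:ℝ) 1,
          ‖∑ k : Fin (m+1), Complex.I * (ω' k) * c' k * expo (ω' k) t‖ ≤ bernC (m+1) Ω * Sg :=
        ih Ω hΩ c' ω' (fun k => hω k.castSucc) Sg hmax
      -- interval selection
      obtain ⟨a, b, hba, ha0, hb1', hat, htb⟩ :
          ∃ a b : ℝ, b - a = δ ∧ 0 ≤ a ∧ b ≤ 1 ∧ a ≤ t₀ ∧ t₀ ≤ b := by
        rcases le_or_gt t₀ (1/2) with hc2 | hc2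
        · exact ⟨t₀, t₀ + δ, by ring, ht₀.1, by linarith, le_refl _, by linarith⟩
        · exact ⟨t₀ - δ, t₀, by ring, by linarith [ht₀.1], ht₀.2, by linarith, le_refl _⟩
      have hab : a ≤ b := by linarith
      have hsub : Icc a b ⊆ Icc (0:ℝ) 1 := fun t ht => ⟨le_trans ha0 ht.1, le_trans ht.2 hb1'⟩
      have htab : t₀ ∈ Icc a b := ⟨hat, htb⟩
      -- E1
      have hgderiv : ∀ t : ℝ, HasDerivAt g (∑ k : Fin (m+1), Complex.I * (ω' k) * c' k * expo (ω' k) t) t :=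
        fun t => hasDerivAt_esum _ c' ω'  t
      have hg'cont : Continuous (fun t => ∑ k : Fin (m+1), Complex.I * (ω' k) * c' k * expo (ω' k) t) :=
        cont_esum' _ c' ω'
      have E1 : ∀ t ∈ Icc a b, ‖g t - g t₀‖ ≤ Sg / 8 := by
        intro t ht
        have hmem : ∀ u ∈ Set.uIoc t₀ t, u ∈ Icc (0:ℝ) 1 := by
          intro u hu
          exact hsub (Set.uIcc_subset_Icc htab ht (Set.uIoc_subset_uIcc hu))
        have hftc : ∫ u in t₀..t, (∑ k : Fin (m+1), Complex.I * (ω' k) * c' k * expo (ω' k) u)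
            = g t - g t₀ :=
          intervalIntegral.integral_eq_sub_of_hasDerivAt (fun u _ => hgderiv u)
            (hg'cont.intervalIntegrable _ _)
        rw [← hftc]
        have hb := intervalIntegral.norm_integral_le_of_norm_le_const
          (C := bernC (m+1) Ω * Sg) (fun u hu => hg'bound u (hmem u hu))
        refine le_trans hb ?_
        have h1 : |t - t₀| ≤ δ := by
          rw [abs_le]
          constructor <;> [linarith [ht.1]; linarith [ht.2]]
        have hbn : 0 ≤ bernC (m+1) Ω := bernC_nonneg _ _ hΩ
        have : bernC (m+1) Ω * Sg * |t - t₀| ≤ B * Sg * δ := by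
          apply mul_le_mul (mul_le_mul hbB (le_refl _) hSg0 (le_of_lt hB0)) h1 (abs_nonneg _)
          positivity
        refine le_trans this ?_
        rw [hδ]
        rw [mul_one_div]
        rw [div_le_div_iff₀ (by positivity) (by norm_num)]
        ring_nf
        nlinarith
      -- E3
      have E3 : ∀ t ∈ Icc a b,
          ‖expo (-(ω (Fin.last (m+1)))) t * g t - expo (-(ω (Fin.last (m+1)))) t₀ * g t₀‖
            ≤ 3/8 * Sg := by
        intro t ht
        have e1 := E1 t ht
        have h1 : |t - t₀| ≤ δ := by
          rw [abs_le]
          constructor <;> [linarith [ht.1]; linarith [ht.2]]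
        have e2 : ‖expo (-(ω (Fin.last (m+1)))) t - expo (-(ω (Fin.last (m+1)))) t₀‖ ≤ 1/4 := by
          have habs : |(-(ω (Fin.last (m+1))))| * |t - t₀| ≤ 1/8 := by
            rw [abs_neg]
            have : |ω (Fin.last (m+1))| * |t - t₀| ≤ Ω * δ :=
              mul_le_mul hωL h1 (abs_nonneg _) hΩ
            refine le_trans this ?_
            rw [hδ, mul_one_div, div_le_div_iff₀ (by positivity) (by norm_num)]
            nlinarith
          have := expo_diff (-(ω (Fin.last (m+1)))) t t₀ (le_trans habs (by norm_num))
          linarith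
        have hid : expo (-(ω (Fin.last (m+1)))) t * g t - expo (-(ω (Fin.last (m+1)))) t₀ * g t₀
            = expo (-(ω (Fin.last (m+1)))) t * (g t - g t₀)
              + (expo (-(ω (Fin.last (m+1)))) t - expo (-(ω (Fin.last (m+1)))) t₀) * g t₀ := by
          ring
        rw [hid]
        calc ‖expo (-(ω (Fin.last (m+1)))) t * (g t - g t₀)
              + (expo (-(ω (Fin.last (m+1)))) t - expo (-(ω (Fin.last (m+1)))) t₀) * g t₀‖
            ≤ ‖expo (-(ω (Fin.last (m+1)))) t * (g t - g t₀)‖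
              + ‖(expo (-(ω (Fin.last (m+1)))) t - expo (-(ω (Fin.last (m+1)))) t₀) * g t₀‖ :=
              norm_add_le _ _
          _ = ‖g t - g t₀‖ + ‖expo (-(ω (Fin.last (m+1)))) t - expo (-(ω (Fin.last (m+1)))) t₀‖ * Sg := by
              rw [norm_mul, norm_expo, one_mul, norm_mul]
          _ ≤ Sg/8 + 1/4 * Sg := add_le_add e1 (mul_le_mul_of_nonneg_right e2 hSg0)
          _ = 3/8 * Sg := by ring
      -- integral comparison
      have hhc : Continuous (fun t => expo (-(ω (Fin.last (m+1)))) t * g t) :=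
        (cont_expo _).mul hcontg
      have hftc2 : ∫ t in a..b, expo (-(ω (Fin.last (m+1)))) t * g t = h b - h a :=
        intervalIntegral.integral_eq_sub_of_hasDerivAt (fun t _ => hhderiv t)
          (hhc.intervalIntegrable _ _)
      have hIb : ‖h b - h a‖ ≤ 2 * S := by
        have h1 : ‖h b‖ ≤ S := by
          rw [hnormh b]; exact hS b ⟨by linarith, hb1'⟩
        have h2 : ‖h a‖ ≤ S := by
          rw [hnormh a]; exact hS a ⟨ha0, by linarith⟩
        calc ‖h b - h a‖ ≤ ‖h b‖ + ‖h a‖ := norm_sub_le _ _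
          _ ≤ 2 * S := by linarith
      have hint_w : ∫ _t in a..b, (expo (-(ω (Fin.last (m+1)))) t₀ * g t₀)
          = (b - a) • (expo (-(ω (Fin.last (m+1)))) t₀ * g t₀) :=
        intervalIntegral.integral_const _
      have hdiff : ‖∫ t in a..b, ((expo (-(ω (Fin.last (m+1)))) t₀ * g t₀)
            - expo (-(ω (Fin.last (m+1)))) t * g t)‖ ≤ 3/8 * Sg * |b - a| := by
        apply intervalIntegral.norm_integral_le_of_norm_le_const
        intro t ht'
        have htI : t ∈ Icc a b := by
          rw [Set.uIoc_of_le hab] at ht'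
          exact Set.Ioc_subset_Icc_self ht'
        rw [norm_sub_rev]
        exact E3 t htI
      have hsplit2 : ∫ t in a..b, ((expo (-(ω (Fin.last (m+1)))) t₀ * g t₀)
            - expo (-(ω (Fin.last (m+1)))) t * g t)
          = (b - a) • (expo (-(ω (Fin.last (m+1)))) t₀ * g t₀) - (h b - h a) := by
        rw [intervalIntegral.integral_sub intervalIntegrable_const (hhc.intervalIntegrable _ _),
          hint_w, hftc2]
      have hnormw : ‖(b - a) • (expo (-(ω (Fin.last (m+1)))) t₀ * g t₀)‖ = δ * Sg := by
        rw [norm_smul, Real.norm_eq_abs, norm_mul, norm_expo, one_mul, hba,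
          abs_of_pos hδ0]
      have habsba : |b - a| = δ := by rw [hba]; exact abs_of_pos hδ0
      have hbound : δ * Sg ≤ 3/8 * Sg * δ + 2 * S := by
        have hvw : ‖(b - a) • (expo (-(ω (Fin.last (m+1)))) t₀ * g t₀)‖
            ≤ ‖(b - a) • (expo (-(ω (Fin.last (m+1)))) t₀ * g t₀) - (h b - h a)‖ + ‖h b - h a‖ := by
          simpa using norm_add_le
            ((b - a) • (expo (-(ω (Fin.last (m+1)))) t₀ * g t₀) - (h b - h a)) (h b - h a)
        calc δ * Sg = ‖(b - a) • (expo (-(ω (Fin.last (m+1)))) t₀ * g t₀)‖ := hnormw.symm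
          _ ≤ ‖(b - a) • (expo (-(ω (Fin.last (m+1)))) t₀ * g t₀) - (h b - h a)‖ + ‖h b - h a‖ := hvw
          _ ≤ 3/8 * Sg * |b - a| + 2 * S := add_le_add (by rw [← hsplit2]; exact hdiff) hIb
          _ = 3/8 * Sg * δ + 2 * S := by rw [habsba]
      -- conclude Sg ≤ 26 B S
      have hSgB : Sg ≤ 26 * B * S := by
        have h5 : 5/8 * δ * Sg ≤ 2 * S := by linarith
        have hBne : B ≠ 0 := ne_of_gt hB0
        calc Sg = ((64 * B) / 5) * (5/8 * (1/(8*B)) * Sg) := by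
              field_simp
              ring
            _ = ((64 * B) / 5) * (5/8 * δ * Sg) := by rw [← hδ]
            _ ≤ ((64 * B) / 5) * (2 * S) := by
              apply mul_le_mul_of_nonneg_left h5 (by positivity)
            _ ≤ 26 * B * S := by nlinarith
      -- final
      rw [keyA x]
      have hlast : ‖Complex.I * ((ω (Fin.last (m+1)) : ℝ) : ℂ) * F x‖ ≤ Ω * S := by
        rw [show Complex.I * ((ω (Fin.last (m+1)) : ℝ) : ℂ) * F x
            = (Complex.I * ((ω (Fin.last (m+1)) : ℝ) : ℂ)) * F x from by ring, norm_mul]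
        have h1 : ‖Complex.I * ((ω (Fin.last (m+1)) : ℝ) : ℂ)‖ = |ω (Fin.last (m+1))| := by
          simp [map_mul]
        rw [h1]
        exact mul_le_mul hωL (hS x hx) (norm_nonneg _) hΩ
      have hgx : ‖g x‖ ≤ Sg := hmax x hx
      have hbern : bernC (m+1+1) Ω = 27 * B := by rw [hB]; rfl
      rw [hbern]
      calc ‖g x + Complex.I * (ω (Fin.last (m+1))) * F x‖
          ≤ ‖g x‖ + ‖Complex.I * ((ω (Fin.last (m+1)) : ℝ) : ℂ) * F x‖ := norm_add_le _ _
        _ ≤ Sg + Ω * S := add_le_add hgx hlast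
        _ ≤ 26 * B * S + B * S := by
            refine add_le_add hSgB (mul_le_mul hΩB (le_refl S) hS0 (le_of_lt hB0))
        _ = 27 * B * S := by ring

lemma bernC_closed (Ω : ℝ) (hΩ : 0 ≤ Ω) : ∀ m : ℕ, bernC (m+1) Ω ≤ 27^m * max Ω 1 := by
  intro m
  induction m with
  | zero => simpa [bernC] using le_max_left Ω 1
  | succ p ihp =>
    have h : bernC (p+1+1) Ω = 27 * max (bernC (p+1) Ω) (max Ω 1) := rfl
    rw [h]
    have h1 : (1:ℝ) ≤ 27^p := one_le_pow₀ (by norm_num : (1:ℝ) ≤ 27)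
    have hK : (0:ℝ) ≤ max Ω 1 := le_trans zero_le_one (le_max_right _ _)
    have : max (bernC (p+1) Ω) (max Ω 1) ≤ 27^p * max Ω 1 :=
      max_le ihp (le_mul_of_one_le_left hK h1)
    calc 27 * max (bernC (p+1) Ω) (max Ω 1) ≤ 27 * (27^p * max Ω 1) := by linarith
      _ = 27^(p+1) * max Ω 1 := by ring

lemma bernC_final (Ω : ℝ) (hΩ : 0 ≤ Ω) (M : ℕ) (hM : 1 ≤ M) :
    2 * max (bernC M Ω) 1 ≤ (2*(1+Ω))^(M*(M+1)) := by
  obtain ⟨m, rfl⟩ : ∃ m, M = m + 1 := ⟨M - 1, by omega⟩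
  have h1 : (1:ℝ) ≤ 27^m := one_le_pow₀ (by norm_num : (1:ℝ) ≤ 27)
  have hK1 : (1:ℝ) ≤ max Ω 1 := le_max_right _ _
  have hKle : max Ω 1 ≤ 1 + Ω := max_le (by linarith) (by linarith)
  have hmax : max (bernC (m+1) Ω) 1 ≤ 27^m * max Ω 1 :=
    max_le (bernC_closed Ω hΩ m) (by nlinarith)
  have h27 : (2:ℝ) * 27^m ≤ 2^((m+1)*(m+2)) := by
    have ha : (27:ℝ)^m ≤ 2^(5*m) := by
      have : (27:ℝ)^m ≤ 32^m := pow_le_pow_left₀ (by norm_num) (by norm_num) m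
      calc (27:ℝ)^m ≤ 32^m := this
        _ = 2^(5*m) := by rw [pow_mul]; norm_num
    have hexp : 5*m + 1 ≤ (m+1)*(m+2) := by zify; nlinarith [sq_nonneg ((m:ℤ)-1)]
    calc (2:ℝ) * 27^m ≤ 2 * 2^(5*m) := by linarith
      _ = 2^(5*m+1) := by ring
      _ ≤ 2^((m+1)*(m+2)) := pow_le_pow_right₀ (by norm_num) hexp
  have hpow : ((2:ℝ)*(1+Ω))^((m+1)*(m+2)) = 2^((m+1)*(m+2)) * (1+Ω)^((m+1)*(m+2)) :=
    mul_pow 2 (1+Ω) _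
  have h1Ω : (1:ℝ) + Ω ≤ (1+Ω)^((m+1)*(m+2)) := by
    have := pow_le_pow_right₀ (by linarith : (1:ℝ) ≤ 1 + Ω)
      (by nlinarith : 1 ≤ (m+1)*(m+2))
    simpa using this
  have hpow2 : (0:ℝ) < 2^((m+1)*(m+2)) := by positivity
  calc 2 * max (bernC (m+1) Ω) 1 ≤ 2 * (27^m * max Ω 1) := by linarith
    _ ≤ 2 * 27^m * (1+Ω) := by nlinarith
    _ ≤ 2^((m+1)*(m+2)) * (1+Ω) := by nlinarith
    _ ≤ 2^((m+1)*(m+2)) * (1+Ω)^((m+1)*(m+2)) := by nlinarith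
    _ = (2*(1+Ω))^((m+1)*(m+2)) := hpow.symm


theorem norm_equivalence_band_limited
    (M : ℕ) (Ω : ℝ) (hΩ : 0 ≤ Ω) (c : Fin M → ℂ) (ω : Fin M → ℝ)
    (hω : ∀ k, |ω k| ≤ Ω)
    (f : ℝ → ℂ)
    (hf : ∀ x : ℝ, f x = ∑ k, c k * Complex.exp (Complex.I * (ω k : ℂ) * (x : ℂ))) :
    Real.sqrt (∫ x in (0 : ℝ)..1, ‖f x‖ ^ 2)
      ≤ sSup ((fun y => ‖f y‖) '' Set.Icc (0 : ℝ) 1) ∧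
    sSup ((fun y => ‖f y‖) '' Set.Icc (0 : ℝ) 1)
      ≤ 2 * (2 * (1 + Ω)) ^ (M * (M + 1) / 2) *
          Real.sqrt (∫ x in (0 : ℝ)..1, ‖f x‖ ^ 2) := by
  have hfe : f = fun x => ∑ k, c k * expo (ω k) x := funext fun x => by rw [hf x]; rfl
  subst hfe
  beta_reduce
  set C : ℝ := (2*(1+Ω))^(M*(M+1)/2) with hC
  have hC1 : (1:ℝ) ≤ C := by
    rw [hC]; exact one_le_pow₀ (by linarith)
  have hcont : Continuous (fun x : ℝ => ∑ k, c k * expo (ω k) x) := cont_esum M c ω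
  obtain ⟨x₀, hx₀, hmaxF⟩ := (isCompact_Icc (a := (0:ℝ)) (b := 1)).exists_isMaxOn
    ⟨0, by norm_num⟩ (hcont.norm.continuousOn)
  have hmax : ∀ y ∈ Icc (0:ℝ) 1,
      ‖∑ k, c k * expo (ω k) y‖ ≤ ‖∑ k, c k * expo (ω k) x₀‖ := hmaxF
  set S : ℝ := ‖∑ k, c k * expo (ω k) x₀‖ with hS
  have hS0 : 0 ≤ S := norm_nonneg _
  have hsSup : sSup ((fun y => ‖∑ k, c k * expo (ω k) y‖) '' Icc (0:ℝ) 1) = S := by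
    apply le_antisymm
    · refine csSup_le ⟨_, ⟨0, by norm_num, rfl⟩⟩ ?_
      rintro r ⟨y, hy, rfl⟩
      exact hmax y hy
    · refine le_csSup ⟨S, ?_⟩ ⟨x₀, hx₀, rfl⟩
      rintro r ⟨y, hy, rfl⟩
      exact hmax y hy
  rw [hsSup]
  have hcont2 : Continuous (fun x : ℝ => ‖∑ k, c k * expo (ω k) x‖^2) := hcont.norm.pow 2
  have hint : IntervalIntegrable (fun x : ℝ => ‖∑ k, c k * expo (ω k) x‖^2)
      MeasureTheory.volume 0 1 := hcont2.intervalIntegrable 0 1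
  constructor
  · -- easy direction
    have hle : (∫ x in (0:ℝ)..1, ‖∑ k, c k * expo (ω k) x‖^2) ≤ S^2 := by
      have hmono := intervalIntegral.integral_mono_on (by norm_num : (0:ℝ) ≤ 1) hint
        intervalIntegrable_const (g := fun _ => S^2) (fun x hx => by
          have h1 := hmax x hx
          beta_reduce
          nlinarith [norm_nonneg (∑ k, c k * expo (ω k) x)])
      simpa using hmono
    calc Real.sqrt (∫ x in (0:ℝ)..1, ‖∑ k, c k * expo (ω k) x‖^2)
        ≤ Real.sqrt (S^2) := Real.sqrt_le_sqrt hle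
      _ = S := Real.sqrt_sq hS0
  · -- hard direction
    by_cases hM : M = 0
    · subst hM
      have hSz : S = 0 := by rw [hS]; simp
      rw [hSz]
      have hInt0 : 0 ≤ ∫ x in (0:ℝ)..1, ‖∑ k : Fin 0, c k * expo (ω k) x‖^2 :=
        intervalIntegral.integral_nonneg (by norm_num) (fun u _ => sq_nonneg _)
      positivity
    · have hM1 : 1 ≤ M := Nat.one_le_iff_ne_zero.2 hM
      set B : ℝ := max (bernC M Ω) 1 with hB
      have hB1 : (1:ℝ) ≤ B := le_max_right _ _
      have hB0 : (0:ℝ) < B := lt_of_lt_of_le one_pos hB1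
      have hbernb : ∀ t ∈ Icc (0:ℝ) 1,
          ‖∑ k, Complex.I * (ω k) * c k * expo (ω k) t‖ ≤ B * S := by
        intro t ht
        refine le_trans (bern M Ω hΩ c ω hω S hmax t ht) ?_
        exact mul_le_mul (le_max_left _ _) le_rfl hS0 (le_of_lt hB0)
      set δ : ℝ := 1/(2*B) with hδ
      have hδ0 : 0 < δ := by rw [hδ]; positivity
      have hδh : δ ≤ 1/2 := by
        rw [hδ, div_le_div_iff₀ (by positivity) (by norm_num)]
        nlinarith
      obtain ⟨a, b, hba, ha0, hb1, hat, htb⟩ :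
          ∃ a b : ℝ, b - a = δ ∧ 0 ≤ a ∧ b ≤ 1 ∧ a ≤ x₀ ∧ x₀ ≤ b := by
        rcases le_or_gt x₀ (1/2) with hc2 | hc2
        · exact ⟨x₀, x₀ + δ, by ring, hx₀.1, by linarith, le_refl _, by linarith⟩
        · exact ⟨x₀ - δ, x₀, by ring, by linarith [hx₀.1], hx₀.2, by linarith, le_refl _⟩
      have hab : a ≤ b := by linarith
      have hsub : Icc a b ⊆ Icc (0:ℝ) 1 := fun t ht => ⟨le_trans ha0 ht.1, le_trans ht.2 hb1⟩
      have hFd : ∀ t : ℝ, HasDerivAt (fun y => ∑ k, c k * expo (ω k) y)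
          (∑ k, Complex.I * (ω k) * c k * expo (ω k) t) t := fun t => hasDerivAt_esum M c ω t
      have hFc' : Continuous (fun t => ∑ k, Complex.I * (ω k) * c k * expo (ω k) t) :=
        cont_esum' M c ω
      have Elow : ∀ t ∈ Icc a b, S/2 ≤ ‖∑ k, c k * expo (ω k) t‖ := by
        intro t ht
        have hmem : ∀ u ∈ Set.uIoc x₀ t, u ∈ Icc (0:ℝ) 1 := fun u hu =>
          hsub (Set.uIcc_subset_Icc ⟨hat, htb⟩ ht (Set.uIoc_subset_uIcc hu))
        have hftc : ∫ u in x₀..t, (∑ k, Complex.I * (ω k) * c k * expo (ω k) u)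
            = (∑ k, c k * expo (ω k) t) - (∑ k, c k * expo (ω k) x₀) :=
          intervalIntegral.integral_eq_sub_of_hasDerivAt (fun u _ => hFd u)
            (hFc'.intervalIntegrable _ _)
        have hdiffb : ‖(∑ k, c k * expo (ω k) t) - (∑ k, c k * expo (ω k) x₀)‖ ≤ S/2 := by
          rw [← hftc]
          have hb2 := intervalIntegral.norm_integral_le_of_norm_le_const
            (C := B * S) (fun u hu => hbernb u (hmem u hu))
          refine le_trans hb2 ?_
          have h1 : |t - x₀| ≤ δ := by
            rw [abs_le]
            constructor <;> [linarith [ht.1]; linarith [ht.2]]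
          have h2 : B * S * |t - x₀| ≤ B * S * δ := by
            apply mul_le_mul_of_nonneg_left h1
            positivity
          refine le_trans h2 ?_
          rw [hδ]
          rw [mul_one_div]
          rw [div_le_div_iff₀ (by positivity) (by norm_num)]
          ring_nf
          nlinarith
        have h3 : S - ‖∑ k, c k * expo (ω k) t‖
            ≤ ‖(∑ k, c k * expo (ω k) t) - (∑ k, c k * expo (ω k) x₀)‖ := by
          rw [norm_sub_rev, hS]
          exact norm_sub_norm_le _ _
        linarith
      -- lower bound for the integral
      have hmid : δ * (S/2)^2 ≤ ∫ x in a..b, ‖∑ k, c k * expo (ω k) x‖^2 := by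
        have hmono := intervalIntegral.integral_mono_on (μ := MeasureTheory.volume) hab
          (intervalIntegrable_const (c := (S/2)^2)) (hcont2.intervalIntegrable _ _)
          (fun x hx => by
            have h1 := Elow x hx
            have h2 : (0:ℝ) ≤ S/2 := by linarith
            nlinarith)
        simpa [hba, smul_eq_mul] using hmono
      have hI0a : 0 ≤ ∫ x in (0:ℝ)..a, ‖∑ k, c k * expo (ω k) x‖^2 :=
        intervalIntegral.integral_nonneg ha0 (fun u _ => sq_nonneg _)
      have hIb1 : 0 ≤ ∫ x in b..(1:ℝ), ‖∑ k, c k * expo (ω k) x‖^2 :=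
        intervalIntegral.integral_nonneg hb1 (fun u _ => sq_nonneg _)
      have hadd1 : (∫ x in a..b, ‖∑ k, c k * expo (ω k) x‖^2)
            + (∫ x in b..(1:ℝ), ‖∑ k, c k * expo (ω k) x‖^2)
          = ∫ x in a..(1:ℝ), ‖∑ k, c k * expo (ω k) x‖^2 :=
        intervalIntegral.integral_add_adjacent_intervals
          (hcont2.intervalIntegrable _ _) (hcont2.intervalIntegrable _ _)
      have hadd2 : (∫ x in (0:ℝ)..a, ‖∑ k, c k * expo (ω k) x‖^2)
            + (∫ x in a..(1:ℝ), ‖∑ k, c k * expo (ω k) x‖^2)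
          = ∫ x in (0:ℝ)..1, ‖∑ k, c k * expo (ω k) x‖^2 :=
        intervalIntegral.integral_add_adjacent_intervals
          (hcont2.intervalIntegrable _ _) (hcont2.intervalIntegrable _ _)
      have hIlow : δ * (S/2)^2 ≤ ∫ x in (0:ℝ)..1, ‖∑ k, c k * expo (ω k) x‖^2 := by
        linarith
      have hIpos : 0 ≤ ∫ x in (0:ℝ)..1, ‖∑ k, c k * expo (ω k) x‖^2 := by
        have : 0 ≤ δ * (S/2)^2 := by positivity
        linarith
      -- S^2 ≤ 8 B ∫
      have hS2 : S^2 ≤ 8 * B * ∫ x in (0:ℝ)..1, ‖∑ k, c k * expo (ω k) x‖^2 := by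
        have heq : S^2 = 8 * B * (δ * (S/2)^2) := by
          rw [hδ]; field_simp; ring
        rw [heq]
        apply mul_le_mul_of_nonneg_left hIlow (by positivity)
      have hCsq : C^2 = (2*(1+Ω))^(M*(M+1)) := by
        rw [hC, ← pow_mul]
        congr 1
        exact Nat.div_mul_cancel (even_iff_two_dvd.mp (Nat.even_mul_succ_self M))
      have h8B : 8 * B ≤ (2*C)^2 := by
        have h2B := bernC_final Ω hΩ M hM1
        rw [← hCsq] at h2B
        rw [← hB] at h2B
        nlinarith
      calc S = Real.sqrt (S^2) := (Real.sqrt_sq hS0).symm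
        _ ≤ Real.sqrt (8 * B * ∫ x in (0:ℝ)..1, ‖∑ k, c k * expo (ω k) x‖^2) :=
            Real.sqrt_le_sqrt hS2
        _ = Real.sqrt (8 * B) * Real.sqrt (∫ x in (0:ℝ)..1, ‖∑ k, c k * expo (ω k) x‖^2) :=
            Real.sqrt_mul (by positivity) _
        _ ≤ (2*C) * Real.sqrt (∫ x in (0:ℝ)..1, ‖∑ k, c k * expo (ω k) x‖^2) := by
            apply mul_le_mul_of_nonneg_right ?_ (Real.sqrt_nonneg _)
            calc Real.sqrt (8*B) ≤ Real.sqrt ((2*C)^2) := Real.sqrt_le_sqrt h8B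
              _ = 2*C := Real.sqrt_sq (by positivity)
        _ = 2 * C * Real.sqrt (∫ x in (0:ℝ)..1, ‖∑ k, c k * expo (ω k) x‖^2) := by ring
end

section
/- Van der Waerden transfer of polynomial constraints: let R̃ be a polynomial in m̃+1 variables and p a positive integer, and set m = N_vdW(m̃+1, p) − 1 where N_vdW is the van der Waerden number. Suppose g : [0,1] → ℝ is such that for every x ∈ [0,1] the value g(x) is given by one of p 'branch' functions g̃₁,…,g̃_p, each of which satisfies R̃(g̃ⱼ(ã), g̃ⱼ(ã+h̃), …, g̃ⱼ(ã+m̃h̃)) = 0 for every arithmetic progression ã, ã+h̃, …, ã+m̃h̃ in [0,1]. Then the polynomial R(z₀,…,z_m) = ∏_{s} R̃(z_{s₀},…,z_{s_{m̃}}), product over all length-(m̃+1) arithmetic progressions s = (s₀,…,s_{m̃}) in {0,…,m}, is a nonzero polynomial and satisfies R(g(a), g(a+h), …, g(a+mh)) = 0 for all a, b ∈ [0,1] with h = (b−a)/m. -/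
open MvPolynomial

lemma vdw_pt_mem (a b : ℝ) (ha : a ∈ Set.Icc (0:ℝ) 1) (hb : b ∈ Set.Icc (0:ℝ) 1)
    (m k : ℕ) (hk : k ≤ m) : a + k * ((b - a) / m) ∈ Set.Icc (0:ℝ) 1 := by
  obtain ⟨ha0, ha1⟩ := ha
  obtain ⟨hb0, hb1⟩ := hb
  rcases Nat.eq_zero_or_pos m with hm | hm
  · subst hm
    interval_cases k
    simp [ha0, ha1]
  · have hmR : (0:ℝ) < m := by exact_mod_cast hm
    have hkR : (k:ℝ) ≤ m := by exact_mod_cast hk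
    set t : ℝ := (k:ℝ) / m with htdef
    have ht0 : 0 ≤ t := by positivity
    have ht1 : t ≤ 1 := (div_le_one hmR).mpr hkR
    have heq : (k:ℝ) * ((b - a) / m) = t * (b - a) := by rw [htdef]; ring
    rw [heq]
    constructor <;> nlinarith [mul_nonneg ht0 hb0, mul_le_one₀ ht1 hb0 hb1]

/-- Van der Waerden transfer of polynomial constraints: `m` is assumed to have the
van der Waerden property that every `p`-coloring of `{0,…,m}` contains a monochromatic
arithmetic progression of length `m̃ + 1` (this holds for `m = N_vdW(m̃+1, p) − 1`). -/
theorem vdW_transfer_polynomial_constraint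
    (mt p m : ℕ)
    (hvdW : ∀ col : ℕ → Fin p, ∃ a d : ℕ, 0 < d ∧ a + mt * d ≤ m ∧
      ∀ i ≤ mt, ∀ j ≤ mt, col (a + i * d) = col (a + j * d))
    (Rt : MvPolynomial (Fin (mt + 1)) ℝ) (hRt : Rt ≠ 0)
    (g : ℝ → ℝ) (gt : Fin p → ℝ → ℝ)
    (hbranch : ∀ x ∈ Set.Icc (0 : ℝ) 1, ∃ j : Fin p, g x = gt j x)
    (hconstraint : ∀ j : Fin p, ∀ at_ ht_ : ℝ,
      (∀ i : ℕ, i ≤ mt → at_ + i * ht_ ∈ Set.Icc (0 : ℝ) 1) →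
      MvPolynomial.eval (fun i : Fin (mt + 1) => gt j (at_ + (i : ℕ) * ht_)) Rt = 0) :
    ∃ R : MvPolynomial (Fin (m + 1)) ℝ, R ≠ 0 ∧
      ∀ a ∈ Set.Icc (0 : ℝ) 1, ∀ b ∈ Set.Icc (0 : ℝ) 1,
        MvPolynomial.eval (fun k : Fin (m + 1) => g (a + (k : ℕ) * ((b - a) / m))) R = 0 := by
  -- the renaming map for a progression (a, d)
  set f : ℕ × ℕ → Fin (mt + 1) → Fin (m + 1) :=
    fun q i => ⟨min (q.1 + i * q.2) m, Nat.lt_succ_of_le (min_le_right _ _)⟩ with hf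
  -- index set of progressions
  set S : Finset (ℕ × ℕ) :=
    (Finset.range (m + 1) ×ˢ Finset.range (m + 2)).filter
      (fun q => 0 < q.2 ∧ q.1 + mt * q.2 ≤ m) with hS
  have hbound : ∀ q ∈ S, ∀ i : Fin (mt + 1), q.1 + (i : ℕ) * q.2 ≤ m := by
    intro q hq i
    simp only [hS, Finset.mem_filter] at hq
    obtain ⟨-, -, hle⟩ := hq
    calc q.1 + (i : ℕ) * q.2 ≤ q.1 + mt * q.2 := by
          have : (i : ℕ) ≤ mt := Nat.lt_succ_iff.mp i.isLt
          exact Nat.add_le_add_left (Nat.mul_le_mul_right _ this) _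
      _ ≤ m := hle
  refine ⟨∏ q ∈ S, rename (f q) Rt, ?_, ?_⟩
  · rw [Finset.prod_ne_zero_iff]
    intro q hq
    have hd : 0 < q.2 := by
      simp only [hS, Finset.mem_filter] at hq; exact hq.2.1
    have hinj : Function.Injective (f q) := by
      intro i j hij
      have hi := hbound q hq i
      have hj := hbound q hq j
      have : q.1 + (i : ℕ) * q.2 = q.1 + (j : ℕ) * q.2 := by
        have := congrArg Fin.val hij
        simpa [hf, Nat.min_eq_left hi, Nat.min_eq_left hj] using this
      have : (i : ℕ) = (j : ℕ) := by
        have := Nat.add_left_cancel this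
        exact Nat.eq_of_mul_eq_mul_right hd this
      exact Fin.ext this
    exact fun h => hRt ((map_eq_zero_iff _ (rename_injective _ hinj)).mp h)
  · intro a ha b hb
    set h : ℝ := (b - a) / m with hh
    have hmem : ∀ k : ℕ, k ≤ m → a + k * h ∈ Set.Icc (0:ℝ) 1 :=
      fun k hk => vdw_pt_mem a b ha hb m k hk
    have hp : 0 < p := by
      obtain ⟨j, -⟩ := hbranch 0 (by simp)
      exact j.pos
    -- the coloring
    set col : ℕ → Fin p := fun k =>
      if hx : a + k * h ∈ Set.Icc (0:ℝ) 1 then (hbranch _ hx).choose else ⟨0, hp⟩ with hcol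
    have hcolspec : ∀ k : ℕ, k ≤ m → g (a + k * h) = gt (col k) (a + k * h) := by
      intro k hk
      have hx := hmem k hk
      simp only [hcol, dif_pos hx]
      exact (hbranch _ hx).choose_spec
    obtain ⟨a', d, hd, hle, hmono⟩ := hvdW col
    -- adjust d to fit in the range when mt = 0
    set d' : ℕ := min d (m + 1) with hd'
    have hd'pos : 0 < d' := lt_min hd (Nat.succ_pos m)
    have hle' : a' + mt * d' ≤ m :=
      le_trans (Nat.add_le_add_left (Nat.mul_le_mul_left _ (min_le_left _ _)) _) hle
    have hmono' : ∀ i ≤ mt, col (a' + i * d') = col a' := by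
      intro i hi
      rcases Nat.eq_zero_or_pos mt with hmt | hmt
      · subst hmt
        interval_cases i
        simp
      · have : d ≤ m := by
          calc d ≤ mt * d := Nat.le_mul_of_pos_left d hmt
            _ ≤ a' + mt * d := Nat.le_add_left _ _
            _ ≤ m := hle
        have hdd : d' = d := by omega
        rw [hdd]
        simpa using hmono i hi 0 (Nat.zero_le _)
    set q0 : ℕ × ℕ := (a', d') with hq0
    have hq0S : q0 ∈ S := by
      simp only [hS, Finset.mem_filter, Finset.mem_product, Finset.mem_range]
      refine ⟨⟨?_, ?_⟩, hd'pos, hle'⟩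
      · simp only [hq0]; omega
      · simp only [hq0]; exact Nat.lt_succ_of_le (min_le_right _ _)
    rw [map_prod]
    apply Finset.prod_eq_zero hq0S
    rw [eval_rename]
    set j0 : Fin p := col a' with hj0
    have key : (fun i : Fin (mt+1) =>
        g (a + (↑(f q0 i) : ℕ) * h)) = fun i : Fin (mt+1) =>
        gt j0 ((a + a' * h) + (i : ℕ) * ((d' : ℝ) * h)) := by
      funext i
      have hib : a' + (i : ℕ) * d' ≤ m := hbound q0 hq0S i
      have hfv : ((f q0 i : Fin (m+1)) : ℕ) = a' + (i : ℕ) * d' := by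
        simp [hf, hq0]
        omega
      rw [hfv]
      have hcast : (↑(a' + (i : ℕ) * d') : ℝ) * h = (a' : ℝ) * h + (i : ℕ) * ((d' : ℝ) * h) := by
        push_cast
        ring
      rw [hcolspec _ hib, hmono' i (Nat.lt_succ_iff.mp i.isLt), hcast]
      congr 1
      ring
    have := hconstraint j0 (a + a' * h) ((d' : ℝ) * h) (by
      intro i hi
      have hib : a' + i * d' ≤ m := by
        calc a' + i * d' ≤ a' + mt * d' := Nat.add_le_add_left (Nat.mul_le_mul_right _ hi) _
          _ ≤ m := hle'
      have := hmem _ hib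
      have hcast : (a + a' * h) + (i : ℝ) * ((d' : ℝ) * h) = a + (↑(a' + i * d') : ℝ) * h := by
        push_cast; ring
      rw [hcast]
      exact this)
    calc (eval ((fun k : Fin (m+1) => g (a + (k : ℕ) * ((b-a)/m))) ∘ (f q0))) Rt
        = eval (fun i : Fin (mt+1) => gt j0 ((a + a' * h) + (i : ℕ) * ((d' : ℝ) * h))) Rt := by
          rw [← key]; rfl
      _ = 0 := this
end

section
/- Let σ : [−1,1] → ℝ be real analytic with σ(0) ≠ 0, and suppose σ is not a polynomial. Then for any finite set of distinct points 0 ≤ x₁ < x₂ < … < x_N ≤ 1 there exists b ∈ [−1,1] such that the values σ(b·x₁), …, σ(b·x_N) are linearly independent over ℚ. -/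
open Real

open Filter Topology FormalMultilinearSeries in
theorem analytic_nonpolynomial_rationally_independent_values
    (σ : ℝ → ℝ)
    (hσ : AnalyticOnNhd ℝ σ (Set.Icc (-1 : ℝ) 1))
    (hσ0 : σ 0 ≠ 0)
    (hnotpoly : ¬ ∃ P : Polynomial ℝ, ∀ x ∈ Set.Icc (-1 : ℝ) 1, σ x = P.eval x)
    (N : ℕ) (x : Fin N → ℝ)
    (hx : ∀ k, x k ∈ Set.Icc (0 : ℝ) 1)
    (hmono : StrictMono x) :
    ∃ b ∈ Set.Icc (-1 : ℝ) 1, LinearIndependent ℚ (fun k => σ (b * x k)) := by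
  classical
  have h0m : (0:ℝ) ∈ Set.Icc (-1:ℝ) 1 := by norm_num
  obtain ⟨p, hp⟩ := hσ 0 h0m
  set c : ℕ → ℝ := p.coeff with hc
  have hsum : ∀ᶠ z in 𝓝 (0:ℝ), HasSum (fun n => z ^ n • c n) (σ (0 + z)) :=
    hasFPowerSeriesAt_iff.mp hp
  set S : Set ℕ := {n | c n ≠ 0} with hSdef
  -- the zeroth coefficient is nonzero
  have hS0 : 0 ∈ S := by
    have h00 : c 0 = σ 0 := hp.coeff_zero 1
    simpa [hSdef, h00] using hσ0
  -- infinitely many nonzero coefficients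
  have hSinf : S.Infinite := by
    by_contra hfin
    rw [Set.not_infinite] at hfin
    obtain ⟨M, hM⟩ : ∃ M : ℕ, ∀ n, M ≤ n → c n = 0 := by
      obtain ⟨M, hM⟩ := hfin.bddAbove
      refine ⟨M + 1, fun n hn => ?_⟩
      by_contra hcn
      have := hM (Set.mem_setOf.mpr hcn)
      omega
    set P : Polynomial ℝ := ∑ n ∈ Finset.range M, Polynomial.C (c n) * Polynomial.X ^ n with hP
    have hPe : ∀ y : ℝ, P.eval y = ∑ n ∈ Finset.range M, y ^ n * c n := by
      intro y
      rw [hP, Polynomial.eval_finset_sum]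
      refine Finset.sum_congr rfl fun n _ => ?_
      simp only [Polynomial.eval_mul, Polynomial.eval_C, Polynomial.eval_pow,
        Polynomial.eval_X]
      ring
    have hev : σ =ᶠ[𝓝 (0:ℝ)] fun y => P.eval y := by
      filter_upwards [hsum] with z hz
      have hz2 : HasSum (fun n => z ^ n • c n) (∑ n ∈ Finset.range M, z ^ n • c n) := by
        apply hasSum_sum_of_ne_finset_zero
        intro n hn
        simp only [Finset.mem_range, not_lt] at hn
        simp [hM n hn]
      have := hz2.unique (by simpa using hz)
      rw [hPe]
      simpa [smul_eq_mul] using this.symm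
    -- the difference is analytic and vanishes near 0, hence on all of Icc
    have hanal : AnalyticOnNhd ℝ (fun z => σ z - P.eval z) (Set.Icc (-1:ℝ) 1) :=
      hσ.sub ((AnalyticOnNhd.eval_polynomial (𝕜 := ℝ) P).mono (Set.subset_univ _))
    have hfreq : ∃ᶠ z in 𝓝[≠] (0:ℝ), σ z - P.eval z = 0 := by
      apply Filter.Eventually.frequently
      apply Filter.eventually_iff_exists_mem.mpr
      obtain ⟨U, hU, hUeq⟩ := Filter.eventually_iff_exists_mem.mp hev
      exact ⟨U, nhdsWithin_le_nhds hU, fun y hy => by rw [hUeq y hy, sub_self]⟩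
    have heq := hanal.eqOn_zero_of_preconnected_of_frequently_eq_zero
      isPreconnected_Icc h0m hfreq
    exact hnotpoly ⟨P, fun z hz => sub_eq_zero.mp (heq hz)⟩
  -- key step: a real linear combination vanishing identically on Icc must be trivial
  have key : ∀ lam : Fin N → ℝ,
      Set.EqOn (fun b => ∑ k, lam k * σ (b * x k)) 0 (Set.Icc (-1:ℝ) 1) → lam = 0 := by
    intro lam hlam
    -- moments vanish
    have hmom : ∀ n ∈ S, ∑ k, lam k * x k ^ n = 0 := by
      set a : ℕ → ℝ := fun n => c n * ∑ k, lam k * x k ^ n with ha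
      obtain ⟨ε, hε, hball⟩ := Metric.eventually_nhds_iff.mp hsum
      have hzero : ∀ᶠ z in 𝓝 (0:ℝ),
          HasSum (fun n => z ^ n • a n) ((0 : ℝ → ℝ) (0 + z)) := by
        have hb : Metric.ball (0:ℝ) (min ε 1) ∈ 𝓝 (0:ℝ) :=
          Metric.ball_mem_nhds _ (lt_min hε one_pos)
        filter_upwards [hb] with z hz
        rw [Metric.mem_ball, dist_zero_right, Real.norm_eq_abs] at hz
        have hz1 : |z| < 1 := lt_of_lt_of_le hz (min_le_right _ _)
        have hzε : |z| < ε := lt_of_lt_of_le hz (min_le_left _ _)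
        have hsums : ∀ k : Fin N,
            HasSum (fun n => lam k * ((z * x k) ^ n * c n)) (lam k * σ (z * x k)) := by
          intro k
          have hxk := hx k
          have hd : dist (z * x k) 0 < ε := by
            rw [dist_zero_right, Real.norm_eq_abs, abs_mul]
            calc |z| * |x k| ≤ |z| * 1 := by
                  have : |x k| ≤ 1 := abs_le.mpr ⟨by linarith [hxk.1], hxk.2⟩
                  exact mul_le_mul_of_nonneg_left this (abs_nonneg z)
            _ = |z| := mul_one _
            _ < ε := hzε
          have := hball hd
          rw [zero_add] at this
          simpa [smul_eq_mul] using this.mul_left (lam k)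
        have htot : HasSum (fun n => ∑ k, lam k * ((z * x k) ^ n * c n))
            (∑ k, lam k * σ (z * x k)) := hasSum_sum (fun k _ => hsums k)
        have hzIcc : z ∈ Set.Icc (-1:ℝ) 1 := abs_le.mp hz1.le
        have h0 : ∑ k, lam k * σ (z * x k) = 0 := hlam hzIcc
        rw [h0] at htot
        have hfun : (fun n => ∑ k, lam k * ((z * x k) ^ n * c n))
            = fun n => z ^ n • a n := by
          funext n
          simp only [smul_eq_mul, ha, mul_pow, Finset.mul_sum]
          exact Finset.sum_congr rfl fun k _ => by ring
        rw [hfun] at htot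
        simpa using htot
      have hps : HasFPowerSeriesAt (0 : ℝ → ℝ) (ofScalars ℝ a) 0 := by
        rw [hasFPowerSeriesAt_iff]
        have hcoeff : ∀ n, (ofScalars ℝ a).coeff n = a n := fun n => by
          simpa using FormalMultilinearSeries.ofScalars_apply_eq (c := a) (1:ℝ) n
        filter_upwards [hzero] with z hz
        simpa [hcoeff] using hz
      have hq0 : ofScalars ℝ a = 0 := hps.eq_zero
      have ha0 : a = 0 := by
        rwa [FormalMultilinearSeries.ofScalars_series_eq_zero] at hq0
      intro n hn
      have := congrFun ha0 n
      simp only [ha, Pi.zero_apply] at this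
      rcases mul_eq_zero.mp this with h | h
      · exact absurd h hn
      · exact h
    -- now deduce that lam = 0
    by_contra hne
    have hsupp : (Finset.univ.filter (fun k => lam k ≠ 0)).Nonempty := by
      obtain ⟨k, hk⟩ := Function.ne_iff.mp hne
      exact ⟨k, Finset.mem_filter.mpr ⟨Finset.mem_univ _, by simpa using hk⟩⟩
    set T := Finset.univ.filter (fun k => lam k ≠ 0) with hT
    set j := T.max' hsupp with hj
    have hjmem : j ∈ T := T.max'_mem hsupp
    have hlamj : lam j ≠ 0 := by simpa [hT] using hjmem
    have htop : ∀ i, j < i → lam i = 0 := by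
      intro i hi
      by_contra h
      exact absurd (T.le_max' i (by simp [hT, h])) (not_le.mpr hi)
    rcases (hx j).1.eq_or_lt with hxj | hxj
    · -- x j = 0 : then j is also the least index, use the moment n = 0
      have hall : ∀ k, k ≠ j → lam k = 0 := by
        intro k hk
        rcases lt_or_gt_of_ne hk with h | h
        · exfalso
          have h1 : x k < x j := hmono h
          have h2 := (hx k).1
          rw [← hxj] at h1
          linarith
        · exact htop k h
      have h0 := hmom 0 hS0
      simp only [pow_zero, mul_one] at h0
      rw [Finset.sum_eq_single j (fun k _ hk => hall k hk) (by simp)] at h0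
      exact hlamj h0
    · -- x j > 0 : divide by (x j)^n and take the limit over n ∈ S
      set g : ℕ → ℝ := fun n => ∑ k ∈ Finset.univ.erase j, lam k * (x k / x j) ^ n with hg
      have hgeq : ∀ n ∈ S, g n = - lam j := by
        intro n hn
        have h1 : ∑ k, lam k * (x k / x j) ^ n = 0 := by
          have h2 : ∑ k, lam k * (x k / x j) ^ n
              = (∑ k, lam k * x k ^ n) / x j ^ n := by
            rw [Finset.sum_div]
            exact Finset.sum_congr rfl fun k _ => by
              rw [div_pow, mul_div_assoc]
          rw [h2, hmom n hn, zero_div]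
        have h3 : lam j * (x j / x j) ^ n + g n = ∑ k, lam k * (x k / x j) ^ n :=
          Finset.add_sum_erase Finset.univ (fun k => lam k * (x k / x j) ^ n)
            (Finset.mem_univ j)
        rw [div_self hxj.ne', one_pow, mul_one] at h3
        linarith [h1 ▸ h3]
      have hgt : Tendsto g atTop (𝓝 0) := by
        rw [show (0:ℝ) = ∑ _k ∈ Finset.univ.erase j, (0:ℝ) by simp]
        apply tendsto_finset_sum
        intro k hk
        have hkj : k ≠ j := Finset.ne_of_mem_erase hk
        rcases lt_or_gt_of_ne hkj with h | h
        · have hr0 : (0:ℝ) ≤ x k / x j := div_nonneg (hx k).1 hxj.le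
          have hr1 : x k / x j < 1 := (div_lt_one hxj).mpr (hmono h)
          have := (tendsto_pow_atTop_nhds_zero_of_lt_one hr0 hr1).const_mul (lam k)
          simpa using this
        · have hl0 : lam k = 0 := htop k h
          simp [hl0]
      have hfreq : ∃ᶠ n in atTop, g n = - lam j := by
        rw [Filter.frequently_atTop]
        intro n0
        obtain ⟨n, hnS, hn0⟩ : ∃ n ∈ S, n0 ≤ n := by
          by_contra hcon
          push_neg at hcon
          exact hSinf ((Set.finite_Iio n0).subset fun m hm => hcon m hm)
        exact ⟨n, hn0, hgeq n hnS⟩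
      have := tendsto_nhds_unique_of_frequently_eq hgt tendsto_const_nhds hfreq
      exact hlamj (by linarith)
  -- the bad set for each nonzero rational tuple is finite
  have hZfin : ∀ lam : Fin N → ℝ, lam ≠ 0 →
      {b | b ∈ Set.Icc (-1:ℝ) 1 ∧ ∑ k, lam k * σ (b * x k) = 0}.Finite := by
    intro lam hne
    by_contra hinf
    rw [← Set.not_infinite, not_not] at hinf
    have hanal : AnalyticOnNhd ℝ (fun b => ∑ k, lam k * σ (b * x k))
        (Set.Icc (-1:ℝ) 1) := by
      intro b hb
      apply Finset.analyticAt_fun_sum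
      intro k _
      have hmem : b * x k ∈ Set.Icc (-1:ℝ) 1 := by
        have h1 : |b| ≤ 1 := abs_le.mpr hb
        have h2 : |x k| ≤ 1 := abs_le.mpr ⟨by linarith [(hx k).1], (hx k).2⟩
        have : |b * x k| ≤ 1 := by
          rw [abs_mul]
          calc |b| * |x k| ≤ 1 * 1 := mul_le_mul h1 h2 (abs_nonneg _) zero_le_one
          _ = 1 := one_mul 1
        exact abs_le.mp this
      have hin : AnalyticAt ℝ (fun z : ℝ => z * x k) b := analyticAt_id.mul analyticAt_const
      exact analyticAt_const.mul
        (AnalyticAt.comp (f := fun z : ℝ => z * x k) (hσ _ hmem) hin)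
    obtain ⟨z₀, hz₀, hacc⟩ := hinf.exists_accPt_of_subset_isCompact isCompact_Icc
      (fun b hb => hb.1)
    have hfreq : ∃ᶠ z in 𝓝[≠] z₀, ∑ k, lam k * σ (z * x k) = 0 := by
      rw [frequently_nhdsWithin_iff]
      have := accPt_iff_frequently.mp hacc
      exact this.mono fun y hy => ⟨hy.2.2, hy.1⟩
    have heq := hanal.eqOn_zero_of_preconnected_of_frequently_eq_zero
      isPreconnected_Icc hz₀ hfreq
    exact hne (key lam heq)
  -- the union of all bad sets is countable, hence misses a point of Icc
  set Bad : Set ℝ := ⋃ lam ∈ {v : Fin N → ℚ | v ≠ 0},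
    {b | b ∈ Set.Icc (-1:ℝ) 1 ∧ ∑ k, ((lam k : ℝ)) * σ (b * x k) = 0} with hBad
  have hBadc : Bad.Countable := by
    apply Set.Countable.biUnion (Set.to_countable _)
    intro lam hlam
    apply Set.Finite.countable
    apply hZfin
    intro hzero
    apply hlam
    funext k
    have h1 : (lam k : ℝ) = 0 := by simpa using congrFun hzero k
    have h2 : lam k = 0 := by exact_mod_cast h1
    simpa using h2
  have hvol : MeasureTheory.volume Bad = 0 := hBadc.measure_zero _
  have hnsub : ¬ Set.Icc (-1:ℝ) 1 ⊆ Bad := by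
    intro hsub
    have := MeasureTheory.measure_mono (μ := MeasureTheory.volume) hsub
    rw [hvol, Real.volume_Icc] at this
    simp at this
    linarith
  obtain ⟨b, hbIcc, hbBad⟩ := Set.not_subset.mp hnsub
  refine ⟨b, hbIcc, ?_⟩
  rw [Fintype.linearIndependent_iff]
  intro g hg
  by_contra hgn
  push_neg at hgn
  obtain ⟨i, hi⟩ := hgn
  apply hbBad
  rw [hBad]
  apply Set.mem_biUnion (show g ∈ {v : Fin N → ℚ | v ≠ 0} from fun h => hi (by rw [h]; rfl))
  refine ⟨hbIcc, ?_⟩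
  simpa [Rat.smul_def] using hg
end
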